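/- arXiv:2602.16398 — 5 statements merged into one kernel-verified Lean document; each statement's English description precedes it below -/
import Mathlib

section
/- Let K be a complete nonarchimedean valued field, O its valuation ring, and f : O^n → K^n a polynomial map with coefficients in O whose Jacobian determinant has absolute value 1 at every point of O^n. Then f maps O^n onto an open set containing, for each a ∈ O^n, the ball {y : ‖y − f(a)‖ < 1}; in particular f(O^n) is open in K^n. -/
open MvPolynomial

section auxiliary
variable {K : Type*} [NormedField K] {n : ℕ}





lemma na_sum_norm_le (hna : ∀ x y : K, ‖x + y‖ ≤ max ‖x‖ ‖y‖)
    {ι : Type*} (s : Finset ι) (g : ι → K) {C : ℝ} (hC : 0 ≤ C)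
    (h : ∀ i ∈ s, ‖g i‖ ≤ C) : ‖∑ i ∈ s, g i‖ ≤ C := by
  classical
  induction s using Finset.induction_on with
  | empty => simpa using hC
  | insert _ _ hx ih =>
    rename_i a s
    rw [Finset.sum_insert hx]
    exact le_trans (hna _ _) (max_le (h a (Finset.mem_insert_self a s))
      (ih fun i hi => h i (Finset.mem_insert_of_mem hi)))

lemma na_natCast_le (hna : ∀ x y : K, ‖x + y‖ ≤ max ‖x‖ ‖y‖) (k : ℕ) :
    ‖(k : K)‖ ≤ 1 := by
  induction k with
  | zero => simp
  | succ k ih =>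
    push_cast
    exact le_trans (hna _ _) (max_le ih (by simp))

lemma na_intCast_le (hna : ∀ x y : K, ‖x + y‖ ≤ max ‖x‖ ‖y‖) (k : ℤ) :
    ‖(k : K)‖ ≤ 1 := by
  cases k with
  | ofNat k => simpa using na_natCast_le hna k
  | negSucc k =>
    rw [Int.cast_negSucc, norm_neg]
    exact_mod_cast na_natCast_le hna (k + 1)






/-- The key Taylor-type property of a polynomial. -/
def NGood (n : ℕ) (p : MvPolynomial (Fin n) K) : Prop :=
  ∀ u v : Fin n → K, (∀ i, ‖u i‖ ≤ 1) → (∀ i, ‖v i‖ ≤ 1) →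
    ‖eval v p‖ ≤ 1 ∧ ‖eval u p - eval v p‖ ≤ ‖u - v‖ ∧
    ‖eval u p - eval v p - ∑ j, eval v (pderiv j p) * (u j - v j)‖ ≤ ‖u - v‖ ^ 2

lemma ngood_C {a : K} (ha : ‖a‖ ≤ 1) : NGood n (C a) := by
  intro u v hu hv
  refine ⟨by simpa using ha, by simp, by simp⟩

lemma ngood_X (i : Fin n) : NGood n (X (R := K) i) := by
  intro u v hu hv
  refine ⟨by simpa using hv i, by simpa using norm_le_pi_norm (u - v) i, ?_⟩
  have : ∀ j : Fin n, eval v (pderiv j (X i : MvPolynomial (Fin n) K)) * (u j - v j)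
      = if j = i then u i - v i else 0 := by
    intro j
    rcases eq_or_ne j i with h | h
    · subst h; simp [pderiv_X_self]
    · simp [pderiv_X_of_ne h, h]
  rw [Finset.sum_congr rfl fun j _ => this j]
  simp [Finset.sum_ite_eq', sq_nonneg]

lemma ngood_neg {p : MvPolynomial (Fin n) K} (hp : NGood n p) : NGood n (-p) := by
  intro u v hu hv
  obtain ⟨h1, h2, h3⟩ := hp u v hu hv
  have e1 : eval u (-p) - eval v (-p) = -(eval u p - eval v p) := by
    simp only [map_neg]; ring
  have e2 : eval u (-p) - eval v (-p) - ∑ j, eval v (pderiv j (-p)) * (u j - v j)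
      = -(eval u p - eval v p - ∑ j, eval v (pderiv j p) * (u j - v j)) := by
    simp only [map_neg, neg_mul, Finset.sum_neg_distrib]
    ring
  exact ⟨by simpa using h1, by rw [e1, norm_neg]; exact h2, by rw [e2, norm_neg]; exact h3⟩

lemma ngood_add (hna : ∀ x y : K, ‖x + y‖ ≤ max ‖x‖ ‖y‖)
    {p q : MvPolynomial (Fin n) K} (hp : NGood n p) (hq : NGood n q) :
    NGood n (p + q) := by
  intro u v hu hv
  obtain ⟨h1, h2, h3⟩ := hp u v hu hv
  obtain ⟨g1, g2, g3⟩ := hq u v hu hv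
  refine ⟨?_, ?_, ?_⟩
  · rw [map_add]; exact le_trans (hna _ _) (max_le h1 g1)
  · have : eval u (p + q) - eval v (p + q) =
        (eval u p - eval v p) + (eval u q - eval v q) := by rw [map_add, map_add]; ring
    rw [this]; exact le_trans (hna _ _) (max_le h2 g2)
  · have hs : ∑ j, eval v (pderiv j (p + q)) * (u j - v j)
        = (∑ j, eval v (pderiv j p) * (u j - v j))
          + ∑ j, eval v (pderiv j q) * (u j - v j) := by
      rw [← Finset.sum_add_distrib]
      exact Finset.sum_congr rfl fun j _ => by rw [map_add, map_add]; ring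
    have : eval u (p + q) - eval v (p + q) -
        ∑ j, eval v (pderiv j (p + q)) * (u j - v j) =
        (eval u p - eval v p - ∑ j, eval v (pderiv j p) * (u j - v j)) +
        (eval u q - eval v q - ∑ j, eval v (pderiv j q) * (u j - v j)) := by
      rw [map_add, map_add, hs]; ring
    rw [this]; exact le_trans (hna _ _) (max_le h3 g3)

lemma ngood_mul (hna : ∀ x y : K, ‖x + y‖ ≤ max ‖x‖ ‖y‖)
    {p q : MvPolynomial (Fin n) K} (hp : NGood n p) (hq : NGood n q) :
    NGood n (p * q) := by
  intro u v hu hv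
  obtain ⟨h1, h2, h3⟩ := hp u v hu hv
  obtain ⟨g1, g2, g3⟩ := hq u v hu hv
  have h1u : ‖eval u p‖ ≤ 1 := (hp u u hu hu).1
  have g1u : ‖eval u q‖ ≤ 1 := (hq u u hu hu).1
  set P := eval u p - eval v p with hP
  set Q := eval u q - eval v q with hQ
  set Lp := ∑ j, eval v (pderiv j p) * (u j - v j) with hLp
  set Lq := ∑ j, eval v (pderiv j q) * (u j - v j) with hLq
  have key : eval u (p * q) - eval v (p * q) = P * eval u q + eval v p * Q := by
    rw [map_mul, map_mul]; ring
  refine ⟨?_, ?_, ?_⟩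
  · rw [map_mul, norm_mul]
    exact mul_le_one₀ h1 (norm_nonneg _) g1
  · rw [key]
    refine le_trans (hna _ _) (max_le ?_ ?_)
    · rw [norm_mul]
      calc ‖P‖ * ‖eval u q‖ ≤ ‖P‖ * 1 := by
            exact mul_le_mul_of_nonneg_left g1u (norm_nonneg _)
        _ = ‖P‖ := mul_one _
        _ ≤ ‖u - v‖ := h2
    · rw [norm_mul]
      calc ‖eval v p‖ * ‖Q‖ ≤ 1 * ‖Q‖ := mul_le_mul_of_nonneg_right h1 (norm_nonneg _)
        _ = ‖Q‖ := one_mul _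
        _ ≤ ‖u - v‖ := g2
  · have L : ∑ j, eval v (pderiv j (p * q)) * (u j - v j)
        = eval v q * Lp + eval v p * Lq := by
      rw [hLp, hLq, Finset.mul_sum, Finset.mul_sum, ← Finset.sum_add_distrib]
      refine Finset.sum_congr rfl fun j _ => ?_
      rw [pderiv_mul, map_add, map_mul, map_mul]
      ring
    have key2 : eval u (p * q) - eval v (p * q) -
        ∑ j, eval v (pderiv j (p * q)) * (u j - v j)
        = (P - Lp) * eval v q + P * Q + eval v p * (Q - Lq) := by
      rw [L, map_mul, map_mul]
      rw [hP, hQ, hLp, hLq] at *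
      ring
    rw [key2]
    refine le_trans (hna _ _) (max_le (le_trans (hna _ _) (max_le ?_ ?_)) ?_)
    · rw [norm_mul]
      calc ‖P - Lp‖ * ‖eval v q‖ ≤ ‖P - Lp‖ * 1 :=
            mul_le_mul_of_nonneg_left g1 (norm_nonneg _)
        _ = ‖P - Lp‖ := mul_one _
        _ ≤ ‖u - v‖ ^ 2 := h3
    · rw [norm_mul, sq]
      exact mul_le_mul h2 g2 (norm_nonneg _) (norm_nonneg _)
    · rw [norm_mul]
      calc ‖eval v p‖ * ‖Q - Lq‖ ≤ 1 * ‖Q - Lq‖ :=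
            mul_le_mul_of_nonneg_right h1 (norm_nonneg _)
        _ = ‖Q - Lq‖ := one_mul _
        _ ≤ ‖u - v‖ ^ 2 := g3






lemma ngood_of_coeff (hna : ∀ x y : K, ‖x + y‖ ≤ max ‖x‖ ‖y‖)
    {p : MvPolynomial (Fin n) K} (hp : ∀ m, ‖p.coeff m‖ ≤ 1) : NGood n p := by
  classical
  set s : Set (MvPolynomial (Fin n) K) :=
    Set.range X ∪ {q | ∃ a : K, ‖a‖ ≤ 1 ∧ q = C a} with hs
  have hmem : p ∈ Subring.closure s := by
    rw [p.as_sum]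
    refine Subring.sum_mem _ fun m _ => ?_
    rw [monomial_eq]
    refine Subring.mul_mem _ (Subring.subset_closure (Or.inr ⟨_, hp m, rfl⟩)) ?_
    refine Subring.prod_mem _ fun i _ => Subring.pow_mem _ ?_ _
    exact Subring.subset_closure (Or.inl ⟨i, rfl⟩)
  refine Subring.closure_induction ?_ ?_ ?_ ?_ ?_ ?_ hmem
  · rintro q (⟨i, rfl⟩ | ⟨a, ha, rfl⟩)
    · exact ngood_X i
    · exact ngood_C ha
  · simpa using ngood_C (a := (0 : K)) (by simp)
  · simpa using ngood_C (a := (1 : K)) (by simp)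
  · exact fun x y _ _ hx hy => ngood_add hna hx hy
  · exact fun x _ hx => ngood_neg hx
  · exact fun x y _ _ hx hy => ngood_mul hna hx hy

lemma ngood_pderiv_eval (hna : ∀ x y : K, ‖x + y‖ ≤ max ‖x‖ ‖y‖)
    {p : MvPolynomial (Fin n) K} (hp : NGood n p) {v : Fin n → K}
    (hv : ∀ i, ‖v i‖ ≤ 1) (j : Fin n) : ‖eval v (pderiv j p)‖ ≤ 1 := by
  classical
  set u : Fin n → K := fun i => v i + (if i = j then 1 else 0) with hu
  have hu1 : ∀ i, ‖u i‖ ≤ 1 := by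
    intro i
    refine le_trans (hna _ _) (max_le (hv i) ?_)
    split <;> simp
  have hd : ∀ i, u i - v i = if i = j then 1 else 0 := fun i => by simp [hu]
  have hδ : ‖u - v‖ ≤ 1 := by
    refine pi_norm_le_iff_of_nonneg zero_le_one |>.2 fun i => ?_
    rw [Pi.sub_apply, hd i]; split <;> simp
  obtain ⟨-, h2, h3⟩ := hp u v hu1 hv
  have hsum : ∑ i, eval v (pderiv i p) * (u i - v i) = eval v (pderiv j p) := by
    rw [Finset.sum_congr rfl fun i _ => by rw [hd i]]
    simp [Finset.sum_ite_eq']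
  have : eval v (pderiv j p) = (eval u p - eval v p) -
      (eval u p - eval v p - ∑ i, eval v (pderiv i p) * (u i - v i)) := by
    rw [hsum]; ring
  rw [this, sub_eq_add_neg]
  refine le_trans (hna _ _) (max_le (le_trans h2 hδ) ?_)
  rw [norm_neg]
  refine le_trans h3 ?_
  calc ‖u - v‖ ^ 2 ≤ 1 ^ 2 := pow_le_pow_left₀ (norm_nonneg _) hδ 2
    _ = 1 := one_pow 2





lemma na_det_le (hna : ∀ x y : K, ‖x + y‖ ≤ max ‖x‖ ‖y‖)
    (M : Matrix (Fin n) (Fin n) K) (h : ∀ i j, ‖M i j‖ ≤ 1) : ‖M.det‖ ≤ 1 := by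
  rw [Matrix.det_apply']
  refine na_sum_norm_le hna _ _ zero_le_one fun σ _ => ?_
  rw [norm_mul]
  refine mul_le_one₀ (na_intCast_le hna _) (norm_nonneg _) ?_
  calc ‖∏ i, M (σ i) i‖ = ∏ i, ‖M (σ i) i‖ := by
        simp [norm_prod]
    _ ≤ ∏ i : Fin n, (1 : ℝ) := Finset.prod_le_prod (fun i _ => norm_nonneg _)
        (fun i _ => h _ _)
    _ = 1 := by simp

lemma na_adjugate_le (hna : ∀ x y : K, ‖x + y‖ ≤ max ‖x‖ ‖y‖)
    (M : Matrix (Fin n) (Fin n) K) (h : ∀ i j, ‖M i j‖ ≤ 1) (i j : Fin n) :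
    ‖M.adjugate i j‖ ≤ 1 := by
  classical
  rw [Matrix.adjugate_apply]
  refine na_det_le hna _ fun a b => ?_
  rw [Matrix.updateRow_apply]
  split
  · rcases eq_or_ne i b with hb | hb <;> simp [Pi.single_apply, hb]
  · exact h a b

/-- Solving the linear system with control on the solution. -/
lemma na_solve (hna : ∀ x y : K, ‖x + y‖ ≤ max ‖x‖ ‖y‖)
    (M : Matrix (Fin n) (Fin n) K) (h : ∀ i j, ‖M i j‖ ≤ 1)
    (hdet : ‖M.det‖ = 1) (w : Fin n → K) :
    M.mulVec (M.det⁻¹ • (M.adjugate.mulVec w)) = w ∧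
      ∀ i, ‖(M.det⁻¹ • (M.adjugate.mulVec w)) i‖ ≤ ‖w‖ := by
  have hd0 : M.det ≠ 0 := by
    intro h0; rw [h0, norm_zero] at hdet; norm_num at hdet
  constructor
  · rw [Matrix.mulVec_smul, Matrix.mulVec_mulVec, Matrix.mul_adjugate]
    ext i
    simp only [Matrix.smul_mulVec, Matrix.one_mulVec, Pi.smul_apply, smul_eq_mul]
    field_simp
  · intro i
    rw [Pi.smul_apply, norm_smul, norm_inv, hdet, inv_one, one_mul]
    rw [Matrix.mulVec, dotProduct]
    refine na_sum_norm_le hna _ _ (norm_nonneg w) fun j _ => ?_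
    rw [norm_mul]
    calc ‖M.adjugate i j‖ * ‖w j‖ ≤ 1 * ‖w j‖ :=
          mul_le_mul_of_nonneg_right (na_adjugate_le hna M h i j) (norm_nonneg _)
      _ = ‖w j‖ := one_mul _
      _ ≤ ‖w‖ := norm_le_pi_norm w j

end auxiliary

/-- effective open mapping theorem (étale case): a polynomial map
with integral coefficients and everywhere-unit Jacobian determinant maps the
unit polydisc onto a set containing the open unit ball around each image point;
in particular the image is open. -/
theorem etale_open_mapping
    (K : Type*) [NormedField K] [CompleteSpace K]
    (hna : ∀ x y : K, ‖x + y‖ ≤ max ‖x‖ ‖y‖)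
    (n : ℕ) (f : Fin n → MvPolynomial (Fin n) K)
    (hcoeff : ∀ i, ∀ m : Fin n →₀ ℕ, ‖(f i).coeff m‖ ≤ 1)
    (hJ : ∀ x : Fin n → K, (∀ i, ‖x i‖ ≤ 1) →
      ‖(Matrix.of fun i j => MvPolynomial.eval x (MvPolynomial.pderiv j (f i))).det‖ = 1) :
    (∀ a : Fin n → K, (∀ i, ‖a i‖ ≤ 1) →
      ∀ y : Fin n → K, ‖y - (fun i => MvPolynomial.eval a (f i))‖ < 1 →
        y ∈ (fun x : Fin n → K => fun i => MvPolynomial.eval x (f i)) ''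
              {x | ∀ i, ‖x i‖ ≤ 1}) ∧
    IsOpen ((fun x : Fin n → K => fun i => MvPolynomial.eval x (f i)) ''
              {x | ∀ i, ‖x i‖ ≤ 1}) := by
  classical
  have key : ∀ a : Fin n → K, (∀ i, ‖a i‖ ≤ 1) → ∀ y : Fin n → K,
      ‖y - (fun i => MvPolynomial.eval a (f i))‖ < 1 →
      ∃ x : Fin n → K, (∀ i, ‖x i‖ ≤ 1) ∧ (fun i => MvPolynomial.eval x (f i)) = y := by
    intro a ha y hy
    set F : (Fin n → K) → (Fin n → K) := fun x => fun i => MvPolynomial.eval x (f i) with hF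
    have hy' : ‖y - F a‖ < 1 := hy
    set ε := ‖y - F a‖ with hε
    have hε0 : (0:ℝ) ≤ ε := norm_nonneg _
    have hε1 : ε < 1 := hy'
    set A : (Fin n → K) → Matrix (Fin n) (Fin n) K :=
      fun z => Matrix.of fun i j => MvPolynomial.eval z (MvPolynomial.pderiv j (f i)) with hA
    set g : (Fin n → K) → (Fin n → K) :=
      fun z => ((A z).det)⁻¹ • ((A z).adjugate.mulVec (y - F z)) with hg
    set x : ℕ → Fin n → K := fun k => Nat.rec a (fun _ z => z + g z) k with hx
    have hxs : ∀ k, x (k + 1) = x k + g (x k) := fun k => rfl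
    have good : ∀ i, NGood n (f i) := fun i => ngood_of_coeff hna (hcoeff i)
    have hAle : ∀ z : Fin n → K, (∀ i, ‖z i‖ ≤ 1) → ∀ i j, ‖A z i j‖ ≤ 1 :=
      fun z hz i j => ngood_pderiv_eval hna (good i) hz j
    have hdet : ∀ z : Fin n → K, (∀ i, ‖z i‖ ≤ 1) → ‖(A z).det‖ = 1 := fun z hz => hJ z hz
    have solve : ∀ z : Fin n → K, (∀ i, ‖z i‖ ≤ 1) →
        (A z).mulVec (g z) = y - F z ∧ ∀ i, ‖g z i‖ ≤ ‖y - F z‖ :=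
      fun z hz => na_solve hna (A z) (hAle z hz) (hdet z hz) (y - F z)
    have inv : ∀ k, (∀ i, ‖x k i‖ ≤ 1) ∧ ‖y - F (x k)‖ ≤ ε ^ (k + 1) := by
      intro k
      induction k with
      | zero => exact ⟨ha, by rw [pow_one]; exact le_of_eq (show ‖y - F (x 0)‖ = ε from hε.symm)⟩
      | succ k ih =>
        obtain ⟨hz, hleq⟩ := ih
        obtain ⟨hsol, hgle⟩ := solve (x k) hz
        have hgle' : ∀ i, ‖g (x k) i‖ ≤ ε ^ (k+1) := fun i => le_trans (hgle i) hleq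
        have hgle1 : ∀ i, ‖g (x k) i‖ ≤ 1 := fun i =>
          le_trans (hgle' i) (pow_le_one₀ hε0 hε1.le)
        have hz1 : ∀ i, ‖(x k + g (x k)) i‖ ≤ 1 := fun i =>
          le_trans (hna _ _) (max_le (hz i) (hgle1 i))
        refine ⟨by rw [hxs]; exact hz1, ?_⟩
        have hnorm_g : ‖(x k + g (x k)) - x k‖ ≤ ε ^ (k+1) := by
          refine (pi_norm_le_iff_of_nonneg (pow_nonneg hε0 _)).2 fun i => ?_
          simpa using hgle' i
        have hAg : ∀ i, ∑ j, MvPolynomial.eval (x k) (MvPolynomial.pderiv j (f i)) *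
            ((x k + g (x k)) j - x k j) = y i - F (x k) i := by
          intro i
          have h1 := congrFun hsol i
          rw [Matrix.mulVec, dotProduct] at h1
          rw [Finset.sum_congr rfl fun j _ =>
            (by simp only [hA, Matrix.of_apply, Pi.add_apply]; ring :
              MvPolynomial.eval (x k) (MvPolynomial.pderiv j (f i)) *
                ((x k + g (x k)) j - x k j)
              = A (x k) i j * g (x k) j)]
          rw [h1, Pi.sub_apply]
        rw [hxs]
        refine (pi_norm_le_iff_of_nonneg (pow_nonneg hε0 _)).2 fun i => ?_
        have taylor := (good i (x k + g (x k)) (x k) hz1 hz).2.2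
        have hrw : (y - F (x k + g (x k))) i =
            -(F (x k + g (x k)) i - F (x k) i - ∑ j,
              MvPolynomial.eval (x k) (MvPolynomial.pderiv j (f i)) *
                ((x k + g (x k)) j - x k j)) := by
          rw [hAg i, Pi.sub_apply]
          ring
        rw [hrw, norm_neg]
        calc ‖F (x k + g (x k)) i - F (x k) i - ∑ j,
              MvPolynomial.eval (x k) (MvPolynomial.pderiv j (f i)) *
                ((x k + g (x k)) j - x k j)‖
            ≤ ‖(x k + g (x k)) - x k‖ ^ 2 := taylor
          _ ≤ (ε ^ (k+1)) ^ 2 := pow_le_pow_left₀ (norm_nonneg _) hnorm_g 2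
          _ = ε ^ (2*k+2) := by ring
          _ ≤ ε ^ (k+2) := pow_le_pow_of_le_one hε0 hε1.le (by omega)
    have hcau : CauchySeq x := by
      refine cauchySeq_of_le_geometric ε ε hε1 fun k => ?_
      rw [dist_eq_norm]
      have e1 : x k - x (k+1) = -(g (x k)) := by rw [hxs k]; abel
      rw [e1, norm_neg]
      have h2 := (solve (x k) (inv k).1).2
      refine le_trans ((pi_norm_le_iff_of_nonneg (pow_nonneg hε0 (k+1))).2 fun i =>
        le_trans (h2 i) (inv k).2) (le_of_eq (by ring))
    obtain ⟨L, hL⟩ := cauchySeq_tendsto_of_complete hcau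
    have hFc : Continuous F := continuous_pi fun i => MvPolynomial.continuous_eval (f i)
    have h1 : Filter.Tendsto (fun k => F (x k)) Filter.atTop (nhds (F L)) :=
      (hFc.tendsto L).comp hL
    have h2 : Filter.Tendsto (fun k => F (x k)) Filter.atTop (nhds y) := by
      rw [tendsto_iff_dist_tendsto_zero]
      have h3 : Filter.Tendsto (fun k : ℕ => ε ^ (k+1)) Filter.atTop (nhds 0) :=
        (tendsto_pow_atTop_nhds_zero_of_lt_one hε0 hε1).comp (Filter.tendsto_add_atTop_nat 1)
      refine squeeze_zero (fun k => dist_nonneg) (fun k => ?_) h3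
      rw [dist_eq_norm, ← norm_neg]
      refine le_trans (le_of_eq (by rw [neg_sub])) (inv k).2
    have hFL : F L = y := tendsto_nhds_unique h1 h2
    have hLS : ∀ i, ‖L i‖ ≤ 1 := by
      intro i
      have hLi : Filter.Tendsto (fun k => x k i) Filter.atTop (nhds (L i)) :=
        ((continuous_apply i).tendsto L).comp hL
      exact le_of_tendsto hLi.norm (Filter.Eventually.of_forall fun k => (inv k).1 i)
    exact ⟨L, hLS, hFL⟩
  constructor
  · intro a ha y hy
    obtain ⟨x, hxS, hFx⟩ := key a ha y hy
    exact ⟨x, hxS, hFx⟩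
  · rw [Metric.isOpen_iff]
    rintro y0 ⟨a, ha, rfl⟩
    refine ⟨1, one_pos, fun y hy => ?_⟩
    rw [Metric.mem_ball, dist_eq_norm] at hy
    obtain ⟨x, hxS, hFx⟩ := key a ha y hy
    exact ⟨x, hxS, hFx⟩
end

section
/- Let K be a complete nonarchimedean valued field, and let f : O^n → K^n be a polynomial map with coefficients in O such that |det(Df(x))| = 1 for all x ∈ O^n. Then f is injective on every open ball of radius 1: if x, y ∈ O^n with ‖x − y‖ < 1 and f(x) = f(y), then x = y. -/
open MvPolynomial

section helpers

variable {K : Type*} [NormedField K]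

lemma na_sum_le (hna : ∀ x y : K, ‖x + y‖ ≤ max ‖x‖ ‖y‖) {ι : Type*} (s : Finset ι)
    (g : ι → K) {c : ℝ} (hc : 0 ≤ c) (h : ∀ a ∈ s, ‖g a‖ ≤ c) :
    ‖∑ a ∈ s, g a‖ ≤ c := by
  induction s using Finset.cons_induction with
  | empty => simpa using hc
  | cons a s ha ih =>
    rw [Finset.sum_cons]
    refine le_trans (hna _ _) (max_le (h a (Finset.mem_cons_self a s)) ?_)
    exact ih fun b hb => h b (Finset.mem_cons_of_mem hb)

lemma na_add_eq_left (hna : ∀ x y : K, ‖x + y‖ ≤ max ‖x‖ ‖y‖) {a b : K}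
    (h : ‖b‖ < ‖a‖) : ‖a + b‖ = ‖a‖ := by
  refine le_antisymm (le_trans (hna a b) (max_le le_rfl h.le)) ?_
  have h2 := hna (a + b) (-b)
  rw [norm_neg] at h2
  have h3 : a + b + -b = a := by ring
  rw [h3] at h2
  rcases max_cases ‖a + b‖ ‖b‖ with ⟨he, _⟩ | ⟨he, _⟩
  · rw [he] at h2; exact h2
  · rw [he] at h2; exact absurd h (not_lt.2 h2)

lemma pow_sub_pow_norm_le (hna : ∀ x y : K, ‖x + y‖ ≤ max ‖x‖ ‖y‖) {a b : K}
    (ha : ‖a‖ ≤ 1) (hb : ‖b‖ ≤ 1) : ∀ m : ℕ, ‖b ^ m - a ^ m‖ ≤ ‖b - a‖ := by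
  intro m
  induction m with
  | zero => simp
  | succ m ih =>
    have : b ^ (m + 1) - a ^ (m + 1) = b * (b ^ m - a ^ m) + (b - a) * a ^ m := by ring
    rw [this]
    refine le_trans (hna _ _) (max_le ?_ ?_)
    · rw [norm_mul]
      calc ‖b‖ * ‖b ^ m - a ^ m‖ ≤ 1 * ‖b - a‖ :=
        mul_le_mul hb ih (norm_nonneg _) zero_le_one
      _ = ‖b - a‖ := one_mul _
    · rw [norm_mul, norm_pow]
      calc ‖b - a‖ * ‖a‖ ^ m ≤ ‖b - a‖ * 1 := by
            exact mul_le_mul_of_nonneg_left (pow_le_one₀ (norm_nonneg _) ha) (norm_nonneg _)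
      _ = ‖b - a‖ := mul_one _

lemma prod_sub_prod_norm_le (hna : ∀ x y : K, ‖x + y‖ ≤ max ‖x‖ ‖y‖) {ι : Type*}
    (s : Finset ι) (g h : ι → K) {d : ℝ} (hd : 0 ≤ d)
    (hg : ∀ a ∈ s, ‖g a‖ ≤ 1) (hh : ∀ a ∈ s, ‖h a‖ ≤ 1)
    (hgh : ∀ a ∈ s, ‖g a - h a‖ ≤ d) :
    ‖(∏ a ∈ s, g a) - ∏ a ∈ s, h a‖ ≤ d := by
  induction s using Finset.cons_induction with
  | empty => simpa using hd
  | cons a s ha ih =>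
    rw [Finset.prod_cons, Finset.prod_cons]
    have key : g a * ∏ b ∈ s, g b - h a * ∏ b ∈ s, h b
        = g a * ((∏ b ∈ s, g b) - ∏ b ∈ s, h b) + (g a - h a) * ∏ b ∈ s, h b := by ring
    rw [key]
    have hprodh : ‖∏ b ∈ s, h b‖ ≤ 1 := by
      rw [norm_prod]
      exact Finset.prod_le_one (fun b _ => norm_nonneg _)
        (fun b hb => hh b (Finset.mem_cons_of_mem hb))
    refine le_trans (hna _ _) (max_le ?_ ?_)
    · rw [norm_mul]
      calc ‖g a‖ * ‖(∏ b ∈ s, g b) - ∏ b ∈ s, h b‖ ≤ 1 * d := by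
            refine mul_le_mul (hg a (Finset.mem_cons_self a s)) ?_ (norm_nonneg _) zero_le_one
            exact ih (fun b hb => hg b (Finset.mem_cons_of_mem hb))
              (fun b hb => hh b (Finset.mem_cons_of_mem hb))
              (fun b hb => hgh b (Finset.mem_cons_of_mem hb))
      _ = d := one_mul _
    · rw [norm_mul]
      calc ‖g a - h a‖ * ‖∏ b ∈ s, h b‖ ≤ d * 1 :=
            mul_le_mul (hgh a (Finset.mem_cons_self a s)) hprodh (norm_nonneg _) hd
      _ = d := mul_one _

lemma prod_sub_prod_eq {R : Type*} [CommRing R] {ι : Type*} [LinearOrder ι]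
    (s : Finset ι) (g h : ι → R) :
    (∏ k ∈ s, g k) - ∏ k ∈ s, h k
      = ∑ j ∈ s, (∏ k ∈ s.filter (· < j), g k) * (g j - h j) * ∏ k ∈ s.filter (j < ·), h k := by
  induction s using Finset.induction_on_max with
  | empty => simp
  | insert a s hmax ih =>
    rw [Finset.prod_insert (fun h => lt_irrefl a (hmax a h)),
        Finset.prod_insert (fun h => lt_irrefl a (hmax a h)),
        Finset.sum_insert (fun h => lt_irrefl a (hmax a h))]
    have hfa : (insert a s).filter (· < a) = s := by
      ext b
      simp only [Finset.mem_filter, Finset.mem_insert]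
      constructor
      · rintro ⟨hb | hb, hlt⟩
        · exact absurd hlt (by simp [hb])
        · exact hb
      · intro hb; exact ⟨Or.inr hb, hmax b hb⟩
    have hfa' : (insert a s).filter (a < ·) = ∅ := by
      ext b
      simp only [Finset.mem_filter, Finset.mem_insert, Finset.notMem_empty, iff_false]
      rintro ⟨hb | hb, hlt⟩
      · exact lt_irrefl a (hb ▸ hlt)
      · exact lt_asymm hlt (hmax b hb)
    rw [hfa, hfa']
    have hjfilt : ∀ j ∈ s, (insert a s).filter (· < j) = s.filter (· < j) := by
      intro j hj
      ext b
      simp only [Finset.mem_filter, Finset.mem_insert]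
      constructor
      · rintro ⟨hb | hb, hlt⟩
        · exact absurd hlt (by rw [hb]; exact not_lt.2 (hmax j hj).le)
        · exact ⟨hb, hlt⟩
      · rintro ⟨hb, hlt⟩; exact ⟨Or.inr hb, hlt⟩
    have hjfilt' : ∀ j ∈ s, (insert a s).filter (j < ·) = insert a (s.filter (j < ·)) := by
      intro j hj
      ext b
      simp only [Finset.mem_filter, Finset.mem_insert]
      constructor
      · rintro ⟨hb | hb, hlt⟩
        · exact Or.inl hb
        · exact Or.inr ⟨hb, hlt⟩
      · rintro (hb | ⟨hb, hlt⟩)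
        · exact ⟨Or.inl hb, hb ▸ hmax j hj⟩
        · exact ⟨Or.inr hb, hlt⟩
    have hsum : ∑ j ∈ s, (∏ k ∈ (insert a s).filter (· < j), g k) * (g j - h j) *
          ∏ k ∈ (insert a s).filter (j < ·), h k
        = h a * ∑ j ∈ s, (∏ k ∈ s.filter (· < j), g k) * (g j - h j) *
          ∏ k ∈ s.filter (j < ·), h k := by
      rw [Finset.mul_sum]
      refine Finset.sum_congr rfl fun j hj => ?_
      rw [hjfilt j hj, hjfilt' j hj, Finset.prod_insert (fun hc => lt_irrefl a
        (hmax a (Finset.mem_of_mem_filter a hc)))]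
      ring
    rw [hsum, ← ih]
    ring

end helpers

/-- quantitative injectivity (monomorphism on unit balls) of a
polynomial map with integral coefficients and everywhere-unit Jacobian
determinant. -/
theorem etale_injective_on_unit_balls
    (K : Type*) [NormedField K] [CompleteSpace K]
    (hna : ∀ x y : K, ‖x + y‖ ≤ max ‖x‖ ‖y‖)
    (n : ℕ) (f : Fin n → MvPolynomial (Fin n) K)
    (hcoeff : ∀ i, ∀ m : Fin n →₀ ℕ, ‖(f i).coeff m‖ ≤ 1)
    (hJ : ∀ x : Fin n → K, (∀ i, ‖x i‖ ≤ 1) →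
      ‖(Matrix.of fun i j => MvPolynomial.eval x (MvPolynomial.pderiv j (f i))).det‖ = 1)
    (x y : Fin n → K) (hx : ∀ i, ‖x i‖ ≤ 1) (hy : ∀ i, ‖y i‖ ≤ 1)
    (hclose : ‖x - y‖ < 1)
    (heq : ∀ i, MvPolynomial.eval x (f i) = MvPolynomial.eval y (f i)) :
    x = y := by
  classical
  set d : ℝ := ‖x - y‖ with hddef
  have hd0 : 0 ≤ d := norm_nonneg _
  have hdk : ∀ k, ‖y k - x k‖ ≤ d := by
    intro k
    rw [← norm_neg]
    have h1 : -(y k - x k) = (x - y) k := by simp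
    rw [h1]
    exact norm_le_pi_norm (x - y) k
  -- the "divided difference" matrix entries
  set F : (Fin n → K) → (Fin n → K) → Fin n → Fin n → K := fun z w i j =>
    ∑ m ∈ (f i).support, (f i).coeff m *
      ((∏ k ∈ Finset.univ.filter (· < j), w k ^ m k) *
       (∑ t ∈ Finset.range (m j), w j ^ t * z j ^ (m j - 1 - t)) *
       (∏ k ∈ Finset.univ.filter (j < ·), z k ^ m k)) with hFdef
  -- boundedness of entries
  have hbound : ∀ z w : Fin n → K, (∀ k, ‖z k‖ ≤ 1) → (∀ k, ‖w k‖ ≤ 1) →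
      ∀ i j, ‖F z w i j‖ ≤ 1 := by
    intro z w hz hw i j
    refine na_sum_le hna _ _ zero_le_one ?_
    intro m _
    have h1 : ‖∏ k ∈ Finset.univ.filter (· < j), w k ^ m k‖ ≤ 1 := by
      rw [norm_prod]
      exact Finset.prod_le_one (fun _ _ => norm_nonneg _)
        (fun k _ => by rw [norm_pow]; exact pow_le_one₀ (norm_nonneg _) (hw k))
    have h3 : ‖∏ k ∈ Finset.univ.filter (j < ·), z k ^ m k‖ ≤ 1 := by
      rw [norm_prod]
      exact Finset.prod_le_one (fun _ _ => norm_nonneg _)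
        (fun k _ => by rw [norm_pow]; exact pow_le_one₀ (norm_nonneg _) (hz k))
    have h2 : ‖∑ t ∈ Finset.range (m j), w j ^ t * z j ^ (m j - 1 - t)‖ ≤ 1 := by
      refine na_sum_le hna _ _ zero_le_one ?_
      intro t _
      rw [norm_mul, norm_pow, norm_pow]
      calc ‖w j‖ ^ t * ‖z j‖ ^ (m j - 1 - t) ≤ 1 * 1 := by
            refine mul_le_mul (pow_le_one₀ (norm_nonneg _) (hw j))
              (pow_le_one₀ (norm_nonneg _) (hz j)) (by positivity) zero_le_one
        _ = 1 := one_mul 1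
    rw [norm_mul, norm_mul, norm_mul]
    calc ‖(f i).coeff m‖ * (‖∏ k ∈ Finset.univ.filter (· < j), w k ^ m k‖ *
            ‖∑ t ∈ Finset.range (m j), w j ^ t * z j ^ (m j - 1 - t)‖ *
            ‖∏ k ∈ Finset.univ.filter (j < ·), z k ^ m k‖)
        ≤ 1 * (1 * 1 * 1) := by
          refine mul_le_mul (hcoeff i m) ?_ (by positivity) zero_le_one
          refine mul_le_mul (mul_le_mul h1 h2 (norm_nonneg _) zero_le_one) h3
            (norm_nonneg _) (by norm_num)
      _ = 1 := by norm_num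
  -- telescoping identity
  have htele : ∀ i, ∑ j, F x y i j * (y j - x j)
      = MvPolynomial.eval y (f i) - MvPolynomial.eval x (f i) := by
    intro i
    rw [MvPolynomial.eval_eq' y, MvPolynomial.eval_eq' x, ← Finset.sum_sub_distrib]
    calc ∑ j, F x y i j * (y j - x j)
        = ∑ j, ∑ m ∈ (f i).support, (f i).coeff m *
            ((∏ k ∈ Finset.univ.filter (· < j), y k ^ m k) *
             ((∑ t ∈ Finset.range (m j), y j ^ t * x j ^ (m j - 1 - t)) * (y j - x j)) *
             (∏ k ∈ Finset.univ.filter (j < ·), x k ^ m k)) := by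
          refine Finset.sum_congr rfl fun j _ => ?_
          rw [hFdef, Finset.sum_mul]
          exact Finset.sum_congr rfl fun m _ => by ring
      _ = ∑ m ∈ (f i).support, ∑ j, (f i).coeff m *
            ((∏ k ∈ Finset.univ.filter (· < j), y k ^ m k) *
             (y j ^ m j - x j ^ m j) *
             (∏ k ∈ Finset.univ.filter (j < ·), x k ^ m k)) := by
          rw [Finset.sum_comm]
          refine Finset.sum_congr rfl fun m _ => Finset.sum_congr rfl fun j _ => ?_
          rw [geom_sum₂_mul]
      _ = ∑ m ∈ (f i).support, ((f i).coeff m * ∏ k, y k ^ m k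
            - (f i).coeff m * ∏ k, x k ^ m k) := by
          refine Finset.sum_congr rfl fun m _ => ?_
          rw [← Finset.mul_sum, ← prod_sub_prod_eq]
          ring
  -- closeness of entries
  have hdiff : ∀ i j, ‖F x y i j - F x x i j‖ ≤ d := by
    intro i j
    rw [hFdef, ← Finset.sum_sub_distrib]
    refine na_sum_le hna _ _ hd0 ?_
    intro m _
    set P1y := ∏ k ∈ Finset.univ.filter (· < j), y k ^ m k with hP1y
    set P1x := ∏ k ∈ Finset.univ.filter (· < j), x k ^ m k with hP1x
    set Gy := ∑ t ∈ Finset.range (m j), y j ^ t * x j ^ (m j - 1 - t) with hGy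
    set Gx := ∑ t ∈ Finset.range (m j), x j ^ t * x j ^ (m j - 1 - t) with hGx
    set P2 := ∏ k ∈ Finset.univ.filter (j < ·), x k ^ m k with hP2
    have hnormpow : ∀ (z : Fin n → K), (∀ k, ‖z k‖ ≤ 1) → ∀ (k : Fin n) (e : ℕ),
        ‖z k ^ e‖ ≤ 1 := fun z hz k e => by
      rw [norm_pow]; exact pow_le_one₀ (norm_nonneg _) (hz k)
    have hP1yle : ‖P1y‖ ≤ 1 := by
      rw [hP1y, norm_prod]
      exact Finset.prod_le_one (fun _ _ => norm_nonneg _) (fun k _ => hnormpow y hy k _)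
    have hP1xle : ‖P1x‖ ≤ 1 := by
      rw [hP1x, norm_prod]
      exact Finset.prod_le_one (fun _ _ => norm_nonneg _) (fun k _ => hnormpow x hx k _)
    have hP2le : ‖P2‖ ≤ 1 := by
      rw [hP2, norm_prod]
      exact Finset.prod_le_one (fun _ _ => norm_nonneg _) (fun k _ => hnormpow x hx k _)
    have hGyle : ‖Gy‖ ≤ 1 := by
      rw [hGy]
      refine na_sum_le hna _ _ zero_le_one fun t _ => ?_
      rw [norm_mul]
      calc ‖y j ^ t‖ * ‖x j ^ (m j - 1 - t)‖ ≤ 1 * 1 :=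
            mul_le_mul (hnormpow y hy j t) (hnormpow x hx j _) (norm_nonneg _) zero_le_one
        _ = 1 := one_mul 1
    have hP1diff : ‖P1y - P1x‖ ≤ d := by
      rw [hP1y, hP1x]
      refine prod_sub_prod_norm_le hna _ _ _ hd0 (fun k _ => hnormpow y hy k _)
        (fun k _ => hnormpow x hx k _) (fun k _ => ?_)
      exact le_trans (pow_sub_pow_norm_le hna (hx k) (hy k) (m k)) (hdk k)
    have hGdiff : ‖Gy - Gx‖ ≤ d := by
      rw [hGy, hGx, ← Finset.sum_sub_distrib]
      refine na_sum_le hna _ _ hd0 fun t _ => ?_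
      have hre : y j ^ t * x j ^ (m j - 1 - t) - x j ^ t * x j ^ (m j - 1 - t)
          = (y j ^ t - x j ^ t) * x j ^ (m j - 1 - t) := by ring
      rw [hre, norm_mul]
      calc ‖y j ^ t - x j ^ t‖ * ‖x j ^ (m j - 1 - t)‖ ≤ d * 1 := by
            refine mul_le_mul ?_ (hnormpow x hx j _) (norm_nonneg _) hd0
            exact le_trans (pow_sub_pow_norm_le hna (hx j) (hy j) t) (hdk j)
        _ = d := mul_one d
    have hre2 : (f i).coeff m * (P1y * Gy * P2) - (f i).coeff m * (P1x * Gx * P2)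
        = (f i).coeff m * ((P1y - P1x) * Gy * P2 + P1x * (Gy - Gx) * P2) := by ring
    rw [hre2, norm_mul]
    have hinner : ‖(P1y - P1x) * Gy * P2 + P1x * (Gy - Gx) * P2‖ ≤ d := by
      refine le_trans (hna _ _) (max_le ?_ ?_)
      · rw [norm_mul, norm_mul]
        calc ‖P1y - P1x‖ * ‖Gy‖ * ‖P2‖ ≤ d * 1 * 1 := by
              refine mul_le_mul (mul_le_mul hP1diff hGyle (norm_nonneg _) hd0) hP2le
                (norm_nonneg _) (by positivity)
          _ = d := by ring
      · rw [norm_mul, norm_mul]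
        calc ‖P1x‖ * ‖Gy - Gx‖ * ‖P2‖ ≤ 1 * d * 1 := by
              refine mul_le_mul (mul_le_mul hP1xle hGdiff (norm_nonneg _) zero_le_one) hP2le
                (norm_nonneg _) (by positivity)
          _ = d := by ring
    calc ‖(f i).coeff m‖ * ‖(P1y - P1x) * Gy * P2 + P1x * (Gy - Gx) * P2‖ ≤ 1 * d :=
          mul_le_mul (hcoeff i m) hinner (norm_nonneg _) zero_le_one
      _ = d := one_mul d
  -- identification with the Jacobian
  have hsplit : ∀ (e : Fin n → ℕ) (j : Fin n), (∏ k, x k ^ e k)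
      = (∏ k ∈ Finset.univ.filter (· < j), x k ^ e k) * (x j ^ e j *
        ∏ k ∈ Finset.univ.filter (j < ·), x k ^ e k) := by
    intro e j
    rw [← Finset.prod_filter_mul_prod_filter_not Finset.univ (· < j)]
    congr 1
    have hins : Finset.univ.filter (fun k => ¬ k < j)
        = insert j (Finset.univ.filter (j < ·)) := by
      ext k
      simp only [Finset.mem_filter, Finset.mem_univ, true_and, Finset.mem_insert, not_lt]
      constructor
      · intro hk
        rcases eq_or_lt_of_le hk with h | h
        · exact Or.inl h.symm
        · exact Or.inr h
      · rintro (rfl | h)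
        · exact le_rfl
        · exact h.le
    rw [hins, Finset.prod_insert (by simp)]
  have hpderiv : ∀ i j, F x x i j = MvPolynomial.eval x (MvPolynomial.pderiv j (f i)) := by
    intro i j
    conv_rhs => rw [MvPolynomial.as_sum (f i)]
    rw [map_sum, map_sum, hFdef]
    refine Finset.sum_congr rfl fun m _ => ?_
    rw [MvPolynomial.pderiv_monomial, MvPolynomial.eval_monomial, Finsupp.prod_pow]
    rcases Nat.eq_zero_or_pos (m j) with hmj | hmj
    · simp [hmj]
    · have hG : (∑ t ∈ Finset.range (m j), x j ^ t * x j ^ (m j - 1 - t))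
          = (m j : K) * x j ^ (m j - 1) := by
        rw [Finset.sum_congr rfl (fun t ht => ?_), Finset.sum_const, Finset.card_range,
          nsmul_eq_mul]
        rw [← pow_add]
        congr 1
        have := Finset.mem_range.1 ht
        omega
      have hm' : ∀ k : Fin n, k ≠ j → ((m - Finsupp.single j 1 : Fin n →₀ ℕ)) k = m k := by
        intro k hk
        rw [Finsupp.tsub_apply, Finsupp.single_apply, if_neg (fun h => hk h.symm)]
        omega
      have hm'j : ((m - Finsupp.single j 1 : Fin n →₀ ℕ)) j = m j - 1 := by
        rw [Finsupp.tsub_apply, Finsupp.single_apply, if_pos rfl]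
      rw [hsplit (fun k => (m - Finsupp.single j 1 : Fin n →₀ ℕ) k) j, hG, hm'j]
      have hp1 : (∏ k ∈ Finset.univ.filter (· < j), x k ^ (m - Finsupp.single j 1 : Fin n →₀ ℕ) k)
          = ∏ k ∈ Finset.univ.filter (· < j), x k ^ m k := by
        refine Finset.prod_congr rfl fun k hk => ?_
        rw [hm' k (ne_of_lt (Finset.mem_filter.1 hk).2)]
      have hp2 : (∏ k ∈ Finset.univ.filter (j < ·), x k ^ (m - Finsupp.single j 1 : Fin n →₀ ℕ) k)
          = ∏ k ∈ Finset.univ.filter (j < ·), x k ^ m k := by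
        refine Finset.prod_congr rfl fun k hk => ?_
        rw [hm' k (ne_of_gt (Finset.mem_filter.1 hk).2)]
      rw [hp1, hp2]
      ring
  set B : Matrix (Fin n) (Fin n) K := Matrix.of (F x y) with hBdef
  set A : Matrix (Fin n) (Fin n) K := Matrix.of (F x x) with hAdef
  have hdetA : ‖A.det‖ = 1 := by
    have : A = Matrix.of fun i j => MvPolynomial.eval x (MvPolynomial.pderiv j (f i)) := by
      ext i j
      exact hpderiv i j
    rw [this]
    exact hJ x hx
  have hdetdiff : ‖B.det - A.det‖ ≤ d := by
    rw [Matrix.det_apply', Matrix.det_apply', ← Finset.sum_sub_distrib]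
    refine na_sum_le hna _ _ hd0 ?_
    intro σ _
    have hre : ((Equiv.Perm.sign σ : ℤ) : K) * ∏ k, B (σ k) k
        - ((Equiv.Perm.sign σ : ℤ) : K) * ∏ k, A (σ k) k
        = ((Equiv.Perm.sign σ : ℤ) : K) * ((∏ k, B (σ k) k) - ∏ k, A (σ k) k) := by ring
    rw [hre, norm_mul]
    have hsign : ‖((Equiv.Perm.sign σ : ℤ) : K)‖ = 1 := by
      rcases Int.units_eq_one_or (Equiv.Perm.sign σ) with h | h <;> rw [h] <;> simp
    rw [hsign, one_mul]
    have hBA : ∀ k : Fin n, B (σ k) k = F x y (σ k) k := fun k => rfl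
    have hAA : ∀ k : Fin n, A (σ k) k = F x x (σ k) k := fun k => rfl
    refine prod_sub_prod_norm_le hna Finset.univ _ _ hd0 ?_ ?_ ?_
    · intro k _
      rw [hBA k]
      exact hbound x y hx hy (σ k) k
    · intro k _
      rw [hAA k]
      exact hbound x x hx hx (σ k) k
    · intro k _
      rw [hBA k, hAA k]
      exact hdiff (σ k) k
  have hdetB : ‖B.det‖ = 1 := by
    have hlt : ‖B.det - A.det‖ < 1 := lt_of_le_of_lt hdetdiff hclose
    have : B.det = A.det + (B.det - A.det) := by ring
    rw [this, na_add_eq_left hna (by rw [hdetA]; exact hlt)]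
    exact hdetA
  have hdetBne : B.det ≠ 0 := by
    intro h
    rw [h, norm_zero] at hdetB
    norm_num at hdetB
  -- B kills y - x
  have hmul : B.mulVec (y - x) = 0 := by
    funext i
    rw [Matrix.mulVec, dotProduct]
    simp only [Pi.sub_apply, Pi.zero_apply]
    have h0 : ∑ j, F x y i j * (y j - x j) = 0 := by rw [htele i, heq i, sub_self]
    exact h0
  have hv : y - x = 0 := by
    have h1 : (B.adjugate * B).mulVec (y - x) = 0 := by
      rw [← Matrix.mulVec_mulVec, hmul, Matrix.mulVec_zero]
    rw [Matrix.adjugate_mul, Matrix.smul_mulVec, Matrix.one_mulVec] at h1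
    rcases smul_eq_zero.1 h1 with h | h
    · exact absurd h hdetBne
    · exact h
  have := sub_eq_zero.1 hv
  exact this.symm
end

section
/- Let k be a field and γ : X → Y a morphism of finite-type reduced k-schemes that is surjective on L-points for every field extension L/k. Then Y admits a finite stratification into locally closed subschemes Y = ⊔_α Y_α such that for each α the restricted morphism γ^{-1}(Y_α) → Y_α admits a section. -/
open AlgebraicGeometry CategoryTheory TopologicalSpace

/-- Image of a closure under a topological embedding. -/
private lemma image_closure_of_embedding {α β : Type*} [TopologicalSpace α] [TopologicalSpace β]
    {e : α → β} (he : Topology.IsEmbedding e) (s : Set α) :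
    e '' closure s = closure (e '' s) ∩ Set.range e := by
  rw [he.closure_eq_preimage_closure_image, Set.image_preimage_eq_inter_range]

/-- a morphism of finite-type reduced schemes over a field `k`
that is surjective on `L`-points for every field extension `L/k` admits a
finite stratification of the target into locally closed subschemes over each of
which it admits a section. -/
theorem stratification_with_sections_of_surjective_on_points
    (k : Type) [Field k]
    (X Y : Scheme) (sX : X ⟶ Spec (CommRingCat.of k)) (sY : Y ⟶ Spec (CommRingCat.of k))
    [LocallyOfFiniteType sX] [LocallyOfFiniteType sY]
    [CompactSpace X] [CompactSpace Y]
    [IsReduced X] [IsReduced Y]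
    (γ : X ⟶ Y) (hover : γ ≫ sY = sX)
    (hsurj : ∀ (L : Type) [Field L] (i : k →+* L)
      (y : Spec (CommRingCat.of L) ⟶ Y),
      y ≫ sY = Spec.map (CommRingCat.ofHom i) →
      ∃ x : Spec (CommRingCat.of L) ⟶ X, x ≫ γ = y) :
    ∃ (N : ℕ) (W : Fin N → Scheme) (ι : ∀ a, W a ⟶ Y),
      (∀ a, IsImmersion (ι a)) ∧
      (∀ a b, a ≠ b → Set.range (ι a).base ∩ Set.range (ι b).base = ∅) ∧
      (⋃ a, Set.range (ι a).base) = Set.univ ∧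
      ∀ a, ∃ s : W a ⟶ X, s ≫ γ = ι a := by
  -- `Y` is a Noetherian scheme.
  haveI hYln : IsLocallyNoetherian Y := by
    constructor
    intro V
    have h1 : (sY.appLE ⊤ V.1 le_top).hom.FiniteType :=
      sY.finiteType_appLE
        (isAffineOpen_top _) V.2 le_top
    have h2 : IsNoetherianRing ↥Γ(Spec (CommRingCat.of k), ⊤) :=
      isNoetherianRing_of_ringEquiv k
        (Scheme.ΓSpecIso (CommRingCat.of k)).symm.commRingCatIsoToRingEquiv
    letI := (sY.appLE ⊤ V.1 le_top).hom.toAlgebra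
    have h3 : Algebra.FiniteType ↥Γ(Spec (CommRingCat.of k), ⊤) ↥Γ(Y, V.1) := h1
    exact Algebra.FiniteType.isNoetherianRing ↥Γ(Spec (CommRingCat.of k), ⊤) ↥Γ(Y, V.1)
  haveI : IsNoetherian Y := {}
  haveI hNS : NoetherianSpace Y := inferInstance
  -- It suffices to stratify each closed subset of `Y`.
  suffices H : ∀ Z : Closeds Y, ∃ (N : ℕ) (W : Fin N → Scheme) (ι : ∀ a, W a ⟶ Y),
      (∀ a, IsImmersion (ι a)) ∧
      (∀ a b, a ≠ b → Set.range (ι a).base ∩ Set.range (ι b).base = ∅) ∧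
      (⋃ a, Set.range (ι a).base) = (Z : Set Y) ∧
      (∀ a, ∃ s : W a ⟶ X, s ≫ γ = ι a) by
    obtain ⟨N, W, ι, h1, h2, h3, h4⟩ := H ⊤
    exact ⟨N, W, ι, h1, h2, by simpa using h3, h4⟩
  intro Z
  induction Z using WellFoundedLT.induction with
  | _ Z IH =>
  rcases eq_or_ne (Z : Set Y) ∅ with hZ | hZ
  · exact ⟨0, Fin.elim0, fun a => a.elim0, fun a => a.elim0, fun a b _ => a.elim0,
      by simp [hZ], fun a => a.elim0⟩
  -- pick an irreducible component `C` of `Z` and its generic point `η`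
  have hZne : (Z : Set Y).Nonempty := Set.nonempty_iff_ne_empty.2 hZ
  obtain ⟨z, hz⟩ := hZne
  have hfin : (irreducibleComponents ↥(Z : Set Y)).Finite :=
    NoetherianSpace.finite_irreducibleComponents
  have C0mem := irreducibleComponent_mem_irreducibleComponents (⟨z, hz⟩ : ↥(Z : Set Y))
  set C0 := irreducibleComponent (⟨z, hz⟩ : ↥(Z : Set Y)) with hC0
  have hval : Topology.IsClosedEmbedding ((↑) : ↥(Z : Set Y) → Y) :=
    Z.2.isClosedEmbedding_subtypeVal
  set C : Set Y := (↑) '' C0 with hCdef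
  have hCirr : IsIrreducible C :=
    C0mem.1.image _ continuous_subtype_val.continuousOn
  have hCclosed : IsClosed C :=
    hval.isClosedMap _ (isClosed_of_mem_irreducibleComponents _ C0mem)
  set D : Set Y := (↑) '' (⋃ C' ∈ irreducibleComponents ↥(Z : Set Y) \ {C0}, C') with hDdef
  have hDclosed : IsClosed D := by
    apply hval.isClosedMap
    exact Set.Finite.isClosed_biUnion hfin.sdiff
      (fun C' hC' => isClosed_of_mem_irreducibleComponents _ hC'.1)
  have hCD : C ∪ D = (Z : Set Y) := by
    rw [← Set.image_union]
    have : C0 ∪ (⋃ C' ∈ irreducibleComponents ↥(Z : Set Y) \ {C0}, C') = Set.univ := by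
      apply Set.eq_univ_of_forall
      intro t
      by_cases ht : t ∈ C0
      · exact Or.inl ht
      · refine Or.inr (Set.mem_biUnion ⟨irreducibleComponent_mem_irreducibleComponents t, ?_⟩
          (mem_irreducibleComponent))
        intro he
        exact ht (he ▸ mem_irreducibleComponent)
      
    rw [this, Set.image_univ, Subtype.range_coe]
  set η : Y := hCirr.genericPoint with hηdef
  have hη : IsGenericPoint η C := hCirr.isGenericPoint_genericPoint hCclosed
  have hηC : η ∈ C := hη.mem
  have hηZ : η ∈ (Z : Set Y) := hCD ▸ Or.inl hηC
  have hηD : η ∉ D := by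
    rintro ⟨t, ht, hteq⟩
    simp only [Set.mem_iUnion] at ht
    obtain ⟨C', hC', htC'⟩ := ht
    have hCsub : C ⊆ (↑) '' C' := by
      rw [← hη.def]
      apply closure_minimal ?_ (hval.isClosedMap _
        (isClosed_of_mem_irreducibleComponents _ hC'.1))
      rintro u rfl
      exact ⟨t, htC', hteq⟩
    have hsub : C0 ⊆ C' := by
      intro u hu
      obtain ⟨v, hv, hveq⟩ := hCsub ⟨u, hu, rfl⟩
      exact Subtype.val_injective hveq ▸ hv
    have : C' = C0 := le_antisymm (C0mem.2 hC'.1.1 hsub) hsub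
    exact hC'.2 this
  -- choose an affine open neighbourhood `U` of `η`
  obtain ⟨_, ⟨U, hU, rfl⟩, hηU, -⟩ := Y.isBasis_affineOpens.exists_subset_of_mem_open
      (Set.mem_univ η) isOpen_univ
  replace hU : IsAffineOpen U := hU
  have hRnoeth : IsNoetherianRing ↥Γ(Y, U) := hYln.component_noetherian ⟨U, hU⟩
  set p := hU.primeIdealOf ⟨η, hηU⟩ with hp
  have hpη : hU.fromSpec.base p = η := hU.fromSpec_primeIdealOf ⟨η, hηU⟩
  haveI : p.asIdeal.IsPrime := p.2
  set T : Scheme := Spec (CommRingCat.of (↥Γ(Y, U) ⧸ p.asIdeal)) with hT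
  set cl : T ⟶ Spec Γ(Y, U) := Spec.map (CommRingCat.ofHom (Ideal.Quotient.mk p.asIdeal))
    with hcl
  haveI : IsClosedImmersion cl := IsClosedImmersion.spec_of_quotient_mk _
  haveI : IsDomain ↥(CommRingCat.of (↥Γ(Y, U) ⧸ p.asIdeal)) :=
    inferInstanceAs (IsDomain (↥Γ(Y, U) ⧸ p.asIdeal))
  haveI hTint : IsIntegral T := inferInstance
  have hker : RingHom.ker (Ideal.Quotient.mk p.asIdeal) = p.asIdeal :=
    Ideal.mk_ker
  have hclrange : Set.range cl.base = PrimeSpectrum.zeroLocus (p.asIdeal : Set ↥Γ(Y, U)) := by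
    rw [hcl, Spec.map_base]
    exact (range_comap_of_surjective _
      (Ideal.Quotient.mk p.asIdeal) Ideal.Quotient.mk_surjective).trans
      (by rw [hker])
  set gp : T := genericPoint T with hgpdef
  have hclemb : Topology.IsClosedEmbedding cl.base := cl.isClosedEmbedding
  have hgp : cl.base gp = p := by
    have h0 : cl.base '' closure {gp} = closure (cl.base '' {gp}) ∩ Set.range cl.base :=
      image_closure_of_embedding hclemb.isEmbedding {gp}
    have hgpu : closure ({gp} : Set T) = Set.univ := (genericPoint_spec T).def
    rw [hgpu, Set.image_univ, Set.image_singleton] at h0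
    have hsub : closure ({cl.base gp} : Set (Spec Γ(Y, U))) ⊆ Set.range cl.base :=
      closure_minimal (Set.singleton_subset_iff.2 ⟨gp, rfl⟩) hclemb.isClosed_range
    have h1 : IsGenericPoint (cl.base gp) (PrimeSpectrum.zeroLocus (p.asIdeal : Set ↥Γ(Y, U))) := by
      exact (le_antisymm hsub (h0.le.trans Set.inter_subset_left)).trans hclrange
    have h2 : IsGenericPoint p (PrimeSpectrum.zeroLocus (p.asIdeal : Set ↥Γ(Y, U))) := by
      rw [isGenericPoint_def, PrimeSpectrum.closure_singleton]
    exact h1.eq h2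
  -- apply surjectivity on `L`-points at the function field of `T`
  letI : Field ↥(T.presheaf.stalk gp) := inferInstanceAs (Field ↥T.functionField)
  set y0 : Spec (T.presheaf.stalk gp) ⟶ Y := T.fromSpecStalk gp ≫ cl ≫ hU.fromSpec with hy0
  obtain ⟨x₀, hx₀⟩ := hsurj ↥(T.presheaf.stalk gp) (Spec.preimage (y0 ≫ sY)).hom y0
    (by rw [CommRingCat.ofHom_hom, Spec.map_preimage])
  -- spread out the lift `x₀` to an open neighbourhood `U₀` of `gp` in `T`
  have hx₀S : x₀ ≫ sX = T.fromSpecStalk gp ≫ (cl ≫ hU.fromSpec ≫ sY) := by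
    rw [← hover, ← Category.assoc, hx₀, hy0]
    simp [Category.assoc]
  obtain ⟨U₀, hgpU₀, f, hf, -⟩ := spread_out_of_isGermInjective'
    (sX := cl ≫ hU.fromSpec ≫ sY) (sY := sX) (x := gp) x₀ hx₀S
  -- `f ≫ γ` agrees with the inclusion near `gp`
  haveI : U₀.toScheme.IsGermInjectiveAt (⟨gp, hgpU₀⟩ : U₀.toScheme) :=
    (isGermInjectiveAt_iff_of_isOpenImmersion (f := U₀.ι) (x := ⟨gp, hgpU₀⟩)).mp
      (by exact inferInstance)
  have key : U₀.toScheme.fromSpecStalk ⟨gp, hgpU₀⟩ ≫ (f ≫ γ)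
      = U₀.toScheme.fromSpecStalk ⟨gp, hgpU₀⟩ ≫ (U₀.ι ≫ cl ≫ hU.fromSpec) := by
    have h1 : U₀.fromSpecStalkOfMem gp hgpU₀ ≫ (f ≫ γ)
        = U₀.fromSpecStalkOfMem gp hgpU₀ ≫ (U₀.ι ≫ cl ≫ hU.fromSpec) := by
      rw [← Category.assoc, ← hf, hx₀, hy0, Scheme.Opens.fromSpecStalkOfMem_ι_assoc]
    haveI : IsIso (U₀.ι.stalkMap ⟨gp, hgpU₀⟩) :=
      (IsOpenImmersion.iff_isIso_stalkMap.mp inferInstance).2 _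
    have h2 : U₀.fromSpecStalkOfMem gp hgpU₀
        = Spec.map (inv (U₀.ι.stalkMap ⟨gp, hgpU₀⟩)) ≫ U₀.toScheme.fromSpecStalk ⟨gp, hgpU₀⟩ :=
      rfl
    rw [h2] at h1
    replace h1 := (Category.assoc _ _ _).symm.trans (h1.trans (Category.assoc _ _ _))
    exact (cancel_epi (Spec.map (inv (U₀.ι.stalkMap ⟨gp, hgpU₀⟩)))).mp h1
  obtain ⟨V, hgpV, hVeq⟩ := spread_out_unique_of_isGermInjective'
    (f ≫ γ) (U₀.ι ≫ cl ≫ hU.fromSpec) key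
  -- the stratum: shrink `V` away from the other components `D`
  set OD : Y.Opens := ⟨Dᶜ, hDclosed.isOpen_compl⟩ with hOD
  set V' : (U₀.toScheme).Opens := V ⊓ ((U₀.ι ≫ cl ≫ hU.fromSpec) ⁻¹ᵁ OD) with hV'
  set ιa : V'.toScheme ⟶ Y := V'.ι ≫ U₀.ι ≫ cl ≫ hU.fromSpec with hιa
  haveI hιaimm : IsImmersion ιa := by
    rw [hιa]
    infer_instance
  have hsec : (V'.ι ≫ f) ≫ γ = ιa := by
    have h3 : V'.ι = U₀.toScheme.homOfLE (inf_le_left : V' ≤ V) ≫ V.ι :=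
      (Scheme.homOfLE_ι _ _).symm
    rw [hιa, h3]
    simp only [Category.assoc]
    rw [hVeq]
  -- compute the range of `ιa`
  have hAopen : IsOpen (Set.range (V'.ι ≫ U₀.ι).base) :=
    (V'.ι ≫ U₀.ι).isOpenEmbedding.isOpen_range
  obtain ⟨O₁, hO₁, hAeq⟩ := hclemb.isInducing.isOpen_iff.mp hAopen
  have hjemb := hU.fromSpec.isOpenEmbedding
  have hZL : hU.fromSpec.base '' PrimeSpectrum.zeroLocus (p.asIdeal : Set ↥Γ(Y, U)) = C ∩ ↑U := by
    have := image_closure_of_embedding hjemb.isEmbedding ({p} : Set (Spec Γ(Y, U)))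
    erw [Set.image_singleton] at this
    rw [hpη, hη.def, hU.range_fromSpec] at this
    rw [← PrimeSpectrum.closure_singleton]
    exact this
  set O : Set Y := hU.fromSpec.base '' O₁ with hOdef
  have hOopen : IsOpen O := hjemb.isOpenMap _ hO₁
  have hOU : O ⊆ ↑U := by
    rw [← hU.range_fromSpec]
    exact Set.image_subset_range _ _
  have h4 : Set.range ιa.base
      = hU.fromSpec.base '' (cl.base '' (Set.range (V'.ι ≫ U₀.ι).base)) := by
    rw [hιa]
    simp only [Scheme.Hom.comp_base, TopCat.coe_comp, Set.range_comp, Set.image_image,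
      Function.comp_apply, Set.image_comp]
  have hrange : Set.range ιa.base = C ∩ O := by
    rw [h4, ← hAeq, Set.image_preimage_eq_inter_range,
      Set.image_inter hjemb.injective,
      show hU.fromSpec.base '' Set.range cl.base = C ∩ ↑U by rw [hclrange]; exact hZL, ← hOdef]
    ext t
    constructor
    · rintro ⟨h1, h2, h3⟩
      exact ⟨h2, h1⟩
    · rintro ⟨h1, h2⟩
      exact ⟨h2, h1, hOU h2⟩
  -- the range misses `D`
  have hS₀D : Set.range ιa.base ∩ D = ∅ := by
    apply Set.eq_empty_iff_forall_notMem.mpr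
    rintro t ⟨⟨w, rfl⟩, htD⟩
    have hw : V'.ι.base w ∈ V' := by
      rw [← SetLike.mem_coe, ← Scheme.Opens.range_ι]
      exact ⟨w, rfl⟩
    exact hw.2 htD
  -- `η` belongs to the range
  have hgpV' : (⟨gp, hgpU₀⟩ : U₀.toScheme) ∈ V' := by
    refine ⟨hgpV, ?_⟩
    show (U₀.ι ≫ cl ≫ hU.fromSpec).base ⟨gp, hgpU₀⟩ ∈ OD
    have h5 : (U₀.ι ≫ cl ≫ hU.fromSpec).base ⟨gp, hgpU₀⟩ = η := by
      show hU.fromSpec.base (cl.base (U₀.ι.base ⟨gp, hgpU₀⟩)) = η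
      have h6 : U₀.ι.base ⟨gp, hgpU₀⟩ = gp := rfl
      rw [h6, hgp, hpη]
    rw [h5]
    exact hηD
  have hηrange : η ∈ Set.range ιa.base := by
    refine ⟨⟨⟨gp, hgpU₀⟩, hgpV'⟩, ?_⟩
    show hU.fromSpec.base (cl.base (U₀.ι.base (V'.ι.base ⟨⟨gp, hgpU₀⟩, hgpV'⟩))) = η
    have h6 : U₀.ι.base (V'.ι.base ⟨⟨gp, hgpU₀⟩, hgpV'⟩) = gp := rfl
    rw [h6, hgp, hpη]
  -- the complementary smaller closed set
  have hCZ : C ⊆ (Z : Set Y) := hCD ▸ Set.subset_union_left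
  set Z₂ : Closeds Y := ⟨(C ∩ Oᶜ) ∪ D, (hCclosed.inter hOopen.isClosed_compl).union hDclosed⟩
    with hZ₂def
  have hZ₂coe : (Z₂ : Set Y) = (Z : Set Y) \ Set.range ιa.base := by
    have hDCO : D ∩ Set.range ιa.base = ∅ := by
      rw [Set.inter_comm]
      exact hS₀D
    rw [← hCD]
    show (C ∩ Oᶜ) ∪ D = (C ∪ D) \ Set.range ιa.base
    ext t
    simp only [Set.mem_union, Set.mem_inter_iff, Set.mem_compl_iff, Set.mem_diff]
    constructor
    · rintro (⟨h1, h2⟩ | h1)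
      · exact ⟨Or.inl h1, fun hh => h2 (hrange ▸ hh).2⟩
      · exact ⟨Or.inr h1, fun hh => Set.eq_empty_iff_forall_notMem.mp hDCO t ⟨h1, hh⟩⟩
    · rintro ⟨h1 | h1, h2⟩
      · exact Or.inl ⟨h1, fun h3 => h2 (hrange ▸ ⟨h1, h3⟩)⟩
      · exact Or.inr h1
  have hlt : Z₂ < Z := by
    apply lt_of_le_of_ne
    · rw [← SetLike.coe_subset_coe, hZ₂coe]
      exact fun t ht => ht.1
    · intro hcontra
      have h7 : η ∈ (Z₂ : Set Y) := by rw [hcontra]; exact hηZ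
      rw [hZ₂coe] at h7
      exact h7.2 hηrange
  obtain ⟨N, W, ι, himm, hdisj, hcover, hsect⟩ := IH Z₂ hlt
  have hZ₂disj : ∀ i : Fin N, Set.range (ι i).base ∩ Set.range ιa.base = ∅ := by
    intro i
    apply Set.eq_empty_iff_forall_notMem.mpr
    rintro t ⟨h1, h2⟩
    have h8 : t ∈ (Z₂ : Set Y) := hcover ▸ Set.mem_iUnion.mpr ⟨i, h1⟩
    rw [hZ₂coe] at h8
    exact h8.2 h2
  refine ⟨N + 1, Fin.cons V'.toScheme W, Fin.cases ιa ι, ?_, ?_, ?_, ?_⟩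
  · intro a
    induction a using Fin.cases with
    | zero => exact hιaimm
    | succ i => exact himm i
  · intro a b hab
    induction a using Fin.cases with
    | zero =>
      induction b using Fin.cases with
      | zero => exact absurd rfl hab
      | succ j =>
        rw [Set.inter_comm]
        exact hZ₂disj j
    | succ i =>
      induction b using Fin.cases with
      | zero => exact hZ₂disj i
      | succ j => exact hdisj i j (fun h => hab (congrArg Fin.succ h))
  · ext t
    simp only [Set.mem_iUnion, Set.mem_univ]
    constructor
    · rintro ⟨a, ha⟩
      induction a using Fin.cases with
      | zero =>
        have : t ∈ Set.range ιa.base := ha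
        exact hCZ (hrange ▸ this).1
      | succ i =>
        have : t ∈ Set.range (ι i).base := ha
        have h8 : t ∈ (Z₂ : Set Y) := hcover ▸ Set.mem_iUnion.mpr ⟨i, this⟩
        rw [hZ₂coe] at h8
        exact h8.1
    · intro ht
      by_cases hS : t ∈ Set.range ιa.base
      · exact ⟨0, hS⟩
      · have h8 : t ∈ (Z₂ : Set Y) := by rw [hZ₂coe]; exact ⟨ht, hS⟩
        rw [← hcover] at h8
        obtain ⟨i, hi⟩ := Set.mem_iUnion.mp h8
        exact ⟨i.succ, hi⟩
  · intro a
    induction a using Fin.cases with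
    | zero => exact ⟨V'.ι ≫ f, hsec⟩
    | succ i =>
      obtain ⟨s, hs⟩ := hsect i
      exact ⟨s, hs⟩
end

section
/- Let F be a nonarchimedean local field with residue field of cardinality q, and let γ : F^n → F^n be given by an F-polynomial map with coefficients in the valuation ring O and |det Dγ| = 1 on O^n. Let μ be the Haar measure on F^n with μ(O^n) = 1. Then the pushforward γ_*(μ|_{O^n}) equals h · μ where h(y) = #{x ∈ O^n : γ(x) = y}, and if γ has at most M geometric preimages at every point, then γ_*(μ|_{O^n}) ≤ M · μ|_{γ(O^n)}. -/
open MvPolynomial MeasureTheory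
open scoped ENNReal

noncomputable section Etale
variable {F : Type*} [NormedField F] {n : ℕ}

/-- Taylor error of a polynomial map -/
def Terr (a h : Fin n → F) (p : MvPolynomial (Fin n) F) : F :=
  MvPolynomial.eval (a + h) p - MvPolynomial.eval a p
    - ∑ j, h j * MvPolynomial.eval a (MvPolynomial.pderiv j p)

theorem Terr_add (a h : Fin n → F) (p q : MvPolynomial (Fin n) F) :
    Terr a h (p + q) = Terr a h p + Terr a h q := by
  simp only [Terr, map_add, mul_add]
  rw [Finset.sum_add_distrib]
  ring

theorem Terr_zero (a h : Fin n → F) : Terr a h (0 : MvPolynomial (Fin n) F) = 0 := by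
  simp [Terr]

theorem Terr_sum {ι : Type*} (a h : Fin n → F) (s : Finset ι) (f : ι → MvPolynomial (Fin n) F) :
    Terr a h (∑ i ∈ s, f i) = ∑ i ∈ s, Terr a h (f i) := by
  classical
  induction s using Finset.induction with
  | empty => simp [Terr_zero]
  | @insert i t hit ih => rw [Finset.sum_insert hit, Finset.sum_insert hit, Terr_add, ih]


variable (hna : ∀ x y : F, ‖x + y‖ ≤ max ‖x‖ ‖y‖)
include hna


theorem na_sum {ι : Type*} (s : Finset ι) (f : ι → F) (C : ℝ) (hC : 0 ≤ C)
    (h : ∀ i ∈ s, ‖f i‖ ≤ C) : ‖∑ i ∈ s, f i‖ ≤ C := by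
  classical
  induction s using Finset.induction with
  | empty => simpa using hC
  | @insert a t hat ih =>
    rw [Finset.sum_insert hat]
    refine (hna _ _).trans (max_le (h a (Finset.mem_insert_self a t)) ?_)
    exact ih fun i hi => h i (Finset.mem_insert_of_mem hi)

theorem na_nat (k : ℕ) : ‖(k : F)‖ ≤ 1 := by
  induction k with
  | zero => simp
  | succ m ih =>
    push_cast
    exact (hna _ _).trans (max_le ih (by simp))

theorem na_sub (x y : F) : ‖x - y‖ ≤ max ‖x‖ ‖y‖ := by
  rw [sub_eq_add_neg]
  simpa using hna x (-y)

/-- norm bound for evaluation of an integral polynomial at integral points -/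
theorem na_eval_le {n : ℕ} (p : MvPolynomial (Fin n) F)
    (hc : ∀ m, ‖p.coeff m‖ ≤ 1) (x : Fin n → F) (hx : ∀ i, ‖x i‖ ≤ 1) :
    ‖MvPolynomial.eval x p‖ ≤ 1 := by
  rw [MvPolynomial.eval_eq']
  refine na_sum hna _ _ 1 zero_le_one fun d hd => ?_
  rw [norm_mul]
  calc ‖coeff d p‖ * ‖∏ i, x i ^ d i‖ ≤ 1 * 1 := by
        refine mul_le_mul (hc d) ?_ (norm_nonneg _) zero_le_one
        rw [norm_prod]
        refine Finset.prod_le_one (fun i _ => norm_nonneg _) fun i _ => ?_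
        rw [norm_pow]
        exact pow_le_one₀ (norm_nonneg _) (hx i)
    _ = 1 := by ring

/-- norm bound for evaluation of the derivative of an integral polynomial -/
theorem na_eval_pderiv_le {n : ℕ} (p : MvPolynomial (Fin n) F)
    (hc : ∀ m, ‖p.coeff m‖ ≤ 1) (j : Fin n) (x : Fin n → F) (hx : ∀ i, ‖x i‖ ≤ 1) :
    ‖MvPolynomial.eval x (MvPolynomial.pderiv j p)‖ ≤ 1 := by
  classical
  conv_lhs => rw [p.as_sum]
  rw [map_sum, map_sum]
  refine na_sum hna _ _ 1 zero_le_one fun m _ => ?_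
  rw [MvPolynomial.pderiv_monomial, MvPolynomial.eval_monomial]
  rw [norm_mul, norm_mul]
  have h1 : ‖coeff m p‖ * ‖((m j : F))‖ ≤ 1 :=
    mul_le_one₀ (hc m) (norm_nonneg _) (na_nat hna _)
  refine mul_le_one₀ h1 (norm_nonneg _) ?_
  rw [Finsupp.prod]
  rw [norm_prod]
  refine Finset.prod_le_one (fun i _ => norm_nonneg _) fun i _ => ?_
  rw [norm_pow]
  exact pow_le_one₀ (norm_nonneg _) (hx i)


theorem taylor_monomial (a h : Fin n → F) (ha : ∀ i, ‖a i‖ ≤ 1)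
    (r : ℝ) (hr0 : 0 ≤ r) (hr1 : r ≤ 1) (hh : ∀ i, ‖h i‖ ≤ r) :
    ∀ (d : ℕ) (m : Fin n →₀ ℕ), (∑ j, m j) ≤ d → ∀ c : F, ‖c‖ ≤ 1 →
      ‖Terr a h (MvPolynomial.monomial m c)‖ ≤ r ^ 2 := by
  classical
  intro d
  induction d with
  | zero =>
    intro m hm c hc
    have hm0 : m = 0 := by
      ext j
      have h1 : m j ≤ ∑ x : Fin n, m x :=
        Finset.single_le_sum (fun k _ => Nat.zero_le _) (Finset.mem_univ j)
      simp only [Finsupp.coe_zero, Pi.zero_apply]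
      omega
    subst hm0
    have hTz : Terr a h (MvPolynomial.monomial (0 : Fin n →₀ ℕ) c) = 0 := by
      simp [Terr, MvPolynomial.eval_monomial, MvPolynomial.pderiv_monomial]
    rw [hTz]
    simpa using by positivity
  | succ d ih =>
    intro m hm c hc
    by_cases hm0 : m = 0
    · subst hm0
      have hTz : Terr a h (MvPolynomial.monomial (0 : Fin n →₀ ℕ) c) = 0 := by
        simp [Terr, MvPolynomial.eval_monomial, MvPolynomial.pderiv_monomial]
      rw [hTz]
      simpa using by positivity
    · -- pick i with m i ≠ 0
      obtain ⟨i, hi⟩ : ∃ i, m i ≠ 0 := by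
        by_contra hcon
        push_neg at hcon
        exact hm0 (Finsupp.ext fun j => hcon j)
      set m' : Fin n →₀ ℕ := m - Finsupp.single i 1 with hm'def
      have hm'i : m' i + 1 = m i := by
        simp [hm'def, Finsupp.tsub_apply, Finsupp.single_apply]
        omega
      have hm'j : ∀ j, j ≠ i → m' j = m j := by
        intro j hj
        simp [hm'def, Finsupp.tsub_apply, Finsupp.single_apply, Ne.symm hj]
      have hmrec : m' + Finsupp.single i 1 = m := by
        ext j
        by_cases hj : j = i
        · subst hj; simpa using hm'i
        · simp [Finsupp.single_apply, Ne.symm hj, hm'j j hj]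
      have hdeg : (∑ j, m' j) ≤ d := by
        have h1 : m' i + ∑ j ∈ Finset.univ.erase i, m' j = ∑ j, m' j :=
          Finset.add_sum_erase _ _ (Finset.mem_univ i)
        have h2 : m i + ∑ j ∈ Finset.univ.erase i, m j = ∑ j, m j :=
          Finset.add_sum_erase _ _ (Finset.mem_univ i)
        have h3 : ∑ j ∈ Finset.univ.erase i, m' j = ∑ j ∈ Finset.univ.erase i, m j :=
          Finset.sum_congr rfl fun j hj => hm'j j (Finset.ne_of_mem_erase hj)
        omega
      -- p := monomial m' c,  monomial m c = p * X i
      set p : MvPolynomial (Fin n) F := MvPolynomial.monomial m' c with hpdef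
      have hsplit : MvPolynomial.monomial m c = p * MvPolynomial.X i := by
        rw [hpdef]
        rw [show (MvPolynomial.X i : MvPolynomial (Fin n) F)
            = MvPolynomial.monomial (Finsupp.single i 1) 1 from rfl]
        rw [MvPolynomial.monomial_mul, mul_one, hmrec]
      have hpc : ∀ mm, ‖p.coeff mm‖ ≤ 1 := by
        intro mm
        rw [hpdef, MvPolynomial.coeff_monomial]
        split <;> simp [hc, norm_nonneg]
      -- abbreviations
      set P' : F := MvPolynomial.eval (a + h) p with hP'
      set P : F := MvPolynomial.eval a p with hP
      set L : F := ∑ j, h j * MvPolynomial.eval a (MvPolynomial.pderiv j p) with hL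
      have hEp : ‖P' - P - L‖ ≤ r ^ 2 := ih m' hdeg c hc
      have hLle : ‖L‖ ≤ r := by
        rw [hL]
        refine na_sum hna _ _ r hr0 fun j _ => ?_
        rw [norm_mul]
        calc ‖h j‖ * ‖MvPolynomial.eval a (MvPolynomial.pderiv j p)‖ ≤ r * 1 :=
              mul_le_mul (hh j) (na_eval_pderiv_le hna p hpc j a ha) (norm_nonneg _) hr0
          _ = r := mul_one r
      have hPP' : ‖P' - P‖ ≤ r := by
        have : P' - P = (P' - P - L) + L := by ring
        rw [this]
        refine (hna _ _).trans (max_le ?_ hLle)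
        calc ‖P' - P - L‖ ≤ r ^ 2 := hEp
          _ ≤ r := by nlinarith
      -- compute Terr of p * X i
      have hcompute : Terr a h (p * MvPolynomial.X i)
          = a i * (P' - P - L) + h i * (P' - P) := by
        simp only [Terr, MvPolynomial.eval_mul, MvPolynomial.eval_X, Pi.add_apply]
        have hd : ∀ j, MvPolynomial.eval a (MvPolynomial.pderiv j (p * MvPolynomial.X i))
            = MvPolynomial.eval a (MvPolynomial.pderiv j p) * a i
              + P * (if i = j then 1 else 0) := by
          intro j
          rw [MvPolynomial.pderiv_mul, map_add, MvPolynomial.eval_mul, MvPolynomial.eval_X,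
            MvPolynomial.pderiv_X, MvPolynomial.eval_mul]
          congr 1
          rw [Pi.single_apply]
          split <;> simp [hP]
        have hsum : ∑ j, h j * MvPolynomial.eval a (MvPolynomial.pderiv j (p * MvPolynomial.X i))
            = L * a i + h i * P := by
          rw [Finset.sum_congr rfl fun j _ => by rw [hd j]]
          have : ∀ j : Fin n, h j * (MvPolynomial.eval a (MvPolynomial.pderiv j p) * a i
              + P * (if i = j then 1 else 0))
              = h j * MvPolynomial.eval a (MvPolynomial.pderiv j p) * a i
                + (if i = j then h j * P else 0) := by
            intro j
            by_cases hij : i = j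
            · simp [hij]; ring
            · simp [hij]; ring
          rw [Finset.sum_congr rfl fun j _ => this j, Finset.sum_add_distrib,
            Finset.sum_ite_eq]
          simp [hL, Finset.sum_mul]
        rw [hsum]
        rw [← hP', ← hP]
        ring
      rw [hsplit, hcompute]
      refine (hna _ _).trans (max_le ?_ ?_)
      · rw [norm_mul]
        calc ‖a i‖ * ‖P' - P - L‖ ≤ 1 * (r ^ 2) :=
            mul_le_mul (ha i) hEp (norm_nonneg _) zero_le_one
          _ = r ^ 2 := one_mul _
      · rw [norm_mul]
        calc ‖h i‖ * ‖P' - P‖ ≤ r * r :=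
            mul_le_mul (hh i) hPP' (norm_nonneg _) hr0
          _ = r ^ 2 := by ring

theorem taylor_bound (p : MvPolynomial (Fin n) F) (hc : ∀ m, ‖p.coeff m‖ ≤ 1)
    (a h : Fin n → F) (ha : ∀ i, ‖a i‖ ≤ 1)
    (r : ℝ) (hr0 : 0 ≤ r) (hr1 : r ≤ 1) (hh : ∀ i, ‖h i‖ ≤ r) :
    ‖MvPolynomial.eval (a + h) p - MvPolynomial.eval a p
      - ∑ j, h j * MvPolynomial.eval a (MvPolynomial.pderiv j p)‖ ≤ r ^ 2 := by
  classical
  have : Terr a h p = ∑ m ∈ p.support, Terr a h (MvPolynomial.monomial m (p.coeff m)) := by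
    conv_lhs => rw [p.as_sum]
    exact Terr_sum a h _ _
  show ‖Terr a h p‖ ≤ r ^ 2
  rw [this]
  refine na_sum hna _ _ (r ^ 2) (by positivity) fun m _ => ?_
  exact taylor_monomial hna a h ha r hr0 hr1 hh (∑ j, m j) m le_rfl _ (hc m)



omit hna in
theorem zunits_smul_norm (u : ℤˣ) (x : F) : ‖u • x‖ = ‖x‖ := by
  rcases Int.units_eq_one_or u with h | h <;> subst h <;>
    simp [Units.smul_def, zsmul_eq_mul]

theorem mat_det_le (A : Matrix (Fin n) (Fin n) F) (hA : ∀ i j, ‖A i j‖ ≤ 1) :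
    ‖A.det‖ ≤ 1 := by
  rw [Matrix.det_apply]
  refine na_sum hna _ _ 1 zero_le_one fun σ _ => ?_
  rw [zunits_smul_norm, norm_prod]
  exact Finset.prod_le_one (fun i _ => norm_nonneg _) fun i _ => hA _ _

theorem mat_adj_le (A : Matrix (Fin n) (Fin n) F) (hA : ∀ i j, ‖A i j‖ ≤ 1) :
    ∀ i j, ‖A.adjugate i j‖ ≤ 1 := by
  intro i j
  rw [Matrix.adjugate_apply]
  refine mat_det_le hna _ fun i' j' => ?_
  rw [Matrix.updateRow_apply]
  split
  · rw [Pi.single_apply]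
    split <;> simp
  · exact hA _ _

theorem mulVec_le (A : Matrix (Fin n) (Fin n) F) (hA : ∀ i j, ‖A i j‖ ≤ 1)
    (v : Fin n → F) (t : ℝ) (ht : 0 ≤ t) (hv : ∀ j, ‖v j‖ ≤ t) :
    ∀ i, ‖A.mulVec v i‖ ≤ t := by
  intro i
  show ‖∑ j, A i j * v j‖ ≤ t
  refine na_sum hna _ _ t ht fun j _ => ?_
  rw [norm_mul]
  calc ‖A i j‖ * ‖v j‖ ≤ 1 * t := mul_le_mul (hA i j) (hv j) (norm_nonneg _) zero_le_one
    _ = t := one_mul t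

theorem mulVec_ge (A : Matrix (Fin n) (Fin n) F) (hA : ∀ i j, ‖A i j‖ ≤ 1)
    (hdet : ‖A.det‖ = 1) (v : Fin n → F) (t : ℝ) (ht : 0 ≤ t)
    (hAv : ∀ i, ‖A.mulVec v i‖ ≤ t) : ∀ j, ‖v j‖ ≤ t := by
  intro j
  have key : A.adjugate.mulVec (A.mulVec v) = A.det • v := by
    rw [Matrix.mulVec_mulVec, Matrix.adjugate_mul, Matrix.smul_mulVec,
      Matrix.one_mulVec]
  have h1 : ‖(A.adjugate.mulVec (A.mulVec v)) j‖ ≤ t :=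
    mulVec_le hna _ (mat_adj_le hna A hA) _ t ht hAv j
  rw [key] at h1
  have h1' : ‖A.det • v j‖ ≤ t := h1
  rw [smul_eq_mul, norm_mul, hdet, one_mul] at h1'
  exact h1'


/-- the polynomial map attached to a family of polynomials -/
def polyMap (γ : Fin n → MvPolynomial (Fin n) F) : (Fin n → F) → Fin n → F :=
  fun x i => MvPolynomial.eval x (γ i)

omit hna in
theorem continuous_mvpoly_eval (p : MvPolynomial (Fin n) F) :
    Continuous fun x : Fin n → F => MvPolynomial.eval x p := by
  induction p using MvPolynomial.induction_on with
  | C c => simpa using continuous_const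
  | add p q hp hq => simp only [map_add]; exact hp.add hq
  | mul_X p i hp =>
    simp only [map_mul, MvPolynomial.eval_X]
    exact hp.mul (continuous_apply i)

omit hna in
theorem continuous_polyMap (γ : Fin n → MvPolynomial (Fin n) F) :
    Continuous (polyMap γ) :=
  continuous_pi fun i => continuous_mvpoly_eval (γ i)

section Gamma
variable (γ : Fin n → MvPolynomial (Fin n) F)
  (hcoeff : ∀ i, ∀ m : Fin n →₀ ℕ, ‖(γ i).coeff m‖ ≤ 1)
include hcoeff

/-- Taylor, vector form : `γ(x) - γ(a) - Dγ(a)(x-a)` is quadratically small -/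
theorem taylor_vec (a x : Fin n → F) (ha : ∀ i, ‖a i‖ ≤ 1)
    (u : ℝ) (hu0 : 0 ≤ u) (hu1 : u ≤ 1) (hx : ∀ i, ‖x i - a i‖ ≤ u) (i : Fin n) :
    ‖polyMap γ x i - polyMap γ a i
      - (Matrix.of fun i j => MvPolynomial.eval a (MvPolynomial.pderiv j (γ i))).mulVec
          (x - a) i‖ ≤ u ^ 2 := by
  have hmv : (Matrix.of fun i j =>
        MvPolynomial.eval a (MvPolynomial.pderiv j (γ i))).mulVec (x - a) i
      = ∑ j, (x - a) j * MvPolynomial.eval a (MvPolynomial.pderiv j (γ i)) := by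
    have : (Matrix.of fun i j =>
          MvPolynomial.eval a (MvPolynomial.pderiv j (γ i))).mulVec (x - a) i
        = ∑ j, (Matrix.of fun i j =>
            MvPolynomial.eval a (MvPolynomial.pderiv j (γ i))) i j * (x - a) j := rfl
    rw [this]
    exact Finset.sum_congr rfl fun j _ => by rw [Matrix.of_apply]; ring
  rw [hmv]
  have hxa : x = a + (x - a) := by ring
  have := taylor_bound hna (γ i) (hcoeff i) a (x - a) ha u hu0 hu1
    (fun j => by simpa using hx j)
  rw [← hxa] at this
  exact this

/-- the image of a small ball is contained in the corresponding ball -/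
theorem gmap_ball_subset (a x : Fin n → F) (ha : ∀ i, ‖a i‖ ≤ 1)
    (u : ℝ) (hu0 : 0 ≤ u) (hu1 : u ≤ 1) (hx : ∀ i, ‖x i - a i‖ ≤ u) (i : Fin n) :
    ‖polyMap γ x i - polyMap γ a i‖ ≤ u := by
  have hT := taylor_vec hna γ hcoeff a x ha u hu0 hu1 hx i
  have hW : ‖(Matrix.of fun i j =>
      MvPolynomial.eval a (MvPolynomial.pderiv j (γ i))).mulVec (x - a) i‖ ≤ u := by
    refine mulVec_le hna _ (fun i j => na_eval_pderiv_le hna _ (hcoeff i) j a ha) _ u hu0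
      (fun j => by simpa using hx j) i
  have : polyMap γ x i - polyMap γ a i
      = (polyMap γ x i - polyMap γ a i
          - (Matrix.of fun i j =>
              MvPolynomial.eval a (MvPolynomial.pderiv j (γ i))).mulVec (x - a) i)
        + (Matrix.of fun i j =>
            MvPolynomial.eval a (MvPolynomial.pderiv j (γ i))).mulVec (x - a) i := by
    ring
  rw [this]
  exact (hna _ _).trans (max_le (hT.trans (by nlinarith)) hW)

variable (hJ : ∀ x : Fin n → F, (∀ i, ‖x i‖ ≤ 1) →
      ‖(Matrix.of fun i j => MvPolynomial.eval x (MvPolynomial.pderiv j (γ i))).det‖ = 1)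
include hJ

/-- expansion bound : `γ` does not contract distances below u inside the unit polydisc -/
theorem gmap_expansion (x x' : Fin n → F) (hx : ∀ i, ‖x i‖ ≤ 1)
    (u : ℝ) (hu0 : 0 ≤ u) (hu1 : u < 1) (hxx' : ∀ i, ‖x' i - x i‖ ≤ u)
    (v : ℝ) (hv : 0 ≤ v) (hgv : ∀ i, ‖polyMap γ x' i - polyMap γ x i‖ ≤ v) :
    ∀ i, ‖x' i - x i‖ ≤ v := by
  rcases Nat.eq_zero_or_pos n with hn | hn
  · intro i; exact absurd (i.2) (by omega)
  have : Nonempty (Fin n) := ⟨⟨0, hn⟩⟩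
  set t : ℝ := Finset.univ.sup' (Finset.univ_nonempty) (fun i => ‖x' i - x i‖) with ht
  have htle : ∀ i, ‖x' i - x i‖ ≤ t := fun i =>
    Finset.le_sup' (f := fun i => ‖x' i - x i‖) (Finset.mem_univ i)
  have htu : t ≤ u := Finset.sup'_le _ _ fun i _ => hxx' i
  obtain ⟨i₀, -, hi₀⟩ := Finset.exists_mem_eq_sup' (Finset.univ_nonempty)
    (fun i => ‖x' i - x i‖)
  have ht0 : 0 ≤ t := (norm_nonneg (x' i₀ - x i₀)).trans (htle i₀)
  rcases eq_or_lt_of_le ht0 with ht0' | ht0'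
  · intro i
    have : ‖x' i - x i‖ ≤ 0 := le_trans (htle i) ht0'.symm.le
    exact le_trans this hv
  -- t > 0
  set A : Matrix (Fin n) (Fin n) F :=
    Matrix.of fun i j => MvPolynomial.eval x (MvPolynomial.pderiv j (γ i)) with hA
  have hAent : ∀ i j, ‖A i j‖ ≤ 1 := fun i j => na_eval_pderiv_le hna _ (hcoeff i) j x hx
  have hAdet : ‖A.det‖ = 1 := hJ x hx
  have hW : ∀ i, ‖A.mulVec (x' - x) i‖ ≤ max v (t ^ 2) := by
    intro i
    have hT := taylor_vec hna γ hcoeff x x' hx t ht0 (le_trans htu hu1.le) htle i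
    have : A.mulVec (x' - x) i
        = (polyMap γ x' i - polyMap γ x i)
          - (polyMap γ x' i - polyMap γ x i - A.mulVec (x' - x) i) := by ring
    rw [this]
    refine (na_sub hna _ _).trans (max_le ?_ ?_)
    · exact le_trans (hgv i) (le_max_left _ _)
    · exact le_trans hT (le_max_right _ _)
  have hback : ∀ j, ‖(x' - x) j‖ ≤ max v (t ^ 2) :=
    mulVec_ge hna A hAent hAdet _ _ (le_max_of_le_left hv) hW
  rcases le_total (t ^ 2) v with hc | hc
  · intro i
    have := hback i
    rw [max_eq_left hc] at this
    simpa using this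
  · exfalso
    have := hback i₀
    rw [max_eq_right hc] at this
    simp only [Pi.sub_apply] at this
    rw [← hi₀] at this
    nlinarith [lt_of_le_of_lt htu hu1]

end Gamma


section Newton
variable [CompleteSpace F]
variable (γ : Fin n → MvPolynomial (Fin n) F)
  (hcoeff : ∀ i, ∀ m : Fin n →₀ ℕ, ‖(γ i).coeff m‖ ≤ 1)
  (hJ : ∀ x : Fin n → F, (∀ i, ‖x i‖ ≤ 1) →
      ‖(Matrix.of fun i j => MvPolynomial.eval x (MvPolynomial.pderiv j (γ i))).det‖ = 1)
include hcoeff hJ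

/-- Newton iteration : every point of a small ball around `γ(a)` has a preimage. -/
theorem gmap_surj (a : Fin n → F) (ha : ∀ i, ‖a i‖ ≤ 1)
    (u : ℝ) (hu0 : 0 ≤ u) (hu1 : u < 1) (b : Fin n → F)
    (hb : ∀ i, ‖b i - polyMap γ a i‖ ≤ u) :
    ∃ x : Fin n → F, (∀ i, ‖x i - a i‖ ≤ u) ∧ polyMap γ x = b := by
  classical
  set J : (Fin n → F) → Matrix (Fin n) (Fin n) F :=
    fun x => Matrix.of fun i j => MvPolynomial.eval x (MvPolynomial.pderiv j (γ i)) with hJdef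
  set step : (Fin n → F) → Fin n → F :=
    fun x => x + ((J x).det⁻¹ • (J x).adjugate).mulVec (b - polyMap γ x) with hstep
  set seq : ℕ → Fin n → F := fun k => step^[k] a with hseq
  have hseq0 : seq 0 = a := rfl
  have hseqS : ∀ k, seq (k + 1) = step (seq k) := by
    intro k
    simp [hseq, Function.iterate_succ_apply']
  -- the invariant
  have main : ∀ k, (∀ i, ‖seq k i - a i‖ ≤ u) ∧ (∀ i, ‖polyMap γ (seq k) i - b i‖ ≤ u ^ (k + 1)) := by
    intro k
    induction k with
    | zero =>
      constructor
      · intro i; simpa [hseq0] using hu0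
      · intro i
        rw [hseq0, pow_one, norm_sub_rev]
        exact hb i
    | succ k ih =>
      obtain ⟨iha, ihb⟩ := ih
      have hxO : ∀ i, ‖seq k i‖ ≤ 1 := by
        intro i
        have : seq k i = (seq k i - a i) + a i := by ring
        rw [this]
        exact (hna _ _).trans (max_le ((iha i).trans hu1.le) (ha i))
      have hdet : ‖(J (seq k)).det‖ = 1 := hJ _ hxO
      have hdet0 : (J (seq k)).det ≠ 0 := by
        intro h0
        rw [h0] at hdet
        simp at hdet
      have hent : ∀ i j, ‖J (seq k) i j‖ ≤ 1 :=
        fun i j => na_eval_pderiv_le hna _ (hcoeff i) j _ hxO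
      set w : Fin n → F := b - polyMap γ (seq k) with hw
      have hwle : ∀ i, ‖w i‖ ≤ u ^ (k + 1) := by
        intro i
        rw [hw, Pi.sub_apply, norm_sub_rev]
        exact ihb i
      set hv : Fin n → F := ((J (seq k)).det⁻¹ • (J (seq k)).adjugate).mulVec w with hhv
      have hBent : ∀ i j, ‖((J (seq k)).det⁻¹ • (J (seq k)).adjugate) i j‖ ≤ 1 := by
        intro i j
        have : ((J (seq k)).det⁻¹ • (J (seq k)).adjugate) i j
            = (J (seq k)).det⁻¹ * (J (seq k)).adjugate i j := rfl
        rw [this, norm_mul, norm_inv, hdet, inv_one, one_mul]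
        exact mat_adj_le hna _ hent i j
      have hvle : ∀ i, ‖hv i‖ ≤ u ^ (k + 1) :=
        mulVec_le hna _ hBent w _ (by positivity) hwle
      have hsolve : (J (seq k)).mulVec hv = w := by
        rw [hhv, Matrix.mulVec_mulVec]
        have : J (seq k) * ((J (seq k)).det⁻¹ • (J (seq k)).adjugate) = 1 := by
          rw [Matrix.mul_smul, Matrix.mul_adjugate, smul_smul,
            inv_mul_cancel₀ hdet0, one_smul]
        rw [this, Matrix.one_mulVec]
      have hseqk1 : seq (k + 1) = seq k + hv := by rw [hseqS k]
      have hpow_le : u ^ (k + 1) ≤ u := by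
        calc u ^ (k + 1) ≤ u ^ 1 := pow_le_pow_of_le_one hu0 hu1.le (by omega)
          _ = u := pow_one u
      constructor
      · intro i
        have : seq (k + 1) i - a i = (seq k i - a i) + hv i := by
          rw [hseqk1, Pi.add_apply]; ring
        rw [this]
        exact (hna _ _).trans (max_le (iha i) ((hvle i).trans hpow_le))
      · intro i
        have hT := taylor_vec hna γ hcoeff (seq k) (seq (k + 1)) hxO (u ^ (k + 1))
          (by positivity) (hpow_le.trans hu1.le)
          (fun j => by
            have : seq (k + 1) j - seq k j = hv j := by rw [hseqk1]; simp
            rw [this]; exact hvle j) i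
        have hsub : seq (k + 1) - seq k = hv := by rw [hseqk1]; simp
        rw [hsub, hsolve] at hT
        have : polyMap γ (seq (k + 1)) i - b i
            = polyMap γ (seq (k + 1)) i - polyMap γ (seq k) i - w i := by
          rw [hw, Pi.sub_apply]; ring
        rw [this]
        calc ‖_‖ ≤ (u ^ (k + 1)) ^ 2 := hT
          _ = u ^ (2 * k + 2) := by ring
          _ ≤ u ^ (k + 2) := pow_le_pow_of_le_one hu0 hu1.le (by omega)
      done
  -- step bound
  have hstepb : ∀ k, ∀ i, ‖seq (k + 1) i - seq k i‖ ≤ u ^ (k + 1) := by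
    intro k i
    obtain ⟨iha, ihb⟩ := main k
    have hxO : ∀ i, ‖seq k i‖ ≤ 1 := by
      intro i
      have : seq k i = (seq k i - a i) + a i := by ring
      rw [this]
      exact (hna _ _).trans (max_le ((iha i).trans hu1.le) (ha i))
    have hdet : ‖(J (seq k)).det‖ = 1 := hJ _ hxO
    have hent : ∀ i j, ‖J (seq k) i j‖ ≤ 1 :=
      fun i j => na_eval_pderiv_le hna _ (hcoeff i) j _ hxO
    have hBent : ∀ i j, ‖((J (seq k)).det⁻¹ • (J (seq k)).adjugate) i j‖ ≤ 1 := by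
      intro i j
      have : ((J (seq k)).det⁻¹ • (J (seq k)).adjugate) i j
          = (J (seq k)).det⁻¹ * (J (seq k)).adjugate i j := rfl
      rw [this, norm_mul, norm_inv, hdet, inv_one, one_mul]
      exact mat_adj_le hna _ hent i j
    have hwle : ∀ i, ‖(b - polyMap γ (seq k)) i‖ ≤ u ^ (k + 1) := by
      intro i
      rw [Pi.sub_apply, norm_sub_rev]
      exact ihb i
    have h1 : seq (k + 1) i - seq k i
        = ((J (seq k)).det⁻¹ • (J (seq k)).adjugate).mulVec (b - polyMap γ (seq k)) i := by
      rw [hseqS k]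
      simp [hstep]
    rw [h1]
    exact mulVec_le hna _ hBent _ _ (by positivity) hwle i
  -- Cauchy
  have hcauchy : CauchySeq seq := by
    refine cauchySeq_of_le_geometric u u hu1 fun k => ?_
    rw [dist_pi_le_iff (by positivity)]
    intro i
    rw [dist_eq_norm, norm_sub_rev]
    calc ‖seq (k + 1) i - seq k i‖ ≤ u ^ (k + 1) := hstepb k i
      _ = u * u ^ k := by ring
  obtain ⟨x, hx⟩ := cauchySeq_tendsto_of_complete hcauchy
  have hxi : ∀ i, Filter.Tendsto (fun k => seq k i) Filter.atTop (nhds (x i)) :=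
    fun i => ((continuous_apply i).tendsto _).comp hx
  refine ⟨x, fun i => ?_, ?_⟩
  · have hcont : Filter.Tendsto (fun k => ‖seq k i - a i‖) Filter.atTop
        (nhds ‖x i - a i‖) := ((hxi i).sub tendsto_const_nhds).norm
    exact le_of_tendsto hcont (Filter.Eventually.of_forall fun k => (main k).1 i)
  · have h1 : Filter.Tendsto (fun k => polyMap γ (seq k)) Filter.atTop
        (nhds (polyMap γ x)) := ((continuous_polyMap γ).tendsto _).comp hx
    have h2 : Filter.Tendsto (fun k => polyMap γ (seq k)) Filter.atTop (nhds b) := by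
      rw [tendsto_iff_dist_tendsto_zero]
      refine squeeze_zero (g := fun k : ℕ => u ^ (k + 1)) (fun k => dist_nonneg)
        (fun k => ?_) ?_
      · show dist (polyMap γ (seq k)) b ≤ u ^ (k + 1)
        rw [dist_pi_le_iff (by positivity)]
        intro i
        rw [dist_eq_norm]
        exact (main k).2 i
      · have h3 : Filter.Tendsto (fun k : ℕ => u ^ k) Filter.atTop (nhds 0) :=
          tendsto_pow_atTop_nhds_zero_of_lt_one hu0 hu1
        exact h3.comp (Filter.tendsto_add_atTop_nat 1)
    exact tendsto_nhds_unique h1 h2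
end Newton


section Vitali
variable [MeasurableSpace F] [BorelSpace F]

omit hna in
theorem unitclosed_meas : MeasurableSet {c : F | ‖c‖ ≤ 1} :=
  (isClosed_le continuous_norm continuous_const).measurableSet

omit hna in
theorem polydisc_meas {n : ℕ} : MeasurableSet {x : Fin n → F | ∀ i, ‖x i‖ ≤ 1} := by
  have : {x : Fin n → F | ∀ i, ‖x i‖ ≤ 1}
      = ⋂ i, (fun x : Fin n → F => x i) ⁻¹' {c : F | ‖c‖ ≤ 1} := by
    ext x; simp
  rw [this]
  exact MeasurableSet.iInter fun i => (measurable_pi_apply i) unitclosed_meas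

theorem norm_add_le_one (z x : F) (hz : ‖z‖ ≤ 1) : ‖z + x‖ ≤ 1 ↔ ‖x‖ ≤ 1 := by
  constructor
  · intro h
    have : x = (z + x) - z := by ring
    rw [this]
    exact (na_sub hna _ _).trans (max_le h hz)
  · intro h
    exact (hna _ _).trans (max_le hz h)

/-- Key finiteness: the unit ball of `F` is covered by finitely many balls of
any radius `s ∈ (0,1)`, given an additively-invariant normalized measure. -/
theorem coset_finite {n : ℕ} (μ : Measure (Fin (n + 1) → F))
    (hinv : ∀ (a : Fin (n + 1) → F) (s : Set (Fin (n + 1) → F)),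
      μ ((fun x => a + x) ⁻¹' s) = μ s)
    (hnorm : μ {x | ∀ i, ‖x i‖ ≤ 1} = 1)
    (s : ℝ) (hs0 : 0 < s) (hs1 : s < 1) :
    ∃ R : Finset F, (∀ d ∈ R, ‖d‖ ≤ 1) ∧
      ∀ x : F, ‖x‖ ≤ 1 → ∃ d ∈ R, ‖x - d‖ ≤ s := by
  classical
  set Bs : AddSubgroup F :=
    { carrier := {x : F | ‖x‖ ≤ s}
      zero_mem' := by simp [hs0.le]
      add_mem' := fun {x y} hx hy => (hna x y).trans (max_le hx hy)
      neg_mem' := fun {x} hx => by simpa using hx } with hBs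
  set OF : AddSubgroup F :=
    { carrier := {x : F | ‖x‖ ≤ 1}
      zero_mem' := by simp
      add_mem' := fun {x y} hx hy => (hna x y).trans (max_le hx hy)
      neg_mem' := fun {x} hx => by simpa using hx } with hOF
  set mk : F →+ F ⧸ Bs := QuotientAddGroup.mk' Bs with hmk
  set GS : Set (F ⧸ Bs) := ↑(OF.map mk) with hGS
  have hBsmem : ∀ w : F, w ∈ Bs ↔ ‖w‖ ≤ s := fun w => Iff.rfl
  have hmkeq : ∀ z x : F, mk z = mk x ↔ ‖z - x‖ ≤ s := by
    intro z x
    rw [QuotientAddGroup.mk'_eq_mk']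
    constructor
    · rintro ⟨b, hb, hzb⟩
      have : z - x = -b := by rw [← hzb]; ring
      rw [this, norm_neg]
      exact (hBsmem b).mp hb
    · intro h
      refine ⟨x - z, (hBsmem _).mpr ?_, by ring⟩
      rw [norm_sub_rev] at h
      exact h
  -- main step: GS is finite
  have hfin : GS.Finite := by
    by_contra hinf
    have hinf' : GS.Infinite := hinf
    set g : ℕ ↪ ↥GS := hinf'.natEmbedding with hg
    set H : Set (F ⧸ Bs) :=
      Set.range (fun f : ℕ →₀ ℤ => f.sum fun i z => z • ((g i : F ⧸ Bs))) with hH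
    have Hzero : (0 : F ⧸ Bs) ∈ H := ⟨0, by simp⟩
    have Hadd : ∀ x y, x ∈ H → y ∈ H → x + y ∈ H := by
      rintro x y ⟨f1, rfl⟩ ⟨f2, rfl⟩
      refine ⟨f1 + f2, ?_⟩
      show (f1 + f2).sum (fun i z => z • ((g i : F ⧸ Bs)))
        = (f1.sum fun i z => z • ((g i : F ⧸ Bs)))
          + (f2.sum fun i z => z • ((g i : F ⧸ Bs)))
      rw [Finsupp.sum_add_index' (h := fun i z => z • ((g i : F ⧸ Bs)))
        (fun a => zero_zsmul _) (fun a b1 b2 => add_zsmul _ b1 b2)]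
    have Hneg : ∀ x, x ∈ H → -x ∈ H := by
      rintro x ⟨f, rfl⟩
      refine ⟨-f, ?_⟩
      show (-f).sum (fun i z => z • ((g i : F ⧸ Bs)))
        = -(f.sum fun i z => z • ((g i : F ⧸ Bs)))
      rw [Finsupp.sum_neg_index (h := fun i z => z • ((g i : F ⧸ Bs)))
        (fun a => zero_zsmul _)]
      simp only [neg_zsmul]
      rw [Finsupp.sum, Finsupp.sum, Finset.sum_neg_distrib]
    have Hsub : ∀ x y, x ∈ H → y ∈ H → x - y ∈ H := by
      intro x y hx hy
      rw [sub_eq_add_neg]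
      exact Hadd _ _ hx (Hneg _ hy)
    have Hsingle : ∀ k : ℕ, ((g k : F ⧸ Bs)) ∈ H := by
      intro k
      refine ⟨Finsupp.single k 1, ?_⟩
      show (Finsupp.single k (1 : ℤ)).sum (fun i z => z • ((g i : F ⧸ Bs))) = _
      rw [Finsupp.sum_single_index (h := fun i z => z • ((g i : F ⧸ Bs)))
        (zero_zsmul _)]
      rw [one_zsmul]
    have Hcnt : H.Countable := Set.countable_range _
    have HsubGS : H ⊆ GS := by
      rintro x ⟨f, rfl⟩
      have : (f.sum fun i z => z • ((g i : F ⧸ Bs))) ∈ OF.map mk := by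
        refine AddSubgroup.sum_mem _ fun i _ => ?_
        exact AddSubgroup.zsmul_mem _ (g i).2 _
      exact this
    have Hinf : H.Infinite := by
      refine Set.infinite_of_injective_forall_mem
        (f := fun k : ℕ => ((g k : F ⧸ Bs))) ?_ Hsingle
      exact Subtype.val_injective.comp g.injective
    -- setoid of H-cosets on GS
    set st : Setoid ↥GS :=
      ⟨fun x y => ((x : F ⧸ Bs) - y) ∈ H,
        ⟨fun x => by simpa using Hzero,
         fun {x y} h => by simpa [neg_sub] using Hneg _ h,
         fun {x y z} h1 h2 => by
           have := Hadd _ _ h1 h2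
           simpa [sub_add_sub_cancel] using this⟩⟩ with hst
    set T : Set (F ⧸ Bs) :=
      Subtype.val '' Set.range (fun q : Quotient st => (Quotient.out q : ↥GS)) with hT
    -- the pieces
    set S : ↥H → Set (Fin (n + 1) → F) := fun h =>
      {x | (∀ i, ‖x i‖ ≤ 1) ∧ ∃ τ ∈ T, mk (x 0) = (h : F ⧸ Bs) + τ} with hS
    have hUopen : ∀ (W : Set (F ⧸ Bs)), IsOpen (⇑mk ⁻¹' W) := by
      intro W
      rw [Metric.isOpen_iff]
      intro x hx
      refine ⟨s, hs0, fun y hy => ?_⟩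
      have : mk y = mk x := by
        rw [hmkeq]
        rw [Metric.mem_ball, dist_eq_norm] at hy
        exact hy.le
      simpa [this] using hx
    have hSmeas : ∀ h, MeasurableSet (S h) := by
      intro h
      have hSrw : S h = {x : Fin (n + 1) → F | ∀ i, ‖x i‖ ≤ 1}
          ∩ (fun x : Fin (n + 1) → F => x 0) ⁻¹'
            (⇑mk ⁻¹' {w | ∃ τ ∈ T, w = (h : F ⧸ Bs) + τ}) := rfl
      rw [hSrw]
      exact polydisc_meas.inter
        ((measurable_pi_apply 0) (hUopen _).measurableSet)
    -- all pieces have the same measure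
    have hSmu : ∀ h, μ (S h) = μ (S ⟨0, Hzero⟩) := by
      intro h
      obtain ⟨z, hz1, hz2⟩ := AddSubgroup.mem_map.mp (HsubGS h.2)
      set a : Fin (n + 1) → F := fun i => if i = 0 then z else 0 with ha
      have hsplit : ∀ x : Fin (n + 1) → F,
          mk (a 0 + x 0) = (h : F ⧸ Bs) + mk (x 0) := by
        intro x
        rw [map_add]
        simp only [ha, if_pos rfl]
        rw [hz2]
      have key : (fun x => a + x) ⁻¹' (S h) = S ⟨0, Hzero⟩ := by
        ext x
        simp only [Set.mem_preimage, hS, Set.mem_setOf_eq, Pi.add_apply]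
        constructor
        · rintro ⟨hO, τ, hτT, hτ⟩
          refine ⟨fun i => ?_, τ, hτT, ?_⟩
          · by_cases h0 : i = 0
            · subst h0
              have hi := hO 0
              simp only [ha, if_pos rfl] at hi
              exact (norm_add_le_one hna z (x 0) hz1).mp hi
            · have hi := hO i
              simpa [ha, h0] using hi
          · rw [hsplit x] at hτ
            show mk (x 0) = (0 : F ⧸ Bs) + τ
            rw [zero_add]
            exact add_left_cancel hτ
        · rintro ⟨hO, τ, hτT, hτ⟩
          refine ⟨fun i => ?_, τ, hτT, ?_⟩
          · by_cases h0 : i = 0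
            · subst h0
              simp only [ha, if_pos rfl]
              exact (norm_add_le_one hna z (x 0) hz1).mpr (hO 0)
            · simpa [ha, h0] using hO i
          · rw [hsplit x]
            have hτ' : mk (x 0) = τ := by
              have hτ2 : mk (x 0) = (0 : F ⧸ Bs) + τ := hτ
              rw [zero_add] at hτ2
              exact hτ2
            rw [hτ']
      rw [← key, hinv]
    -- the pieces partition the unit polydisc
    have hcover : ⋃ h, S h = {x : Fin (n + 1) → F | ∀ i, ‖x i‖ ≤ 1} := by
      ext x
      simp only [Set.mem_iUnion, hS, Set.mem_setOf_eq]
      constructor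
      · rintro ⟨h, hO, -⟩; exact hO
      · intro hO
        have hq : mk (x 0) ∈ OF.map mk := AddSubgroup.mem_map.mpr ⟨x 0, hO 0, rfl⟩
        set qs : ↥GS := ⟨mk (x 0), hq⟩ with hqs
        set t0 : ↥GS := (Quotient.mk st qs).out with ht0
        have hrel : st.r qs t0 := Quotient.exact (Quotient.out_eq (Quotient.mk st qs)).symm
        refine ⟨⟨(qs : F ⧸ Bs) - (t0 : F ⧸ Bs), hrel⟩, hO,
          (t0 : F ⧸ Bs), ⟨t0, ⟨Quotient.mk st qs, rfl⟩, rfl⟩, ?_⟩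
        show mk (x 0) = ((qs : F ⧸ Bs) - (t0 : F ⧸ Bs)) + (t0 : F ⧸ Bs)
        rw [sub_add_cancel]
    have hdisj : Pairwise (Function.onFun Disjoint S) := by
      intro h1 h2 hne
      rw [Function.onFun, Set.disjoint_left]
      rintro x ⟨-, τ1, hτ1T, hτ1⟩ ⟨-, τ2, hτ2T, hτ2⟩
      obtain ⟨t1, ⟨q1, hq1⟩, ht1⟩ := hτ1T
      obtain ⟨t2, ⟨q2, hq2⟩, ht2⟩ := hτ2T
      have heq : (h1 : F ⧸ Bs) + τ1 = (h2 : F ⧸ Bs) + τ2 := by rw [← hτ1, ← hτ2]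
      have hsubH : τ1 - τ2 ∈ H := by
        have he2 : τ1 - τ2 = (h2 : F ⧸ Bs) - h1 := by
          rw [sub_eq_sub_iff_add_eq_add, add_comm τ1 (h1 : F ⧸ Bs)]
          exact heq
        rw [he2]
        exact Hsub _ _ h2.2 h1.2
      have hrel : st.r t1 t2 := by
        show ((t1 : F ⧸ Bs) - (t2 : F ⧸ Bs)) ∈ H
        rw [ht1, ht2]
        exact hsubH
      have hqeq : q1 = q2 := by
        have hs1 := Quotient.sound (s := st) hrel
        have e1 : Quotient.mk st t1 = q1 := by rw [← hq1]; exact Quotient.out_eq q1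
        have e2 : Quotient.mk st t2 = q2 := by rw [← hq2]; exact Quotient.out_eq q2
        rw [e1, e2] at hs1
        exact hs1
      have hteq : τ1 = τ2 := by
        rw [← ht1, ← ht2, ← hq1, ← hq2, hqeq]
      have : (h1 : F ⧸ Bs) = h2 := by
        rw [hteq] at heq
        exact add_right_cancel heq
      exact hne (Subtype.ext this)
    -- contradiction
    have : Countable ↥H := Hcnt.to_subtype
    have : Infinite ↥H := Hinf.to_subtype
    have hsum : μ (⋃ h, S h) = ∑' h, μ (S h) := measure_iUnion hdisj hSmeas
    rw [hcover, hnorm] at hsum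
    by_cases hc : μ (S ⟨0, Hzero⟩) = 0
    · rw [tsum_congr (fun h => (hSmu h).trans hc)] at hsum
      simp at hsum
    · rw [tsum_congr (fun h => hSmu h)] at hsum
      rw [ENNReal.tsum_const_eq_top_of_ne_zero hc] at hsum
      exact (by simp : (1 : ℝ≥0∞) ≠ ⊤) hsum
  -- extract the finite cover
  choose lift hlift1 hlift2 using fun (q : ↥GS) =>
    AddSubgroup.mem_map.mp (q.2 : (q : F ⧸ Bs) ∈ OF.map mk)
  have : Fintype ↥GS := hfin.fintype
  refine ⟨Finset.univ.image lift, ?_, ?_⟩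
  · intro d hd
    obtain ⟨q, -, rfl⟩ := Finset.mem_image.mp hd
    exact hlift1 q
  · intro x hx
    have hq : mk x ∈ OF.map mk := AddSubgroup.mem_map.mpr ⟨x, hx, rfl⟩
    refine ⟨lift ⟨mk x, hq⟩, Finset.mem_image.mpr ⟨_, Finset.mem_univ _, rfl⟩, ?_⟩
    have := hlift2 ⟨mk x, hq⟩
    rw [← hmkeq x _]
    exact this.symm
end Vitali


section Cover
variable [MeasurableSpace F] [BorelSpace F]

/-- closed polydisc -/
def PDisc {n : ℕ} (c : Fin n → F) (u : ℝ) : Set (Fin n → F) :=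
  {x | ∀ i, ‖x i - c i‖ ≤ u}

omit hna [MeasurableSpace F] [BorelSpace F] in
theorem pd_self {n : ℕ} (c : Fin n → F) (u : ℝ) (hu : 0 ≤ u) : c ∈ PDisc c u :=
  fun i => by simpa using hu

omit hna in
theorem pd_meas {n : ℕ} (c : Fin n → F) (u : ℝ) : MeasurableSet (PDisc c u) := by
  have : PDisc c u = ⋂ i, (fun x : Fin n → F => x i) ⁻¹' {y : F | ‖y - c i‖ ≤ u} := by
    ext x; simp [PDisc]
  rw [this]
  exact MeasurableSet.iInter fun i => (measurable_pi_apply i)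
    (isClosed_le ((continuous_id.sub continuous_const).norm) continuous_const).measurableSet

omit [MeasurableSpace F] [BorelSpace F] in
theorem pd_recenter {n : ℕ} (c x : Fin n → F) (u : ℝ) (hx : x ∈ PDisc c u) :
    PDisc c u = PDisc x u := by
  ext z
  constructor
  · intro hz i
    have : z i - x i = (z i - c i) - (x i - c i) := by ring
    rw [this]
    exact (na_sub hna _ _).trans (max_le (hz i) (hx i))
  · intro hz i
    have : z i - c i = (z i - x i) + (x i - c i) := by ring
    rw [this]
    exact (hna _ _).trans (max_le (hz i) (hx i))

omit [MeasurableSpace F] [BorelSpace F] in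
theorem pd_eq_or_disjoint {n : ℕ} (c c' : Fin n → F) (u : ℝ)
    (h : (PDisc c u ∩ PDisc c' u).Nonempty) : PDisc c u = PDisc c' u := by
  obtain ⟨z, hz1, hz2⟩ := h
  rw [pd_recenter hna c z u hz1, pd_recenter hna c' z u hz2]

omit [MeasurableSpace F] [BorelSpace F] in
theorem pd_subset_unit {n : ℕ} (c : Fin n → F) (u : ℝ) (hu : u ≤ 1)
    (hc : ∀ i, ‖c i‖ ≤ 1) : PDisc c u ⊆ {x | ∀ i, ‖x i‖ ≤ 1} := by
  intro x hx i
  have : x i = (x i - c i) + c i := by ring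
  rw [this]
  exact (hna _ _).trans (max_le ((hx i).trans hu) (hc i))

omit hna in
theorem pd_mu {n : ℕ} (μ : Measure (Fin n → F))
    (hinv : ∀ (a : Fin n → F) (s : Set (Fin n → F)), μ ((fun x => a + x) ⁻¹' s) = μ s)
    (c c' : Fin n → F) (u : ℝ) : μ (PDisc c u) = μ (PDisc c' u) := by
  have key : (fun x => (c - c') + x) ⁻¹' PDisc c u = PDisc c' u := by
    ext x
    simp only [Set.mem_preimage, PDisc, Set.mem_setOf_eq, Pi.add_apply, Pi.sub_apply]
    refine forall_congr' fun i => ?_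
    rw [show c i - c' i + x i - c i = x i - c' i by ring]
  rw [← key, hinv]

variable {n : ℕ} (μ : Measure (Fin n → F))
  (hinv : ∀ (a : Fin n → F) (s : Set (Fin n → F)), μ ((fun x => a + x) ⁻¹' s) = μ s)
  (hnorm : μ {x | ∀ i, ‖x i‖ ≤ 1} = 1)
include hinv hnorm

theorem cover_vec (s : ℝ) (hs0 : 0 < s) (hs1 : s < 1) :
    ∃ R : Finset (Fin n → F), (∀ d ∈ R, ∀ i, ‖d i‖ ≤ 1) ∧
      ∀ x : Fin n → F, (∀ i, ‖x i‖ ≤ 1) → ∃ d ∈ R, x ∈ PDisc d s := by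
  classical
  revert hinv hnorm
  revert μ
  cases n with
  | zero =>
    intro μ hinv hnorm
    exact ⟨{fun _ => 0}, fun d _ i => i.elim0,
      fun x _ => ⟨fun _ => 0, Finset.mem_singleton_self _, fun i => i.elim0⟩⟩
  | succ m =>
    intro μ hinv hnorm
    obtain ⟨RF, hRF1, hRF2⟩ := coset_finite hna μ hinv hnorm s hs0 hs1
    refine ⟨Fintype.piFinset fun _ => RF, ?_, ?_⟩
    · intro d hd i
      rw [Fintype.mem_piFinset] at hd
      exact hRF1 _ (hd i)
    · intro x hx
      have h := fun i => hRF2 (x i) (hx i)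
      choose d hd1 hd2 using h
      exact ⟨d, Fintype.mem_piFinset.mpr hd1, hd2⟩

theorem partition_pd (s : ℝ) (hs0 : 0 < s) (hs1 : s < 1) :
    ∃ 𝔅 : Finset (Set (Fin n → F)),
      ((↑𝔅 : Set (Set (Fin n → F))).Pairwise Disjoint) ∧
      (⋃ b ∈ 𝔅, b) = {x : Fin n → F | ∀ i, ‖x i‖ ≤ 1} ∧
      ∀ b ∈ 𝔅, ∃ d : Fin n → F, (∀ i, ‖d i‖ ≤ 1) ∧ b = PDisc d s := by
  classical
  obtain ⟨R, hR1, hR2⟩ := cover_vec hna μ hinv hnorm s hs0 hs1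
  refine ⟨R.image (fun d => PDisc d s), ?_, ?_, ?_⟩
  · intro b1 hb1 b2 hb2 hne
    simp only [Finset.coe_image, Set.mem_image] at hb1 hb2
    obtain ⟨d1, -, rfl⟩ := hb1
    obtain ⟨d2, -, rfl⟩ := hb2
    by_contra hcon
    rw [Set.not_disjoint_iff_nonempty_inter] at hcon
    exact hne (pd_eq_or_disjoint hna _ _ _ hcon)
  · apply Set.Subset.antisymm
    · intro x hx
      simp only [Set.mem_iUnion] at hx
      obtain ⟨b, hb, hxb⟩ := hx
      obtain ⟨d, hdR, rfl⟩ := Finset.mem_image.mp hb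
      exact pd_subset_unit hna d s hs1.le (hR1 d hdR) hxb
    · intro x hx
      obtain ⟨d, hdR, hxd⟩ := hR2 x hx
      simp only [Set.mem_iUnion]
      exact ⟨PDisc d s, Finset.mem_image_of_mem _ hdR, hxd⟩
  · intro b hb
    obtain ⟨d, hdR, rfl⟩ := Finset.mem_image.mp hb
    exact ⟨d, hR1 d hdR, rfl⟩

theorem opentrace (K : Set (Fin n → F)) (hKO : K ⊆ {x | ∀ i, ‖x i‖ ≤ 1})
    (hsat : ∀ (k : ℕ) (d : Fin n → F), d ∈ K → PDisc d ((1/2 : ℝ)^(k+1)) ⊆ K)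
    (U : Set (Fin n → F)) (hU : IsOpen U) :
    ∃ T : Set ((Fin n → F) × ℕ), T.Countable ∧ (∀ p ∈ T, p.1 ∈ K) ∧
      U ∩ K = ⋃ p ∈ T, PDisc p.1 ((1/2 : ℝ)^(p.2+1)) := by
  classical
  have hsk0 : ∀ k : ℕ, 0 < (1/2 : ℝ)^(k+1) := fun k => by positivity
  have hsk1 : ∀ k : ℕ, (1/2 : ℝ)^(k+1) < 1 := fun k =>
    pow_lt_one₀ (by norm_num) (by norm_num) (by omega)
  have hcovk := fun k : ℕ => cover_vec hna μ hinv hnorm _ (hsk0 k) (hsk1 k)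
  choose Rk hRk1 hRk2 using hcovk
  set wit : (Fin n → F) → ℕ → (Fin n → F) := fun d k =>
    if h : (PDisc d ((1/2 : ℝ)^(k+1)) ∩ K).Nonempty then h.choose else d with hwit
  set T : Set ((Fin n → F) × ℕ) := ⋃ k, (fun d => (wit d k, k)) ''
    {d | d ∈ (Rk k : Set (Fin n → F)) ∧ (PDisc d ((1/2 : ℝ)^(k+1)) ∩ K).Nonempty
      ∧ PDisc d ((1/2 : ℝ)^(k+1)) ⊆ U} with hT
  have hwitmem : ∀ d k, (PDisc d ((1/2 : ℝ)^(k+1)) ∩ K).Nonempty →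
      wit d k ∈ PDisc d ((1/2 : ℝ)^(k+1)) ∩ K := by
    intro d k h
    rw [hwit]
    simp only [dif_pos h]
    exact h.choose_spec
  refine ⟨T, ?_, ?_, ?_⟩
  · refine Set.countable_iUnion fun k => Set.Countable.image ?_ _
    exact ((Rk k).finite_toSet.subset (fun d hd => hd.1)).countable
  · rintro p hp
    simp only [hT, Set.mem_iUnion, Set.mem_image] at hp
    obtain ⟨k, d, ⟨-, hne, -⟩, rfl⟩ := hp
    exact (hwitmem d k hne).2
  · apply Set.Subset.antisymm
    · rintro x ⟨hxU, hxK⟩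
      rw [Metric.isOpen_iff] at hU
      obtain ⟨ε, hε, hball⟩ := hU x hxU
      obtain ⟨k0, hk0⟩ := exists_pow_lt_of_lt_one hε (by norm_num : (1/2 : ℝ) < 1)
      have hsklt : (1/2 : ℝ)^(k0+1) < ε :=
        lt_of_le_of_lt (pow_le_pow_of_le_one (by norm_num) (by norm_num) (by omega)) hk0
      obtain ⟨d, hdR, hxd⟩ := hRk2 k0 x (hKO hxK)
      have hne : (PDisc d ((1/2 : ℝ)^(k0+1)) ∩ K).Nonempty := ⟨x, hxd, hxK⟩
      have hw := hwitmem d k0 hne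
      have hdx : PDisc d ((1/2 : ℝ)^(k0+1)) = PDisc x ((1/2 : ℝ)^(k0+1)) :=
        pd_recenter hna _ _ _ hxd
      have hsubU : PDisc d ((1/2 : ℝ)^(k0+1)) ⊆ U := by
        rw [hdx]
        intro y hy
        refine hball ?_
        rw [Metric.mem_ball]
        refine lt_of_le_of_lt ?_ hsklt
        rw [dist_pi_le_iff (hsk0 k0).le]
        intro i
        rw [dist_eq_norm]
        exact hy i
      have hmemT : (wit d k0, k0) ∈ T := by
        simp only [hT, Set.mem_iUnion, Set.mem_image]
        exact ⟨k0, d, ⟨hdR, hne, hsubU⟩, rfl⟩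
      have hxw : x ∈ PDisc (wit d k0) ((1/2 : ℝ)^(k0+1)) := by
        rw [← pd_recenter hna _ _ _ hw.1]
        exact hxd
      exact Set.mem_biUnion hmemT hxw
    · intro x hx
      simp only [Set.mem_iUnion] at hx
      obtain ⟨p, hpT, hxp⟩ := hx
      simp only [hT, Set.mem_iUnion, Set.mem_image] at hpT
      obtain ⟨k, d, ⟨-, hne, hsubU⟩, rfl⟩ := hpT
      have hw := hwitmem d k hne
      have heq : PDisc (wit d k) ((1/2 : ℝ)^(k+1)) = PDisc d ((1/2 : ℝ)^(k+1)) :=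
        (pd_recenter hna _ _ _ hw.1).symm
      constructor
      · exact hsubU (heq ▸ hxp)
      · exact hsat k (wit d k) hw.2 hxp

theorem open_inter_meas (K : Set (Fin n → F)) (hKO : K ⊆ {x | ∀ i, ‖x i‖ ≤ 1})
    (hsat : ∀ (k : ℕ) (d : Fin n → F), d ∈ K → PDisc d ((1/2 : ℝ)^(k+1)) ⊆ K)
    (U : Set (Fin n → F)) (hU : IsOpen U) : MeasurableSet (U ∩ K) := by
  obtain ⟨T, hTc, -, hTeq⟩ := opentrace hna μ hinv hnorm K hKO hsat U hU
  rw [hTeq]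
  exact MeasurableSet.biUnion hTc fun p _ => pd_meas p.1 _
end Cover


section Trace
variable [MeasurableSpace F] [BorelSpace F]

omit hna in
/-- induction principle : a property stable under the sigma-algebra operations and
containing all open sets holds for all product-measurable sets. -/
theorem pi_induction {n : ℕ} (C : Set (Fin n → F) → Prop)
    (hempty : C ∅)
    (hcompl : ∀ t, C t → C tᶜ)
    (hunion : ∀ g : ℕ → Set (Fin n → F), (∀ k, C (g k)) → C (⋃ k, g k))
    (hopen : ∀ U : Set (Fin n → F), IsOpen U → C U) :
    ∀ t : Set (Fin n → F), MeasurableSet t → C t := by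
  intro t ht
  let 𝒯 : MeasurableSpace (Fin n → F) := ⟨C, hempty, hcompl, hunion⟩
  have hle : (MeasurableSpace.pi : MeasurableSpace (Fin n → F)) ≤ 𝒯 := by
    refine iSup_le fun i => ?_
    rw [MeasurableSpace.comap_le_iff_le_map]
    refine le_trans (le_of_eq (BorelSpace.measurable_eq (α := F))) ?_
    refine MeasurableSpace.generateFrom_le fun U hU => ?_
    show C ((fun x : Fin n → F => x i) ⁻¹' U)
    exact hopen _ (IsOpen.preimage (continuous_apply i) (show IsOpen U from hU))
  exact hle t ht

variable {n : ℕ} (μ : Measure (Fin n → F))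
  (hinv : ∀ (a : Fin n → F) (s : Set (Fin n → F)), μ ((fun x => a + x) ⁻¹' s) = μ s)
  (hnorm : μ {x | ∀ i, ‖x i‖ ≤ 1} = 1)
include hinv hnorm

theorem unit_sat : ∀ (k : ℕ) (d : Fin n → F), d ∈ {x : Fin n → F | ∀ i, ‖x i‖ ≤ 1} →
    PDisc d ((1/2 : ℝ)^(k+1)) ⊆ {x : Fin n → F | ∀ i, ‖x i‖ ≤ 1} := by
  intro k d hd
  exact pd_subset_unit hna d _ ((pow_le_one₀ (by norm_num) (by norm_num))) hd

/-- a map which is coordinatewise continuous has measurable preimages within the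
unit polydisc -/
theorem map_meas_on_unit (f : (Fin n → F) → (Fin n → F)) (hf : Continuous f) :
    ∀ t : Set (Fin n → F), MeasurableSet t →
      MeasurableSet (f ⁻¹' t ∩ {x : Fin n → F | ∀ i, ‖x i‖ ≤ 1}) := by
  set K := {x : Fin n → F | ∀ i, ‖x i‖ ≤ 1} with hK
  refine pi_induction (fun t => MeasurableSet (f ⁻¹' t ∩ K)) ?_ ?_ ?_ ?_
  · simpa using MeasurableSet.empty
  · intro t ht
    have : f ⁻¹' tᶜ ∩ K = K \ (f ⁻¹' t ∩ K) := by
      ext x; simp [hK]; tauto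
    rw [this]
    exact polydisc_meas.diff ht
  · intro g hg
    have : f ⁻¹' (⋃ k, g k) ∩ K = ⋃ k, (f ⁻¹' (g k) ∩ K) := by
      rw [Set.preimage_iUnion, Set.iUnion_inter]
    rw [this]
    exact MeasurableSet.iUnion hg
  · intro U hU
    exact open_inter_meas hna μ hinv hnorm K subset_rfl
      (unit_sat hna μ hinv hnorm) _ (hU.preimage hf)

/-- the trace of the product sigma-algebra on a polydisc of radius 1/2 is contained
in the sigma-algebra generated by its subpolydiscs -/
theorem trace_gen (e : Fin n → F) (he : ∀ i, ‖e i‖ ≤ 1) :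
    ∀ t : Set (Fin n → F), MeasurableSet t →
      MeasurableSet[MeasurableSpace.generateFrom
        {B : Set (Fin n → F) | ∃ d ∈ PDisc e (1/2 : ℝ), ∃ u : ℝ,
          0 ≤ u ∧ u ≤ 1/2 ∧ B = PDisc d u}]
        (t ∩ PDisc e (1/2 : ℝ)) := by
  set K := PDisc e (1/2 : ℝ) with hK
  set P := {B : Set (Fin n → F) | ∃ d ∈ PDisc e (1/2 : ℝ), ∃ u : ℝ,
      0 ≤ u ∧ u ≤ 1/2 ∧ B = PDisc d u} with hP
  set mP := MeasurableSpace.generateFrom P with hmP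
  have hKP : K ∈ P := ⟨e, pd_self e _ (by norm_num), 1/2, by norm_num, le_rfl, rfl⟩
  have hKmP : MeasurableSet[mP] K := MeasurableSpace.measurableSet_generateFrom hKP
  have hKO : K ⊆ {x : Fin n → F | ∀ i, ‖x i‖ ≤ 1} :=
    pd_subset_unit hna e _ (by norm_num) he
  have hsat : ∀ (k : ℕ) (d : Fin n → F), d ∈ K → PDisc d ((1/2 : ℝ)^(k+1)) ⊆ K := by
    intro k d hd
    have h1 : PDisc d ((1/2 : ℝ)^(k+1)) ⊆ PDisc d (1/2 : ℝ) := by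
      intro x hx i
      refine (hx i).trans ?_
      calc (1/2 : ℝ)^(k+1) ≤ (1/2 : ℝ)^1 :=
            pow_le_pow_of_le_one (by norm_num) (by norm_num) (by omega)
        _ = 1/2 := pow_one _
    have h2 : PDisc d (1/2 : ℝ) = K := (pd_recenter hna e d _ hd).symm
    rw [← h2]
    exact h1
  refine pi_induction (fun t => MeasurableSet[mP] (t ∩ K)) ?_ ?_ ?_ ?_
  · simpa using @MeasurableSet.empty _ mP
  · intro t ht
    have : tᶜ ∩ K = K \ (t ∩ K) := by ext x; simp; tauto
    rw [this]
    exact hKmP.diff ht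
  · intro g hg
    rw [Set.iUnion_inter]
    exact MeasurableSet.iUnion hg
  · intro U hU
    obtain ⟨T, hTc, hTK, hTeq⟩ := opentrace hna μ hinv hnorm K hKO hsat U hU
    rw [hTeq]
    refine MeasurableSet.biUnion hTc fun p hp => ?_
    refine MeasurableSpace.measurableSet_generateFrom ?_
    refine ⟨p.1, hTK p hp, (1/2 : ℝ)^(p.2+1), by positivity, ?_, rfl⟩
    calc (1/2 : ℝ)^(p.2+1) ≤ (1/2 : ℝ)^1 :=
          pow_le_pow_of_le_one (by norm_num) (by norm_num) (by omega)
      _ = 1/2 := pow_one _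
end Trace


end Etale

/-- the pushforward of the normalized Haar measure of the unit
polydisc under a norm-one étale polynomial map has density equal to the number
of preimages; with at most `M` preimages everywhere, it is bounded by `M` times
Haar measure on the image. -/
theorem pushforward_haar_etale
    (F : Type*) [NormedField F] [CompleteSpace F]
    [MeasurableSpace F] [BorelSpace F]
    (hna : ∀ x y : F, ‖x + y‖ ≤ max ‖x‖ ‖y‖)
    (n : ℕ) (μ : Measure (Fin n → F))
    (hinv : ∀ (a : Fin n → F) (s : Set (Fin n → F)), μ ((fun x => a + x) ⁻¹' s) = μ s)
    (hnorm : μ {x | ∀ i, ‖x i‖ ≤ 1} = 1)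
    (γ : Fin n → MvPolynomial (Fin n) F)
    (hcoeff : ∀ i, ∀ m : Fin n →₀ ℕ, ‖(γ i).coeff m‖ ≤ 1)
    (hJ : ∀ x : Fin n → F, (∀ i, ‖x i‖ ≤ 1) →
      ‖(Matrix.of fun i j => MvPolynomial.eval x (MvPolynomial.pderiv j (γ i))).det‖ = 1)
    (M : ℕ)
    (hM : ∀ y : Fin n → F,
      {x : Fin n → F | (∀ i, ‖x i‖ ≤ 1) ∧
        (fun i => MvPolynomial.eval x (γ i)) = y}.ncard ≤ M) :
    (μ.restrict {x | ∀ i, ‖x i‖ ≤ 1}).map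
        (fun x : Fin n → F => fun i => MvPolynomial.eval x (γ i))
      = μ.withDensity (fun y =>
          ({x : Fin n → F | (∀ i, ‖x i‖ ≤ 1) ∧
            (fun i => MvPolynomial.eval x (γ i)) = y}.ncard : ℝ≥0∞)) ∧
    (μ.restrict {x | ∀ i, ‖x i‖ ≤ 1}).map
        (fun x : Fin n → F => fun i => MvPolynomial.eval x (γ i))
      ≤ (M : ℝ≥0∞) • μ.restrict
          ((fun x : Fin n → F => fun i => MvPolynomial.eval x (γ i)) ''
            {x | ∀ i, ‖x i‖ ≤ 1}) := by
  classical
  set O : Set (Fin n → F) := {x | ∀ i, ‖x i‖ ≤ 1} with hO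
  have hOmeas : MeasurableSet O := polydisc_meas
  have hγf : (fun x : Fin n → F => fun i => MvPolynomial.eval x (γ i)) = polyMap γ := rfl
  have hcont : Continuous (polyMap γ) := continuous_polyMap γ
  -- globally measurable version of the map
  set g : (Fin n → F) → (Fin n → F) := fun x => if x ∈ O then polyMap γ x else 0 with hg
  have hgO : ∀ x ∈ O, g x = polyMap γ x := fun x hx => by rw [hg]; simp [hx]
  have hg_meas : Measurable g := by
    intro t ht
    have h1 : MeasurableSet (polyMap γ ⁻¹' t ∩ O) :=
      map_meas_on_unit hna μ hinv hnorm (polyMap γ) hcont t ht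
    have h2 : g ⁻¹' t = (polyMap γ ⁻¹' t ∩ O)
        ∪ (Oᶜ ∩ (if (0 : Fin n → F) ∈ t then Set.univ else ∅)) := by
      ext x
      by_cases hx : x ∈ O <;> by_cases h0 : (0 : Fin n → F) ∈ t <;>
        simp [hg, hx, h0, Set.mem_preimage]
    rw [h2]
    refine h1.union (hOmeas.compl.inter ?_)
    split <;> simp
  have hae : (fun x : Fin n → F => fun i => MvPolynomial.eval x (γ i))
      =ᵐ[μ.restrict O] g := by
    filter_upwards [ae_restrict_mem hOmeas] with x hx
    show (fun i => MvPolynomial.eval x (γ i)) = g x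
    rw [hgO x hx]
    rfl
  have hmapg : (μ.restrict O).map (fun x : Fin n → F => fun i => MvPolynomial.eval x (γ i))
      = (μ.restrict O).map g := Measure.map_congr hae
  -- the partition of O into polydiscs of radius 1/2
  obtain ⟨𝔅, hdisj, hcup, hball⟩ :=
    partition_pd hna μ hinv hnorm (1/2 : ℝ) (by norm_num) (by norm_num)
  choose! dctr hctr1 hctr2 using hball
  have hbmeas : ∀ b ∈ 𝔅, MeasurableSet b := by
    intro b hb
    rw [hctr2 b hb]
    exact pd_meas _ _
  have hbsubO : ∀ b ∈ 𝔅, b ⊆ O := by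
    intro b hb
    rw [hctr2 b hb]
    exact pd_subset_unit hna _ _ (by norm_num) (hctr1 b hb)
  -- image balls
  set Kb : Set (Fin n → F) → Set (Fin n → F) :=
    fun b => PDisc (polyMap γ (dctr b)) (1/2 : ℝ) with hKb
  have heO : ∀ b ∈ 𝔅, ∀ i, ‖polyMap γ (dctr b) i‖ ≤ 1 := by
    intro b hb i
    exact na_eval_le hna (γ i) (hcoeff i) (dctr b) (hctr1 b hb)
  have himg : ∀ b ∈ 𝔅, ∀ x ∈ b, polyMap γ x ∈ Kb b := by
    intro b hb x hx
    rw [hctr2 b hb] at hx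
    intro i
    exact gmap_ball_subset hna γ hcoeff (dctr b) x (hctr1 b hb) (1/2 : ℝ)
      (by norm_num) (by norm_num) hx i
  -- Newton point for y ∈ Kb b
  have hnewton : ∀ b ∈ 𝔅, ∀ y ∈ Kb b, ∃ x, x ∈ b ∧ polyMap γ x = y := by
    intro b hb y hy
    obtain ⟨x, hx1, hx2⟩ := gmap_surj hna γ hcoeff hJ (dctr b) (hctr1 b hb)
      (1/2 : ℝ) (by norm_num) (by norm_num) y (fun i => hy i)
    refine ⟨x, ?_, hx2⟩
    rw [hctr2 b hb]
    exact hx1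
  -- unique preimage in a ball
  have huniq : ∀ b ∈ 𝔅, ∀ x ∈ b, ∀ x' ∈ b, polyMap γ x = polyMap γ x' → x = x' := by
    intro b hb x hx x' hx' hxx
    rw [hctr2 b hb] at hx hx'
    have hsep : ∀ i, ‖x' i - x i‖ ≤ (1/2 : ℝ) := by
      intro i
      have : x' i - x i = (x' i - dctr b i) - (x i - dctr b i) := by ring
      rw [this]
      exact (na_sub hna _ _).trans (max_le (hx' i) (hx i))
    have hxO : ∀ i, ‖x i‖ ≤ 1 :=
      fun i => pd_subset_unit hna _ _ (by norm_num) (hctr1 b hb) hx i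
    have := gmap_expansion hna γ hcoeff hJ x x' hxO (1/2 : ℝ) (by norm_num)
      (by norm_num) hsep 0 le_rfl (fun i => by rw [hxx]; simp)
    funext i
    have hi := this i
    rw [← sub_eq_zero]
    have : ‖x' i - x i‖ = 0 := le_antisymm hi (norm_nonneg _)
    rw [← norm_eq_zero]
    rwa [norm_sub_rev] at this
  ---------------------------------------------------------------
  -- KEY: pushforward of each ball is the restriction to the image ball
  have key : ∀ b ∈ 𝔅, (μ.restrict b).map g = μ.restrict (Kb b) := by
    intro b hb
    set c := dctr b with hc
    set e := polyMap γ c with he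
    set K := Kb b with hKdef
    have heO' : ∀ i, ‖e i‖ ≤ 1 := heO b hb
    set P := {B : Set (Fin n → F) | ∃ d ∈ PDisc e (1/2 : ℝ), ∃ u : ℝ,
        0 ≤ u ∧ u ≤ 1/2 ∧ B = PDisc d u} with hP
    set ν₁ := (μ.restrict b).map g with hν₁
    set ν₂ := μ.restrict K with hν₂
    have hKP : K ∈ P := ⟨e, pd_self e _ (by norm_num), 1/2, by norm_num, le_rfl, rfl⟩
    have hPmeas : ∀ A ∈ P, MeasurableSet A := by
      rintro A ⟨d, -, u, -, -, rfl⟩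
      exact pd_meas d u
    have hmPle : (MeasurableSpace.generateFrom P) ≤ (inferInstance : MeasurableSpace (Fin n → F)) :=
      MeasurableSpace.generateFrom_le hPmeas
    -- the subballs of K form a pi-system
    have hpi : IsPiSystem P := by
      rintro A1 ⟨d1, hd1, u1, hu10, hu11, rfl⟩ A2 ⟨d2, hd2, u2, hu20, hu21, rfl⟩ hne
      obtain ⟨z, hz1, hz2⟩ := hne
      rcases le_total u1 u2 with hu | hu
      · have e1 : PDisc d1 u1 = PDisc z u1 := pd_recenter hna _ _ _ hz1
        have e2 : PDisc d2 u2 = PDisc z u2 := pd_recenter hna _ _ _ hz2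
        have hsub : PDisc z u1 ⊆ PDisc z u2 := fun w hw i => (hw i).trans hu
        have : PDisc d1 u1 ∩ PDisc d2 u2 = PDisc z u1 := by
          rw [e1, e2]
          exact Set.inter_eq_self_of_subset_left hsub
        rw [this]
        refine ⟨z, ?_, u1, hu10, hu11, rfl⟩
        have : PDisc d1 (1/2 : ℝ) = PDisc e (1/2 : ℝ) := (pd_recenter hna e d1 _ hd1).symm
        rw [← this]
        exact fun i => (hz1 i).trans hu11
      · have e1 : PDisc d1 u1 = PDisc z u1 := pd_recenter hna _ _ _ hz1
        have e2 : PDisc d2 u2 = PDisc z u2 := pd_recenter hna _ _ _ hz2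
        have hsub : PDisc z u2 ⊆ PDisc z u1 := fun w hw i => (hw i).trans hu
        have : PDisc d1 u1 ∩ PDisc d2 u2 = PDisc z u2 := by
          rw [e1, e2]
          exact Set.inter_eq_self_of_subset_right hsub
        rw [this]
        refine ⟨z, ?_, u2, hu20, hu21, rfl⟩
        have : PDisc d2 (1/2 : ℝ) = PDisc e (1/2 : ℝ) := (pd_recenter hna e d2 _ hd2).symm
        rw [← this]
        exact fun i => (hz2 i).trans hu21
    -- basic computation on subballs
    have hbasic : ∀ A ∈ P, ν₁ A = ν₂ A := by
      rintro A ⟨d, hd, u, hu0, hu1, rfl⟩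
      obtain ⟨xd, hxd1, hxd2⟩ := hnewton b hb d (by
        show ∀ i, ‖d i - polyMap γ (dctr b) i‖ ≤ (1/2 : ℝ)
        exact fun i => hd i)
      have hxdb : xd ∈ PDisc c (1/2 : ℝ) := by rw [← hctr2 b hb]; exact hxd1
      have hxdO : ∀ i, ‖xd i‖ ≤ 1 :=
        fun i => pd_subset_unit hna _ _ (by norm_num) (hctr1 b hb) hxdb i
      have hpre : g ⁻¹' (PDisc d u) ∩ b = PDisc xd u := by
        apply Set.Subset.antisymm
        · rintro x ⟨hx1, hx2⟩
          have hxb : x ∈ PDisc c (1/2 : ℝ) := by rw [← hctr2 b hb]; exact hx2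
          have hxO : ∀ i, ‖x i‖ ≤ 1 :=
            fun i => pd_subset_unit hna _ _ (by norm_num) (hctr1 b hb) hxb i
          have hgx : g x = polyMap γ x := hgO x (hbsubO b hb hx2)
          rw [Set.mem_preimage, hgx] at hx1
          have hsep : ∀ i, ‖x i - xd i‖ ≤ (1/2 : ℝ) := by
            intro i
            have : x i - xd i = (x i - c i) - (xd i - c i) := by ring
            rw [this]
            exact (na_sub hna _ _).trans (max_le (hxb i) (hxdb i))
          have hgv : ∀ i, ‖polyMap γ x i - polyMap γ xd i‖ ≤ u := by
            intro i
            rw [hxd2]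
            exact hx1 i
          exact gmap_expansion hna γ hcoeff hJ xd x hxdO (1/2 : ℝ) (by norm_num)
            (by norm_num) hsep u hu0 hgv
        · intro x hx
          have hxb : x ∈ b := by
            rw [hctr2 b hb]
            intro i
            have : x i - c i = (x i - xd i) + (xd i - c i) := by ring
            rw [this]
            exact (hna _ _).trans (max_le ((hx i).trans hu1) (hxdb i))
          refine ⟨?_, hxb⟩
          rw [Set.mem_preimage, hgO x (hbsubO b hb hxb)]
          intro i
          rw [← hxd2]
          exact gmap_ball_subset hna γ hcoeff xd x hxdO u hu0
            (hu1.trans (by norm_num)) hx i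
      have hAsubK : PDisc d u ⊆ K := by
        have h2 : PDisc d (1/2 : ℝ) = PDisc e (1/2 : ℝ) := (pd_recenter hna e d _ hd).symm
        intro w hw
        show w ∈ PDisc e (1/2 : ℝ)
        rw [← h2]
        exact fun i => (hw i).trans hu1
      rw [hν₁, Measure.map_apply hg_meas (pd_meas d u), Measure.restrict_apply
        (hg_meas (pd_meas d u)), hpre, hν₂, Measure.restrict_apply (pd_meas d u)]
      rw [Set.inter_eq_self_of_subset_left hAsubK]
      exact pd_mu μ hinv xd d u
    -- total masses agree and are finite
    have hμb : μ b = μ K := by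
      rw [hctr2 b hb]
      exact pd_mu μ hinv _ _ _
    have huniv₁ : ν₁ Set.univ = μ b := by
      rw [hν₁, Measure.map_apply hg_meas MeasurableSet.univ]
      rw [Set.preimage_univ, Measure.restrict_apply MeasurableSet.univ, Set.univ_inter]
    have huniv₂ : ν₂ Set.univ = μ K := by
      rw [hν₂, Measure.restrict_apply MeasurableSet.univ, Set.univ_inter]
    have hfinb : μ b ≠ ⊤ := by
      refine ne_top_of_le_ne_top ?_ (measure_mono (hbsubO b hb))
      rw [hnorm]
      exact ENNReal.one_ne_top
    have hfinK : μ K ≠ ⊤ := by rw [← hμb]; exact hfinb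
    -- pi-lambda argument
    have hagree : ∀ t : Set (Fin n → F), MeasurableSet[(MeasurableSpace.generateFrom P)] t → ν₁ t = ν₂ t := by
      refine MeasurableSpace.induction_on_inter (m := (MeasurableSpace.generateFrom P)) (s := P)
        (C := fun t _ => ν₁ t = ν₂ t) rfl hpi (by simp) hbasic ?_ ?_
      · intro t htmP hC
        have htm : MeasurableSet t := hmPle t htmP
        have hν₁fin : ν₁ t ≠ ⊤ := by
          refine ne_top_of_le_ne_top ?_ (measure_mono (Set.subset_univ t))
          rw [huniv₁]
          exact hfinb
        have hν₂fin : ν₂ t ≠ ⊤ := by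
          refine ne_top_of_le_ne_top ?_ (measure_mono (Set.subset_univ t))
          rw [huniv₂]
          exact hfinK
        rw [measure_compl htm hν₁fin, measure_compl htm hν₂fin, huniv₁, huniv₂, hμb, hC]
      · intro f hdisjf hmeasf hCf
        have hfm : ∀ k, MeasurableSet (f k) := fun k => hmPle _ (hmeasf k)
        rw [measure_iUnion hdisjf hfm, measure_iUnion hdisjf hfm]
        exact tsum_congr hCf
    -- upgrade to all measurable sets
    refine Measure.ext fun t ht => ?_
    have hν₁K : ν₁ Kᶜ = 0 := by
      rw [hν₁, Measure.map_apply hg_meas (pd_meas _ _).compl,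
        Measure.restrict_apply (hg_meas (pd_meas _ _).compl)]
      have : g ⁻¹' Kᶜ ∩ b = ∅ := by
        rw [Set.eq_empty_iff_forall_notMem]
        rintro x ⟨hx1, hx2⟩
        rw [Set.mem_preimage, hgO x (hbsubO b hb hx2)] at hx1
        exact hx1 (himg b hb x hx2)
      rw [this, measure_empty]
    have hν₂K : ν₂ Kᶜ = 0 := by
      rw [hν₂, Measure.restrict_apply (pd_meas _ _).compl, Set.compl_inter_self,
        measure_empty]
    have hsubc : t \ K ⊆ Kᶜ := fun x hx => hx.2
    have h₁ : ν₁ (t \ K) = 0 :=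
      le_antisymm (le_trans (measure_mono hsubc) hν₁K.le) (zero_le)
    have h₂ : ν₂ (t \ K) = 0 :=
      le_antisymm (le_trans (measure_mono hsubc) hν₂K.le) (zero_le)
    have htK : MeasurableSet[(MeasurableSpace.generateFrom P)] (t ∩ K) := trace_gen hna μ hinv hnorm e heO' t ht
    have hsplit1 : ν₁ t = ν₁ (t ∩ K) := by
      have hd : ν₁ (t ∩ K) + ν₁ (t \ K) = ν₁ t := measure_inter_add_diff t (pd_meas _ _)
      rw [h₁, add_zero] at hd
      exact hd.symm
    have hsplit2 : ν₂ t = ν₂ (t ∩ K) := by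
      have hd : ν₂ (t ∩ K) + ν₂ (t \ K) = ν₂ t := measure_inter_add_diff t (pd_meas _ _)
      rw [h₂, add_zero] at hd
      exact hd.symm
    rw [hsplit1, hsplit2]
    exact hagree _ htK
  ---------------------------------------------------------------
  -- decomposition of the restricted measure
  have hdisj' : ∀ (t : Set (Fin n → F)), (↑𝔅 : Set (Set (Fin n → F))).PairwiseDisjoint
      (fun b => t ∩ b) := by
    intro t b1 h1 b2 h2 hne
    exact ((hdisj h1 h2 hne).mono Set.inter_subset_right Set.inter_subset_right)
  have hres : μ.restrict O = ∑ b ∈ 𝔅, μ.restrict b := by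
    refine Measure.ext fun t ht => ?_
    have h1 : (∑ b ∈ 𝔅, μ.restrict b) t = ∑ b ∈ 𝔅, (μ.restrict b) t := by
      rw [Measure.coe_finset_sum, Finset.sum_apply]
    rw [h1, Measure.restrict_apply ht]
    have h2 : t ∩ O = ⋃ b ∈ 𝔅, (t ∩ b) := by
      rw [hO, ← hcup]
      ext x
      simp only [Set.mem_inter_iff, Set.mem_iUnion]
      tauto
    rw [h2, measure_biUnion_finset (hdisj' t) (fun b hb => ht.inter (hbmeas b hb))]
    exact Finset.sum_congr rfl fun b hb => (Measure.restrict_apply ht).symm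
  have hmapsum : (μ.restrict O).map g = ∑ b ∈ 𝔅, (μ.restrict b).map g := by
    refine Measure.ext fun t ht => ?_
    rw [Measure.map_apply hg_meas ht, hres]
    have h1 : (∑ b ∈ 𝔅, μ.restrict b) (g ⁻¹' t) = ∑ b ∈ 𝔅, (μ.restrict b) (g ⁻¹' t) := by
      rw [Measure.coe_finset_sum, Finset.sum_apply]
    have h2 : (∑ b ∈ 𝔅, (μ.restrict b).map g) t
        = ∑ b ∈ 𝔅, ((μ.restrict b).map g) t := by
      rw [Measure.coe_finset_sum, Finset.sum_apply]
    rw [h1, h2]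
    exact Finset.sum_congr rfl fun b hb => (Measure.map_apply hg_meas ht).symm
  -- withDensity of finite sums
  have hwd : ∀ (s : Finset (Set (Fin n → F)))
      (f : Set (Fin n → F) → (Fin n → F) → ℝ≥0∞), (∀ b, Measurable (f b)) →
      μ.withDensity (fun y => ∑ b ∈ s, f b y) = ∑ b ∈ s, μ.withDensity (f b) := by
    intro s f hf
    induction s using Finset.induction with
    | empty => simp
    | @insert b s hbs ih =>
      rw [Finset.sum_insert hbs]
      have hsplit : (fun y => ∑ b' ∈ insert b s, f b' y)
          = f b + (fun y => ∑ b' ∈ s, f b' y) := by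
        funext y
        rw [Pi.add_apply, Finset.sum_insert hbs]
      rw [hsplit, withDensity_add_left (hf b), ih]
  -- the density
  set h : (Fin n → F) → ℝ≥0∞ := fun y =>
    ({x : Fin n → F | (∀ i, ‖x i‖ ≤ 1) ∧
      (fun i => MvPolynomial.eval x (γ i)) = y}.ncard : ℝ≥0∞) with hh
  -- fiber counting
  have hfib : ∀ y : Fin n → F,
      (∑ b ∈ 𝔅, (Kb b).indicator (1 : (Fin n → F) → ℝ≥0∞) y) = h y := by
    intro y
    set Y := 𝔅.filter (fun b => y ∈ Kb b) with hY
    have hLHS : (∑ b ∈ 𝔅, (Kb b).indicator (1 : (Fin n → F) → ℝ≥0∞) y)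
        = (Y.card : ℝ≥0∞) := by
      rw [hY, ← Finset.sum_boole]
      refine Finset.sum_congr rfl fun b hb => ?_
      rw [Set.indicator_apply]
      split <;> simp
    have hYmem : ∀ b, b ∈ Y → b ∈ 𝔅 ∧ y ∈ Kb b := fun b hb => Finset.mem_filter.mp hb
    have hex : ∀ b ∈ Y, ∃ x, x ∈ b ∧ polyMap γ x = y := by
      intro b hb
      exact hnewton b (hYmem b hb).1 y (hYmem b hb).2
    choose! xb hxb1 hxb2 using hex
    set fib := {x : Fin n → F | (∀ i, ‖x i‖ ≤ 1) ∧
      (fun i => MvPolynomial.eval x (γ i)) = y} with hfibdef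
    have himgfib : fib = (fun b => xb b) '' ↑Y := by
      apply Set.Subset.antisymm
      · rintro x ⟨hxO, hxy⟩
        have hxpoly : polyMap γ x = y := hxy
        have hmem : x ∈ ⋃ b ∈ 𝔅, b := by rw [hcup]; exact hxO
        simp only [Set.mem_iUnion] at hmem
        obtain ⟨b, hb, hxb⟩ := hmem
        have hyK : y ∈ Kb b := by rw [← hxpoly]; exact himg b hb x hxb
        have hbY : b ∈ Y := Finset.mem_filter.mpr ⟨hb, hyK⟩
        refine ⟨b, hbY, ?_⟩
        exact (huniq b hb x hxb (xb b) (hxb1 b hbY) (by rw [hxpoly, hxb2 b hbY])).symm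
      · rintro x ⟨b, hb, rfl⟩
        have hb' : b ∈ Y := hb
        have hb𝔅 : b ∈ 𝔅 := (hYmem b hb').1
        exact ⟨fun i => hbsubO b hb𝔅 (hxb1 b hb') i, hxb2 b hb'⟩
    have hinj : Set.InjOn (fun b => xb b) ↑Y := by
      intro b1 h1 b2 h2 heq
      by_contra hne
      have hb1 : b1 ∈ Y := h1
      have hb2 : b2 ∈ Y := h2
      have hdd := hdisj (Finset.mem_coe.mpr ((hYmem b1 hb1).1))
        (Finset.mem_coe.mpr ((hYmem b2 hb2).1)) hne
      rw [Set.disjoint_left] at hdd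
      refine hdd (hxb1 b1 hb1) ?_
      rw [show xb b1 = xb b2 from heq]
      exact hxb1 b2 hb2
    have hcount : fib.ncard = Y.card := by
      rw [himgfib, Set.ncard_image_of_injOn hinj, Set.ncard_coe_finset]
    rw [hLHS]
    show (Y.card : ℝ≥0∞) = (fib.ncard : ℝ≥0∞)
    rw [hcount]
  -- first conclusion
  have hconc1 : (μ.restrict O).map (fun x : Fin n → F => fun i => MvPolynomial.eval x (γ i))
      = μ.withDensity h := by
    rw [hmapg, hmapsum]
    have hper : ∀ b ∈ 𝔅, (μ.restrict b).map g = μ.withDensity ((Kb b).indicator 1) := by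
      intro b hb
      rw [key b hb, ← withDensity_indicator_one (pd_meas _ _)]
    rw [Finset.sum_congr rfl hper]
    rw [← hwd 𝔅 (fun b => (Kb b).indicator 1)
      (fun b => measurable_one.indicator (pd_meas _ _))]
    congr 1
    funext y
    exact hfib y
  set S : Set (Fin n → F) :=
    (fun x : Fin n → F => fun i => MvPolynomial.eval x (γ i)) '' O with hSdef
  have himgset : S = ⋃ b ∈ 𝔅, Kb b := by
    rw [hSdef, hγf]
    apply Set.Subset.antisymm
    · rintro y ⟨x, hx, rfl⟩
      have hmem : x ∈ ⋃ b ∈ 𝔅, b := by rw [hcup]; exact hx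
      simp only [Set.mem_iUnion] at hmem ⊢
      obtain ⟨b, hb, hxb⟩ := hmem
      exact ⟨b, hb, himg b hb x hxb⟩
    · intro y hy
      simp only [Set.mem_iUnion] at hy
      obtain ⟨b, hb, hyK⟩ := hy
      obtain ⟨x, hxb, hxy⟩ := hnewton b hb y hyK
      exact ⟨x, hbsubO b hb hxb, hxy⟩
  have hSmeas : MeasurableSet S := by
    rw [himgset]
    exact Finset.measurableSet_biUnion 𝔅 fun b hb => pd_meas _ _
  have hbound : ∀ y, h y ≤ (M : ℝ≥0∞) * S.indicator (1 : (Fin n → F) → ℝ≥0∞) y := by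
    intro y
    by_cases hy : y ∈ S
    · rw [Set.indicator_of_mem hy]
      simp only [Pi.one_apply, mul_one]
      exact Nat.cast_le.mpr (hM y)
    · rw [Set.indicator_of_notMem hy, mul_zero]
      have hempty : {x : Fin n → F | (∀ i, ‖x i‖ ≤ 1) ∧
          (fun i => MvPolynomial.eval x (γ i)) = y} = ∅ := by
        rw [Set.eq_empty_iff_forall_notMem]
        rintro x ⟨hxO, hxy⟩
        exact hy ⟨x, hxO, hxy⟩
      show (Set.ncard _ : ℝ≥0∞) ≤ 0
      rw [hempty]
      simp
  refine ⟨hconc1, ?_⟩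
  rw [hconc1]
  refine Measure.le_iff.mpr fun t ht => ?_
  rw [withDensity_apply _ ht]
  have hstep1 : ∫⁻ y in t, h y ∂μ
      ≤ ∫⁻ y in t, (M : ℝ≥0∞) * S.indicator (1 : (Fin n → F) → ℝ≥0∞) y ∂μ :=
    lintegral_mono fun y => hbound y
  have hstep2 : ∫⁻ y in t, (M : ℝ≥0∞) * S.indicator (1 : (Fin n → F) → ℝ≥0∞) y ∂μ
      = (M : ℝ≥0∞) * μ (S ∩ t) := by
    rw [lintegral_const_mul _ (measurable_one.indicator hSmeas)]
    congr 1
    rw [lintegral_indicator hSmeas]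
    simp only [Pi.one_apply]
    rw [setLIntegral_one, Measure.restrict_apply hSmeas]
  have hstep3 : ((M : ℝ≥0∞) • μ.restrict S) t = (M : ℝ≥0∞) * μ (S ∩ t) := by
    rw [Measure.smul_apply, smul_eq_mul, Measure.restrict_apply ht, Set.inter_comm]
  rw [hstep3]
  exact le_trans hstep1 (le_of_eq hstep2)
end

section
/- Let K be a complete nonarchimedean valued field, O its valuation ring, f : O^n → K^n a polynomial map with coefficients in O and |det Df| = 1 on O^n, and let g : O^n → ℝ≥0 be a function that is constant on every open ball of radius 1 (i.e. g(x) = g(x') whenever ‖x − x'‖ < 1). Define f_*(g)(y) = Σ_{x ∈ O^n, f(x) = y} g(x) (a finite sum). Then f_*(g) is constant on every open ball of radius 1 in f(O^n): if ‖y − y'‖ < 1 and both lie in f(O^n), then f_*(g)(y) = f_*(g)(y'). -/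
open MvPolynomial
open scoped NNReal


section TaylorAlg
variable {R : Type*} [CommRing R] {n : ℕ}

lemma my_eval_aeval (g : Fin n ⊕ Fin n → R) (F : Fin n → MvPolynomial (Fin n ⊕ Fin n) R)
    (p : MvPolynomial (Fin n) R) :
    eval g (aeval F p) = eval (fun i => eval g (F i)) p := by
  rw [aeval_eq_eval₂Hom, coe_eval₂Hom]
  rw [show ((eval g) (eval₂ (algebraMap R (MvPolynomial (Fin n ⊕ Fin n) R)) F p))
      = eval₂ ((eval g : MvPolynomial (Fin n ⊕ Fin n) R →+* R).comp
          (algebraMap R (MvPolynomial (Fin n ⊕ Fin n) R))) ((eval g) ∘ F) p from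
    eval₂_comp_left _ _ _ _]
  have hc : ((eval g : MvPolynomial (Fin n ⊕ Fin n) R →+* R).comp
      (algebraMap R (MvPolynomial (Fin n ⊕ Fin n) R))) = RingHom.id R := by
    ext r; simp
  rw [hc]
  rfl

/-- first-order remainder -/
lemma taylor1 (p : MvPolynomial (Fin n) R) :
    ∃ r : Fin n → MvPolynomial (Fin n ⊕ Fin n) R, ∀ a h : Fin n → R,
      eval (fun i => a i + h i) p - eval a p
        = ∑ j, h j * eval (Sum.elim a h) (r j) := by
  induction p using MvPolynomial.induction_on with
  | C c => exact ⟨0, fun a h => by simp⟩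
  | add p q hp hq =>
    obtain ⟨rp, hrp⟩ := hp
    obtain ⟨rq, hrq⟩ := hq
    refine ⟨fun j => rp j + rq j, fun a h => ?_⟩
    simp only [map_add, mul_add, Finset.sum_add_distrib, ← hrp a h, ← hrq a h]
    ring
  | mul_X p l hp =>
    obtain ⟨rp, hrp⟩ := hp
    refine ⟨fun k => X (Sum.inl l) * rp k
      + if k = l then aeval (fun i => X (Sum.inl i) + X (Sum.inr i)) p else 0, fun a h => ?_⟩
    have hP1 : eval (Sum.elim a h) (aeval (fun i => X (Sum.inl i) + X (Sum.inr i)) p)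
        = eval (fun i => a i + h i) p := by
      rw [my_eval_aeval]; simp
    have key : ∀ k, eval (Sum.elim a h) (X (Sum.inl l) * rp k
        + if k = l then aeval (fun i => X (Sum.inl i) + X (Sum.inr i)) p else 0)
        = a l * eval (Sum.elim a h) (rp k)
          + (if k = l then eval (fun i => a i + h i) p else 0) := by
      intro k
      rw [map_add, map_mul, eval_X]
      simp only [Sum.elim_inl]
      congr 1
      split_ifs with hk
      · exact hP1
      · simp
    calc eval (fun i => a i + h i) (p * X l) - eval a (p * X l)
        = (eval (fun i => a i + h i) p - eval a p) * a l
          + h l * eval (fun i => a i + h i) p := by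
          simp only [map_mul, eval_X]; ring
      _ = (∑ j, h j * eval (Sum.elim a h) (rp j)) * a l
          + h l * eval (fun i => a i + h i) p := by rw [hrp a h]
      _ = ∑ k, h k * (a l * eval (Sum.elim a h) (rp k)
            + (if k = l then eval (fun i => a i + h i) p else 0)) := by
          rw [Finset.sum_mul]
          simp only [mul_add, Finset.sum_add_distrib, mul_ite, mul_zero]
          rw [Finset.sum_ite_eq' Finset.univ l (fun k => h k * eval (fun i => a i + h i) p)]
          simp only [Finset.mem_univ, if_true]
          congr 1
          exact Finset.sum_congr rfl fun k _ => by ring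
      _ = ∑ k, h k * eval (Sum.elim a h) (X (Sum.inl l) * rp k
            + if k = l then aeval (fun i => X (Sum.inl i) + X (Sum.inr i)) p else 0) := by
          exact Finset.sum_congr rfl fun k _ => by rw [key k]
/-- second-order remainder -/
lemma taylor2 (p : MvPolynomial (Fin n) R) :
    ∃ q : Fin n → Fin n → MvPolynomial (Fin n ⊕ Fin n) R, ∀ a h : Fin n → R,
      eval (fun i => a i + h i) p - eval a p - ∑ j, eval a (pderiv j p) * h j
        = ∑ j, ∑ k, h j * h k * eval (Sum.elim a h) (q j k) := by
  induction p using MvPolynomial.induction_on with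
  | C c => exact ⟨0, fun a h => by simp⟩
  | add p q hp hq =>
    obtain ⟨qp, hqp⟩ := hp
    obtain ⟨qq, hqq⟩ := hq
    refine ⟨fun j k => qp j k + qq j k, fun a h => ?_⟩
    have h1 := hqp a h
    have h2 := hqq a h
    simp only [map_add, mul_add, add_mul, Finset.sum_add_distrib] at *
    linear_combination h1 + h2
  | mul_X p l hp =>
    obtain ⟨qp, hqp⟩ := hp
    obtain ⟨rp, hrp⟩ := taylor1 p
    refine ⟨fun j k => X (Sum.inl l) * qp j k + if j = l then rp k else 0, fun a h => ?_⟩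
    have key : ∀ j k, h j * h k * eval (Sum.elim a h)
        (X (Sum.inl l) * qp j k + if j = l then rp k else 0)
        = h j * h k * (a l * eval (Sum.elim a h) (qp j k))
          + (if j = l then h j * h k * eval (Sum.elim a h) (rp k) else 0) := by
      intro j k
      rw [map_add, map_mul, eval_X]
      simp only [Sum.elim_inl]
      split_ifs with hk
      · ring
      · simp only [map_zero]; ring
    have hder : ∀ j, eval a (pderiv j (p * X l))
        = eval a (pderiv j p) * a l + (if j = l then eval a p else 0) := by
      intro j
      rw [pderiv_mul, map_add, map_mul, map_mul, eval_X, pderiv_X]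
      congr 1
      by_cases hj : j = l
      · subst hj; simp
      · simp [Pi.single_apply, hj]
    have hsum : ∑ j, eval a (pderiv j (p * X l)) * h j
        = (∑ j, eval a (pderiv j p) * h j) * a l + eval a p * h l := by
      rw [Finset.sum_congr rfl fun j _ => by rw [hder j]]
      simp only [add_mul, Finset.sum_add_distrib, ite_mul, zero_mul]
      rw [Finset.sum_ite_eq' Finset.univ l (fun j => eval a p * h j)]
      simp only [Finset.mem_univ, if_true]
      rw [Finset.sum_mul]
      congr 1
      exact Finset.sum_congr rfl fun j _ => by ring
    have hrhs : ∑ j, ∑ k, h j * h k * eval (Sum.elim a h)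
        (X (Sum.inl l) * qp j k + if j = l then rp k else 0)
        = a l * (∑ j, ∑ k, h j * h k * eval (Sum.elim a h) (qp j k))
          + h l * (∑ k, h k * eval (Sum.elim a h) (rp k)) := by
      rw [Finset.sum_congr rfl fun j _ => Finset.sum_congr rfl fun k _ => key j k]
      simp only [Finset.sum_add_distrib]
      congr 1
      · rw [Finset.mul_sum]
        refine Finset.sum_congr rfl fun j _ => ?_
        rw [Finset.mul_sum]
        exact Finset.sum_congr rfl fun k _ => by ring
      · rw [Finset.sum_comm]
        rw [Finset.sum_congr rfl fun k _ =>
          Finset.sum_ite_eq' Finset.univ l (fun j => h j * h k * eval (Sum.elim a h) (rp k))]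
        simp only [Finset.mem_univ, if_true]
        rw [Finset.mul_sum]
        exact Finset.sum_congr rfl fun k _ => by ring
    rw [hrhs, hsum]
    have h1 := hqp a h
    have h2 := hrp a h
    calc eval (fun i => a i + h i) (p * X l) - eval a (p * X l)
          - ((∑ j, eval a (pderiv j p) * h j) * a l + eval a p * h l)
        = a l * (eval (fun i => a i + h i) p - eval a p - ∑ j, eval a (pderiv j p) * h j)
          + h l * (eval (fun i => a i + h i) p - eval a p) := by
          simp only [map_mul, eval_X]; ring
      _ = _ := by rw [h1, h2]

end TaylorAlg

section Valuation
variable {K : Type*} [NormedField K] {n : ℕ}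

def vring (hna : ∀ x y : K, ‖x + y‖ ≤ max ‖x‖ ‖y‖) : Subring K where
  carrier := {x | ‖x‖ ≤ 1}
  one_mem' := by simp
  mul_mem' := fun {a b} ha hb => by
    simp only [Set.mem_setOf_eq] at *
    calc ‖a * b‖ = ‖a‖ * ‖b‖ := norm_mul a b
      _ ≤ 1 * 1 := mul_le_mul ha hb (norm_nonneg b) zero_le_one
      _ = 1 := one_mul 1
  add_mem' := fun {a b} ha hb => le_trans (hna a b) (max_le ha hb)
  zero_mem' := by simp
  neg_mem' := fun {a} ha => by simpa using ha

lemma norm_sum_le_of_forall (hna : ∀ x y : K, ‖x + y‖ ≤ max ‖x‖ ‖y‖)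
    {ι : Type*} (s : Finset ι) (v : ι → K) {c : ℝ} (hc : 0 ≤ c)
    (h : ∀ i ∈ s, ‖v i‖ ≤ c) : ‖∑ i ∈ s, v i‖ ≤ c := by
  classical
  induction s using Finset.induction_on with
  | empty => simpa using hc
  | insert a s hx ih =>
    rw [Finset.sum_insert hx]
    exact le_trans (hna _ _) (max_le (h _ (Finset.mem_insert_self a s))
      (ih fun i hi => h i (Finset.mem_insert_of_mem hi)))

set_option synthInstance.maxHeartbeats 200000 in
lemma exists_lift (hna : ∀ x y : K, ‖x + y‖ ≤ max ‖x‖ ‖y‖)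
    {σ : Type*} (p : MvPolynomial σ K) (hp : ∀ m, ‖p.coeff m‖ ≤ 1) :
    ∃ P : MvPolynomial σ (vring hna), MvPolynomial.map (vring hna).subtype P = p := by
  refine ⟨∑ m ∈ p.support, monomial m ⟨p.coeff m, hp m⟩, ?_⟩
  rw [map_sum]
  simp only [map_monomial]
  exact p.support_sum_monomial_coeff

lemma coe_eval (hna : ∀ x y : K, ‖x + y‖ ≤ max ‖x‖ ‖y‖)
    {σ : Type*} (P : MvPolynomial σ (vring hna)) (x : σ → vring hna) :
    ((eval x P : vring hna) : K)
      = eval (fun i => (x i : K)) (MvPolynomial.map (vring hna).subtype P) := by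
  rw [eval_map]
  have h : (vring hna).subtype (eval₂ (RingHom.id _) x P)
      = eval₂ (((vring hna).subtype).comp (RingHom.id _)) ((vring hna).subtype ∘ x) P :=
    eval₂_comp_left _ _ _ _
  simpa [Function.comp_def] using h

lemma eval_mem (hna : ∀ x y : K, ‖x + y‖ ≤ max ‖x‖ ‖y‖)
    (P : MvPolynomial (Fin n) (vring hna)) (x : Fin n → K)
    (hx : ∀ i, ‖x i‖ ≤ 1) :
    ‖eval x (MvPolynomial.map (vring hna).subtype P)‖ ≤ 1 := by
  have : eval x (MvPolynomial.map (vring hna).subtype P)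
      = ((eval (fun i => (⟨x i, hx i⟩ : vring hna)) P : vring hna) : K) := by
    rw [coe_eval]
  rw [this]
  exact (eval (fun i => (⟨x i, hx i⟩ : vring hna)) P).2

/-- first-order estimate -/
lemma est1 (hna : ∀ x y : K, ‖x + y‖ ≤ max ‖x‖ ‖y‖)
    (P : MvPolynomial (Fin n) (vring hna)) (a h : Fin n → K)
    (ha : ∀ i, ‖a i‖ ≤ 1) (hh : ∀ i, ‖h i‖ ≤ 1) {ε : ℝ} (hε : 0 ≤ ε)
    (hhε : ∀ i, ‖h i‖ ≤ ε) :
    ‖eval (fun i => a i + h i) (MvPolynomial.map (vring hna).subtype P)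
      - eval a (MvPolynomial.map (vring hna).subtype P)‖ ≤ ε := by
  obtain ⟨r, hr⟩ := taylor1 P
  set a' : Fin n → vring hna := fun i => ⟨a i, ha i⟩ with ha'
  set h' : Fin n → vring hna := fun i => ⟨h i, hh i⟩ with hh'
  have key := congrArg ((vring hna).subtype) (hr a' h')
  simp only [map_sub, map_sum, map_mul] at key
  have e1 : (vring hna).subtype (eval (fun i => a' i + h' i) P)
      = eval (fun i => a i + h i) (MvPolynomial.map (vring hna).subtype P) := by
    rw [show ((vring hna).subtype (eval (fun i => a' i + h' i) P))
      = ((eval (fun i => a' i + h' i) P : vring hna) : K) from rfl, coe_eval]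
    rfl
  have e2 : (vring hna).subtype (eval a' P)
      = eval a (MvPolynomial.map (vring hna).subtype P) := by
    rw [show ((vring hna).subtype (eval a' P)) = ((eval a' P : vring hna) : K) from rfl,
      coe_eval]
  rw [e1, e2] at key
  rw [key]
  refine norm_sum_le_of_forall hna _ _ hε fun j _ => ?_
  have h2 : ‖((eval (Sum.elim a' h') (r j) : vring hna) : K)‖ ≤ 1 :=
    (eval (Sum.elim a' h') (r j)).2
  calc ‖(vring hna).subtype (h' j) * (vring hna).subtype (eval (Sum.elim a' h') (r j))‖
      = ‖h j‖ * ‖((eval (Sum.elim a' h') (r j) : vring hna) : K)‖ := norm_mul _ _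
    _ ≤ ε * 1 := mul_le_mul (hhε j) h2 (norm_nonneg _) hε
    _ = ε := mul_one ε

/-- second-order estimate -/
lemma est2 (hna : ∀ x y : K, ‖x + y‖ ≤ max ‖x‖ ‖y‖)
    (P : MvPolynomial (Fin n) (vring hna)) (a h : Fin n → K)
    (ha : ∀ i, ‖a i‖ ≤ 1) (hh : ∀ i, ‖h i‖ ≤ 1) {ε : ℝ} (hε : 0 ≤ ε)
    (hhε : ∀ i, ‖h i‖ ≤ ε) :
    ‖eval (fun i => a i + h i) (MvPolynomial.map (vring hna).subtype P)
      - eval a (MvPolynomial.map (vring hna).subtype P)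
      - ∑ j, eval a (pderiv j (MvPolynomial.map (vring hna).subtype P)) * h j‖ ≤ ε * ε := by
  obtain ⟨q, hq⟩ := taylor2 P
  set a' : Fin n → vring hna := fun i => ⟨a i, ha i⟩ with ha'
  set h' : Fin n → vring hna := fun i => ⟨h i, hh i⟩ with hh'
  have key := congrArg ((vring hna).subtype) (hq a' h')
  simp only [map_sub, map_sum, map_mul] at key
  have e1 : (vring hna).subtype (eval (fun i => a' i + h' i) P)
      = eval (fun i => a i + h i) (MvPolynomial.map (vring hna).subtype P) := by
    rw [show ((vring hna).subtype (eval (fun i => a' i + h' i) P))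
      = ((eval (fun i => a' i + h' i) P : vring hna) : K) from rfl, coe_eval]
    rfl
  have e2 : (vring hna).subtype (eval a' P)
      = eval a (MvPolynomial.map (vring hna).subtype P) := by
    rw [show ((vring hna).subtype (eval a' P)) = ((eval a' P : vring hna) : K) from rfl,
      coe_eval]
  have e3 : ∀ j, (vring hna).subtype (eval a' (pderiv j P))
      = eval a (pderiv j (MvPolynomial.map (vring hna).subtype P)) := by
    intro j
    rw [pderiv_map]
    rw [show ((vring hna).subtype (eval a' (pderiv j P)))
      = ((eval a' (pderiv j P) : vring hna) : K) from rfl, coe_eval]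
  have e4 : ∀ j, (vring hna).subtype (h' j) = h j := fun _ => rfl
  simp only [e1, e2, e3, e4] at key
  rw [key]
  refine norm_sum_le_of_forall hna _ _ (mul_nonneg hε hε) fun j _ => ?_
  refine norm_sum_le_of_forall hna _ _ (mul_nonneg hε hε) fun k _ => ?_
  have h2 : ‖((eval (Sum.elim a' h') (q j k) : vring hna) : K)‖ ≤ 1 :=
    (eval (Sum.elim a' h') (q j k)).2
  calc ‖h j * h k * (vring hna).subtype (eval (Sum.elim a' h') (q j k))‖
      = ‖h j‖ * ‖h k‖ * ‖((eval (Sum.elim a' h') (q j k) : vring hna) : K)‖ := by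
        rw [norm_mul, norm_mul]; rfl
    _ ≤ (ε * ε) * 1 :=
        mul_le_mul (mul_le_mul (hhε j) (hhε k) (norm_nonneg _) hε)
          h2 (norm_nonneg _) (mul_nonneg hε hε)
    _ = ε * ε := mul_one _

end Valuation

section MatrixEst
variable {K : Type*} [NormedField K] {n : ℕ}

lemma norm_det_le_one (hna : ∀ x y : K, ‖x + y‖ ≤ max ‖x‖ ‖y‖)
    (M : Matrix (Fin n) (Fin n) K) (hM : ∀ i j, ‖M i j‖ ≤ 1) : ‖M.det‖ ≤ 1 := by
  rw [Matrix.det_apply]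
  refine norm_sum_le_of_forall hna _ _ zero_le_one fun σ _ => ?_
  have hp : ‖∏ i, M (σ i) i‖ ≤ 1 := by
    rw [norm_prod]
    exact Finset.prod_le_one (fun i _ => norm_nonneg _) (fun i _ => hM _ _)
  rcases Int.units_eq_one_or (Equiv.Perm.sign σ) with h | h <;>
    simp only [h, one_smul, Units.neg_smul, norm_neg, hp]

lemma norm_adjugate_le_one (hna : ∀ x y : K, ‖x + y‖ ≤ max ‖x‖ ‖y‖)
    (M : Matrix (Fin n) (Fin n) K) (hM : ∀ i j, ‖M i j‖ ≤ 1) (i j : Fin n) :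
    ‖M.adjugate i j‖ ≤ 1 := by
  rw [Matrix.adjugate_apply]
  refine norm_det_le_one hna _ fun k l => ?_
  rw [Matrix.updateRow_apply]
  split_ifs with hk
  · by_cases hl : l = i
    · subst hl; simp
    · rw [Pi.single_eq_of_ne hl]; simp
  · exact hM k l

lemma norm_inv_entry_le_one (hna : ∀ x y : K, ‖x + y‖ ≤ max ‖x‖ ‖y‖)
    (M : Matrix (Fin n) (Fin n) K) (hM : ∀ i j, ‖M i j‖ ≤ 1) (hdet : ‖M.det‖ = 1)
    (i j : Fin n) : ‖M⁻¹ i j‖ ≤ 1 := by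
  rw [Matrix.inv_def, Matrix.smul_apply, Ring.inverse_eq_inv']
  rw [smul_eq_mul, norm_mul, norm_inv, hdet, inv_one, one_mul]
  exact norm_adjugate_le_one hna M hM i j

lemma norm_mulVec_le (hna : ∀ x y : K, ‖x + y‖ ≤ max ‖x‖ ‖y‖)
    (M : Matrix (Fin n) (Fin n) K) (v : Fin n → K) {c : ℝ} (hc : 0 ≤ c)
    (hM : ∀ i j, ‖M i j‖ ≤ 1) (hv : ∀ j, ‖v j‖ ≤ c) (i : Fin n) :
    ‖M.mulVec v i‖ ≤ c := by
  simp only [Matrix.mulVec, dotProduct]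
  refine norm_sum_le_of_forall hna _ _ hc fun j _ => ?_
  calc ‖M i j * v j‖ = ‖M i j‖ * ‖v j‖ := norm_mul _ _
    _ ≤ 1 * c := mul_le_mul (hM i j) (hv j) (norm_nonneg _) zero_le_one
    _ = c := one_mul c

lemma continuous_eval_poly (p : MvPolynomial (Fin n) K) :
    Continuous fun x : Fin n → K => eval x p := by
  have : (fun x : Fin n → K => eval x p)
      = fun x => ∑ d ∈ p.support, p.coeff d * ∏ i ∈ d.support, x i ^ d i := by
    funext x; rw [eval_eq]
  rw [this]
  refine continuous_finset_sum _ fun d _ => Continuous.mul continuous_const ?_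
  exact continuous_finset_prod _ fun i _ => (continuous_apply i).pow _

end MatrixEst

section Core
variable {K : Type*} [NormedField K] {n : ℕ}

lemma key_est2 (hna : ∀ x y : K, ‖x + y‖ ≤ max ‖x‖ ‖y‖)
    (f : Fin n → MvPolynomial (Fin n) K)
    (hcoeff : ∀ i, ∀ m : Fin n →₀ ℕ, ‖(f i).coeff m‖ ≤ 1)
    (a h : Fin n → K) (ha : ∀ i, ‖a i‖ ≤ 1) (hh : ∀ i, ‖h i‖ ≤ 1)
    {ε : ℝ} (hε : 0 ≤ ε) (hhε : ∀ i, ‖h i‖ ≤ ε) (i : Fin n) :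
    ‖eval (fun j => a j + h j) (f i) - eval a (f i)
      - ∑ j, eval a (pderiv j (f i)) * h j‖ ≤ ε * ε := by
  obtain ⟨P, hP⟩ := exists_lift hna (f i) (hcoeff i)
  rw [← hP]
  exact est2 hna P a h ha hh hε hhε

lemma deriv_entry_le (hna : ∀ x y : K, ‖x + y‖ ≤ max ‖x‖ ‖y‖)
    (f : Fin n → MvPolynomial (Fin n) K)
    (hcoeff : ∀ i, ∀ m : Fin n →₀ ℕ, ‖(f i).coeff m‖ ≤ 1)
    (x : Fin n → K) (hx : ∀ i, ‖x i‖ ≤ 1) (i j : Fin n) :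
    ‖eval x (pderiv j (f i))‖ ≤ 1 := by
  obtain ⟨P, hP⟩ := exists_lift hna (f i) (hcoeff i)
  rw [← hP, pderiv_map]
  exact eval_mem hna _ x hx

lemma unit_ball_inj (hna : ∀ x y : K, ‖x + y‖ ≤ max ‖x‖ ‖y‖)
    (f : Fin n → MvPolynomial (Fin n) K)
    (hcoeff : ∀ i, ∀ m : Fin n →₀ ℕ, ‖(f i).coeff m‖ ≤ 1)
    (hJ : ∀ x : Fin n → K, (∀ i, ‖x i‖ ≤ 1) →
      ‖(Matrix.of fun i j => MvPolynomial.eval x (MvPolynomial.pderiv j (f i))).det‖ = 1)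
    (u w : Fin n → K) (hu : ∀ i, ‖u i‖ ≤ 1) (hw : ∀ i, ‖w i‖ ≤ 1)
    (hclose : ‖w - u‖ < 1) (heq : ∀ i, eval u (f i) = eval w (f i)) : u = w := by
  set A : Matrix (Fin n) (Fin n) K :=
    Matrix.of fun i j => MvPolynomial.eval u (MvPolynomial.pderiv j (f i)) with hA
  have hAentry : ∀ i j, ‖A i j‖ ≤ 1 := fun i j => deriv_entry_le hna f hcoeff u hu i j
  have hAdet : ‖A.det‖ = 1 := hJ u hu
  have hdet_ne : IsUnit A.det := by
    rw [isUnit_iff_ne_zero]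
    intro h0
    rw [h0, norm_zero] at hAdet
    exact zero_ne_one hAdet
  set h : Fin n → K := fun i => w i - u i with hdefh
  set ε : ℝ := ‖w - u‖ with hε
  have hε0 : 0 ≤ ε := norm_nonneg _
  have hhi : ∀ i, ‖h i‖ ≤ ε := fun i => norm_le_pi_norm (w - u) i
  have hh1 : ∀ i, ‖h i‖ ≤ 1 := fun i => le_of_lt (lt_of_le_of_lt (hhi i) hclose)
  have huw : (fun j => u j + h j) = w := by funext j; simp [hdefh]
  have hmv : ∀ i, ‖A.mulVec h i‖ ≤ ε * ε := by
    intro i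
    have := key_est2 hna f hcoeff u h hu hh1 hε0 hhi i
    rw [huw, ← heq i] at this
    simpa [Matrix.mulVec, dotProduct, hA] using this
  have hinv : ∀ i, ‖h i‖ ≤ ε * ε := by
    intro i
    have : h = (A⁻¹).mulVec (A.mulVec h) := by
      rw [Matrix.mulVec_mulVec, Matrix.nonsing_inv_mul A hdet_ne, Matrix.one_mulVec]
    rw [this]
    exact norm_mulVec_le hna _ _ (mul_nonneg hε0 hε0)
      (fun i j => norm_inv_entry_le_one hna A hAentry hAdet i j) hmv i
  have hle : ε ≤ ε * ε := by
    rw [hε, show w - u = h from rfl]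
    exact (pi_norm_le_iff_of_nonneg (mul_nonneg hε0 hε0)).2 hinv
  have hε_eq : ε = 0 := by
    by_contra hne
    have hpos : 0 < ε := lt_of_le_of_ne hε0 (Ne.symm hne)
    nlinarith
  have : w - u = 0 := by
    rw [← norm_eq_zero]; exact hε_eq
  funext i
  have := congrFun this i
  simp only [Pi.sub_apply, Pi.zero_apply, sub_eq_zero] at this
  exact this.symm

lemma newton_key [CompleteSpace K] (hna : ∀ x y : K, ‖x + y‖ ≤ max ‖x‖ ‖y‖)
    (f : Fin n → MvPolynomial (Fin n) K)
    (hcoeff : ∀ i, ∀ m : Fin n →₀ ℕ, ‖(f i).coeff m‖ ≤ 1)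
    (hJ : ∀ x : Fin n → K, (∀ i, ‖x i‖ ≤ 1) →
      ‖(Matrix.of fun i j => MvPolynomial.eval x (MvPolynomial.pderiv j (f i))).det‖ = 1)
    (x0 : Fin n → K) (hx0 : ∀ i, ‖x0 i‖ ≤ 1) (y' : Fin n → K)
    (hcl : ‖(fun i => eval x0 (f i)) - y'‖ < 1) :
    ∃ z : Fin n → K, (∀ i, ‖z i‖ ≤ 1) ∧ (fun i => eval z (f i)) = y' ∧ ‖z - x0‖ < 1 := by
  classical
  set ε : ℝ := ‖(fun i => eval x0 (f i)) - y'‖ with hε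
  have hε0 : 0 ≤ ε := norm_nonneg _
  have hε1 : ε < 1 := hcl
  have hεle1 : ε ≤ 1 := le_of_lt hε1
  set Am : (Fin n → K) → Matrix (Fin n) (Fin n) K :=
    fun x => Matrix.of fun i j => MvPolynomial.eval x (MvPolynomial.pderiv j (f i)) with hAm
  set step : (Fin n → K) → (Fin n → K) :=
    fun x => x + (-((Am x)⁻¹.mulVec (fun i => eval x (f i) - y' i))) with hstep
  set seq : ℕ → (Fin n → K) := fun k => step^[k] x0 with hseq
  have hseq0 : seq 0 = x0 := rfl
  have hseqS : ∀ k, seq (k + 1) = step (seq k) := by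
    intro k; rw [hseq]; exact Function.iterate_succ_apply' step k x0
  -- invariant
  have inv : ∀ k, (∀ i, ‖seq k i‖ ≤ 1) ∧ (∀ i, ‖eval (seq k) (f i) - y' i‖ ≤ ε ^ (k + 1))
      ∧ ‖seq k - x0‖ ≤ ε := by
    intro k
    induction k with
    | zero =>
      refine ⟨hx0, fun i => ?_, by simp [hseq0, hε0]⟩
      rw [pow_one]
      exact norm_le_pi_norm ((fun i => eval x0 (f i)) - y') i
    | succ k ih =>
      obtain ⟨hxk, hvk, hdk⟩ := ih
      set x : Fin n → K := seq k
      have hAentry : ∀ i j, ‖Am x i j‖ ≤ 1 := fun i j => deriv_entry_le hna f hcoeff x hxk i j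
      have hAdet : ‖(Am x).det‖ = 1 := hJ x hxk
      have hdet_ne : IsUnit (Am x).det := by
        rw [isUnit_iff_ne_zero]
        intro h0
        rw [h0, norm_zero] at hAdet
        exact zero_ne_one hAdet
      set h : Fin n → K := -((Am x)⁻¹.mulVec (fun i => eval x (f i) - y' i)) with hdefh
      have hεk1 : ε ^ (k + 1) ≤ 1 := pow_le_one₀ hε0 hεle1
      have hεkε : ε ^ (k + 1) ≤ ε := by
        calc ε ^ (k + 1) ≤ ε ^ 1 := pow_le_pow_of_le_one hε0 hεle1 (by omega)
          _ = ε := pow_one ε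
      have hεk0 : (0:ℝ) ≤ ε ^ (k+1) := pow_nonneg hε0 _
      have hhb : ∀ i, ‖h i‖ ≤ ε ^ (k + 1) := by
        intro i
        rw [hdefh, Pi.neg_apply, norm_neg]
        exact norm_mulVec_le hna _ _ hεk0
          (fun i j => norm_inv_entry_le_one hna (Am x) hAentry hAdet i j) hvk i
      have hh1 : ∀ i, ‖h i‖ ≤ 1 := fun i => le_trans (hhb i) hεk1
      have hhε' : ∀ i, ‖h i‖ ≤ ε := fun i => le_trans (hhb i) hεkε
      have hxk1 : seq (k + 1) = fun j => x j + h j := by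
        rw [hseqS k]; rfl
      refine ⟨?_, ?_, ?_⟩
      · intro i
        rw [hxk1]
        exact le_trans (hna _ _) (max_le (hxk i) (hh1 i))
      · intro i
        have hest := key_est2 hna f hcoeff x h hxk hh1 hεk0 hhb i
        have hcancel : eval x (f i) - y' i + ∑ j, eval x (pderiv j (f i)) * h j = 0 := by
          have : ∑ j, eval x (pderiv j (f i)) * h j = (Am x).mulVec h i := by
            simp [Matrix.mulVec, dotProduct, hAm]
          rw [this, hdefh, Matrix.mulVec_neg, Matrix.mulVec_mulVec,
            Matrix.mul_nonsing_inv (Am x) hdet_ne, Matrix.one_mulVec]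
          simp
        have heq2 : eval (fun j => x j + h j) (f i) - y' i
            = eval (fun j => x j + h j) (f i) - eval x (f i)
              - ∑ j, eval x (pderiv j (f i)) * h j
              + (eval x (f i) - y' i + ∑ j, eval x (pderiv j (f i)) * h j) := by ring
        rw [hxk1, heq2, hcancel, add_zero]
        calc ‖_‖ ≤ ε ^ (k+1) * ε ^ (k+1) := hest
          _ = ε ^ (2 * k + 2) := by ring
          _ ≤ ε ^ (k + 1 + 1) := pow_le_pow_of_le_one hε0 hεle1 (by omega)
      · rw [hxk1]
        have : (fun j => x j + h j) - x0 = fun j => (x - x0) j + h j := by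
          funext j; simp; ring
        rw [this]
        refine (pi_norm_le_iff_of_nonneg hε0).2 fun i => ?_
        refine le_trans (hna _ _) (max_le ?_ (hhε' i))
        exact le_trans (norm_le_pi_norm (x - x0) i) hdk
  -- Cauchy
  have hcauchy : CauchySeq seq := by
    refine cauchySeq_of_le_geometric ε ε hε1 fun k => ?_
    rw [dist_eq_norm]
    obtain ⟨hxk, hvk, hdk⟩ := inv k
    have hxk1 : seq (k+1) = step (seq k) := hseqS k
    have : seq k - seq (k + 1) = (Am (seq k))⁻¹.mulVec (fun i => eval (seq k) (f i) - y' i) := by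
      rw [hxk1, hstep]
      funext i
      simp
    rw [this]
    have hAentry : ∀ i j, ‖Am (seq k) i j‖ ≤ 1 :=
      fun i j => deriv_entry_le hna f hcoeff (seq k) hxk i j
    have hAdet : ‖(Am (seq k)).det‖ = 1 := hJ (seq k) hxk
    have hεk0 : (0:ℝ) ≤ ε ^ (k+1) := pow_nonneg hε0 _
    refine (pi_norm_le_iff_of_nonneg (by positivity)).2 fun i => ?_
    have := norm_mulVec_le hna _ _ hεk0
      (fun i j => norm_inv_entry_le_one hna (Am (seq k)) hAentry hAdet i j) hvk i
    calc ‖_‖ ≤ ε ^ (k+1) := this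
      _ = ε * ε ^ k := by ring
  obtain ⟨z, hz⟩ := cauchySeq_tendsto_of_complete hcauchy
  have hzi : ∀ i, Filter.Tendsto (fun k => seq k i) Filter.atTop (nhds (z i)) := by
    intro i
    exact (continuous_apply i).continuousAt.tendsto.comp hz
  refine ⟨z, ?_, ?_, ?_⟩
  · intro i
    refine le_of_tendsto ((hzi i).norm) ?_
    filter_upwards with k
    exact (inv k).1 i
  · funext i
    have h1 : Filter.Tendsto (fun k => eval (seq k) (f i)) Filter.atTop (nhds (eval z (f i))) :=
      ((continuous_eval_poly (f i)).continuousAt.tendsto).comp hz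
    have h2 : Filter.Tendsto (fun k => eval (seq k) (f i)) Filter.atTop (nhds (y' i)) := by
      rw [tendsto_iff_norm_sub_tendsto_zero]
      have hb : Filter.Tendsto (fun k : ℕ => ε ^ (k+1)) Filter.atTop (nhds 0) := by
        have := tendsto_pow_atTop_nhds_zero_of_lt_one hε0 hε1
        exact this.comp (Filter.tendsto_add_atTop_nat 1)
      refine squeeze_zero (fun k => norm_nonneg _) (fun k => (inv k).2.1 i) hb
    exact tendsto_nhds_unique h1 h2
  · have h3 : Filter.Tendsto (fun k => ‖seq k - x0‖) Filter.atTop (nhds ‖z - x0‖) :=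
      ((hz.sub tendsto_const_nhds).norm)
    have h4 : ‖z - x0‖ ≤ ε := by
      refine le_of_tendsto h3 ?_
      filter_upwards with k
      exact (inv k).2.2
    exact lt_of_le_of_lt h4 hε1

end Core

section PiNA
variable {K : Type*} [NormedField K] {n : ℕ}

lemma pi_na (hna : ∀ x y : K, ‖x + y‖ ≤ max ‖x‖ ‖y‖) (u v : Fin n → K) :
    ‖u + v‖ ≤ max ‖u‖ ‖v‖ := by
  refine (pi_norm_le_iff_of_nonneg (le_max_of_le_left (norm_nonneg u))).2 fun i => ?_
  refine le_trans (hna (u i) (v i)) (max_le_max ?_ ?_) <;> exact norm_le_pi_norm _ i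

end PiNA


/-- the fiberwise sum of a function constant on open unit balls,
under a norm-one étale polynomial map, is again constant on open unit balls
within the image of the unit polydisc. -/
theorem pushforward_locally_constant
    (K : Type*) [NormedField K] [CompleteSpace K]
    (hna : ∀ x y : K, ‖x + y‖ ≤ max ‖x‖ ‖y‖)
    (n : ℕ) (f : Fin n → MvPolynomial (Fin n) K)
    (hcoeff : ∀ i, ∀ m : Fin n →₀ ℕ, ‖(f i).coeff m‖ ≤ 1)
    (hJ : ∀ x : Fin n → K, (∀ i, ‖x i‖ ≤ 1) →
      ‖(Matrix.of fun i j => MvPolynomial.eval x (MvPolynomial.pderiv j (f i))).det‖ = 1)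
    (g : (Fin n → K) → ℝ≥0)
    (hg : ∀ x x' : Fin n → K, ‖x - x'‖ < 1 → g x = g x')
    (hfin : ∀ y : Fin n → K,
      {x : Fin n → K | (∀ i, ‖x i‖ ≤ 1) ∧
        (fun i => MvPolynomial.eval x (f i)) = y}.Finite)
    (y y' : Fin n → K)
    (hy : y ∈ (fun x : Fin n → K => fun i => MvPolynomial.eval x (f i)) ''
      {x | ∀ i, ‖x i‖ ≤ 1})
    (hy' : y' ∈ (fun x : Fin n → K => fun i => MvPolynomial.eval x (f i)) ''
      {x | ∀ i, ‖x i‖ ≤ 1})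
    (hclose : ‖y - y'‖ < 1) :
    (∑ᶠ x ∈ {x : Fin n → K | (∀ i, ‖x i‖ ≤ 1) ∧
        (fun i => MvPolynomial.eval x (f i)) = y}, g x)
      = ∑ᶠ x ∈ {x : Fin n → K | (∀ i, ‖x i‖ ≤ 1) ∧
          (fun i => MvPolynomial.eval x (f i)) = y'}, g x := by
  classical
  set Sy := {x : Fin n → K | (∀ i, ‖x i‖ ≤ 1) ∧ (fun i => MvPolynomial.eval x (f i)) = y}
    with hSy
  set Sy' := {x : Fin n → K | (∀ i, ‖x i‖ ≤ 1) ∧ (fun i => MvPolynomial.eval x (f i)) = y'}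
    with hSy'
  -- existence of close preimages
  have hex : ∀ x ∈ Sy, ∃ z, z ∈ Sy' ∧ ‖z - x‖ < 1 := by
    intro x hx
    obtain ⟨hxb, hxf⟩ := hx
    have hcl : ‖(fun i => eval x (f i)) - y'‖ < 1 := by rw [hxf]; exact hclose
    obtain ⟨z, hz1, hz2, hz3⟩ := newton_key hna f hcoeff hJ x hxb y' hcl
    exact ⟨z, ⟨hz1, hz2⟩, hz3⟩
  have hex' : ∀ z ∈ Sy', ∃ x, x ∈ Sy ∧ ‖x - z‖ < 1 := by
    intro z hz
    obtain ⟨hzb, hzf⟩ := hz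
    have hcl : ‖(fun i => eval z (f i)) - y‖ < 1 := by
      rw [hzf, ← norm_neg]; simpa [neg_sub] using hclose
    obtain ⟨x, hx1, hx2, hx3⟩ := newton_key hna f hcoeff hJ z hzb y hcl
    exact ⟨x, ⟨hx1, hx2⟩, hx3⟩
  -- uniqueness of close points in a fiber
  have huniq : ∀ (w : Fin n → K) (t : Fin n → K) (z z' : Fin n → K),
      (∀ i, ‖z i‖ ≤ 1) → (∀ i, ‖z' i‖ ≤ 1) →
      (fun i => eval z (f i)) = t → (fun i => eval z' (f i)) = t →
      ‖z - w‖ < 1 → ‖z' - w‖ < 1 → z = z' := by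
    intro w t z z' hzb hz'b hzf hz'f h1 h2
    have hd : ‖z' - z‖ < 1 := by
      have : z' - z = (z' - w) + (w - z) := by abel
      rw [this]
      refine lt_of_le_of_lt (pi_na hna _ _) (max_lt h2 ?_)
      rw [← norm_neg]; simpa [neg_sub] using h1
    refine unit_ball_inj hna f hcoeff hJ z z' hzb hz'b hd fun i => ?_
    have := congrFun (hzf.trans hz'f.symm) i
    exact this
  set e : (Fin n → K) → (Fin n → K) :=
    fun x => if hx : x ∈ Sy then (hex x hx).choose else x with he
  have he_spec : ∀ x (hx : x ∈ Sy), e x ∈ Sy' ∧ ‖e x - x‖ < 1 := by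
    intro x hx
    rw [he]
    simp only [dif_pos hx]
    exact (hex x hx).choose_spec
  have hbij : Set.BijOn e Sy Sy' := by
    refine ⟨fun x hx => (he_spec x hx).1, ?_, ?_⟩
    · intro x1 hx1 x2 hx2 heq
      obtain ⟨hz1, hc1⟩ := he_spec x1 hx1
      obtain ⟨hz2, hc2⟩ := he_spec x2 hx2
      rw [heq] at hc1
      exact huniq (e x2) y x1 x2 hx1.1 hx2.1 hx1.2 hx2.2
        (by rw [← norm_neg]; simpa [neg_sub] using hc1)
        (by rw [← norm_neg]; simpa [neg_sub] using hc2)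
    · intro z hz
      obtain ⟨x, hx, hxz⟩ := hex' z hz
      refine ⟨x, hx, ?_⟩
      obtain ⟨hz1, hc1⟩ := he_spec x hx
      exact huniq x y' (e x) z hz1.1 hz.1 hz1.2 hz.2 hc1
        (by rw [← norm_neg]; simpa [neg_sub] using hxz)
  refine finsum_mem_eq_of_bijOn e hbij fun x hx => ?_
  exact hg x (e x) (by rw [← norm_neg]; simpa [neg_sub] using (he_spec x hx).2)
end
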